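/- arXiv:1209.2088 — 7 statements merged into one kernel-verified Lean document; each statement's English description precedes it below -/
import Mathlib

section
/- Suppose p = p(n) = (log n)/n + ξ(n) where ξ(n) = o((log n)/n). Then |R| = o(n) asymptotically almost surely; that is, for every ε > 0, the probability that |R| ≤ ε·n tends to 1 as n → ∞. -/
open MeasureTheory Filter

/-- The Bernoulli measure on `Bool` with success probability `p` (clamped to `[0,1]`). -/
noncomputable def bernMeasure (p : ℝ) : Measure Bool :=
  (min (ENNReal.ofReal p) 1) • Measure.dirac true +
    (1 - min (ENNReal.ofReal p) 1) • Measure.dirac false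

instance (p : ℝ) : IsProbabilityMeasure (bernMeasure p) := by
  constructor
  simp [bernMeasure]

/-- The ordered directed random graph on `n` vertices `v_1, …, v_n` (0-indexed as `0, …, n-1`):
each entry `ω a b` (for `a < b`, the only relevant ones) is an independent Bernoulli(p)
indicator of the presence of the directed edge from vertex `a` to vertex `b`. -/
noncomputable def graphMeasure (n : ℕ) (p : ℝ) : Measure (Fin n → Fin n → Bool) :=
  Measure.pi fun _ => Measure.pi fun _ => bernMeasure p

/-- The directed edge relation of the graph `ω` : an edge from `a` to `b` (vertices named
`0, …, n-1`, with vertex `k` standing for `v_{k+1}`) exists iff `a < b` and the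
corresponding coordinate is `true`. -/
def EdgeRel (n : ℕ) (ω : Fin n → Fin n → Bool) (a b : ℕ) : Prop :=
  ∃ (ha : a < n) (hb : b < n), a < b ∧ ω ⟨a, ha⟩ ⟨b, hb⟩ = true

/-- Vertex `j` (i.e. `v_{j+1}`) is reachable from vertex `0` (i.e. `v_1`) by a directed path. -/
def Reachable (n : ℕ) (ω : Fin n → Fin n → Bool) (j : ℕ) : Prop :=
  Relation.ReflTransGen (EdgeRel n ω) 0 j

-- `RSet n ω` is `R`, the set of vertices reachable from `v_1` (including `v_1`).
open Classical in
noncomputable def RSet (n : ℕ) (ω : Fin n → Fin n → Bool) : Finset ℕ :=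
  (Finset.range n).filter fun j => Reachable n ω j

instance (n : ℕ) (p : ℝ) : IsProbabilityMeasure (graphMeasure n p) := by
  unfold graphMeasure; infer_instance

namespace Aux
noncomputable def wt (r : ℝ) (b : Bool) : ENNReal := bernMeasure r {b}

noncomputable def weight (n : ℕ) (r : ℝ) (ω : Fin n → Fin n → Bool) : ENNReal :=
  ∏ pr : Fin n × Fin n, wt r (ω pr.1 pr.2)

lemma measure_singleton (n : ℕ) (r : ℝ) (ω : Fin n → Fin n → Bool) :
    graphMeasure n r {ω} = weight n r ω := by
  have h1 : ({ω} : Set (Fin n → Fin n → Bool)) = Set.pi Set.univ (fun a => {ω a}) := by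
    ext f; simp [Set.mem_pi, funext_iff]
  have h2 : ∀ a : Fin n, ({ω a} : Set (Fin n → Bool)) = Set.pi Set.univ (fun b => {ω a b}) := by
    intro a; ext g; simp [Set.mem_pi, funext_iff]
  rw [graphMeasure, h1, Measure.pi_pi]
  simp_rw [h2, Measure.pi_pi]
  rw [weight, ← Finset.univ_product_univ, Finset.prod_product]
  rfl

lemma measure_eq_sum (n : ℕ) (r : ℝ) (s : Set (Fin n → Fin n → Bool)) :
    graphMeasure n r s = ∑ ω ∈ s.toFinite.toFinset, weight n r ω := by
  have hs : s = ⋃ ω ∈ s.toFinite.toFinset, {ω} := by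
    simp [Set.biUnion_of_singleton]
  rw [hs, measure_biUnion_finset]
  · simp_rw [measure_singleton]
    exact Finset.sum_congr (Set.Finite.toFinset_inj.mpr hs) fun _ _ => rfl
  · intro x _ y _ hxy
    simp [Function.onFun, Set.disjoint_singleton, hxy]
  · intro ω _; exact (Set.finite_singleton ω).measurableSet

end Aux

namespace Aux2
open Aux

variable {n : ℕ} {r : ℝ}

noncomputable def q (r : ℝ) : ENNReal := min (ENNReal.ofReal r) 1

lemma wt_true (r : ℝ) : wt r true = q r := by simp [wt, bernMeasure, q]
lemma wt_false (r : ℝ) : wt r false = 1 - q r := by simp [wt, bernMeasure, q]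
lemma wt_add (r : ℝ) : wt r true + wt r false = 1 := by
  rw [wt_true, wt_false]
  exact add_tsub_cancel_of_le (min_le_right _ _)

def upd (c : Fin n × Fin n) (ω : Fin n → Fin n → Bool) (v : Bool) : Fin n → Fin n → Bool :=
  fun a b => if a = c.1 ∧ b = c.2 then v else ω a b

lemma upd_apply_self (c : Fin n × Fin n) (ω : Fin n → Fin n → Bool) (v : Bool) :
    upd c ω v c.1 c.2 = v := by simp [upd]

lemma upd_apply_ne (c pr : Fin n × Fin n) (ω : Fin n → Fin n → Bool) (v : Bool)
    (h : pr ≠ c) : upd c ω v pr.1 pr.2 = ω pr.1 pr.2 := by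
  have : ¬ (pr.1 = c.1 ∧ pr.2 = c.2) := by
    rintro ⟨h1, h2⟩; exact h (Prod.ext h1 h2)
  simp [upd, this]

lemma upd_upd (c : Fin n × Fin n) (ω : Fin n → Fin n → Bool) (v v' : Bool) :
    upd c (upd c ω v) v' = upd c ω v' := by
  funext a b; by_cases h : a = c.1 ∧ b = c.2 <;> simp [upd, h]

lemma upd_eq_self (c : Fin n × Fin n) (ω : Fin n → Fin n → Bool) :
    upd c ω (ω c.1 c.2) = ω := by
  funext a b
  by_cases h : a = c.1 ∧ b = c.2
  · obtain ⟨h1, h2⟩ := h; subst h1; subst h2; simp [upd]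
  · simp [upd, h]

lemma weight_upd (c : Fin n × Fin n) (ω : Fin n → Fin n → Bool) (v : Bool) :
    weight n r (upd c ω v) = wt r v * ∏ pr ∈ Finset.univ.erase c, wt r (ω pr.1 pr.2) := by
  rw [weight, ← Finset.mul_prod_erase Finset.univ _ (Finset.mem_univ c), upd_apply_self]
  congr 1
  exact Finset.prod_congr rfl fun pr hpr =>
    congrArg (wt r) (upd_apply_ne c pr ω v (Finset.mem_erase.mp hpr).1)

lemma weight_eq (c : Fin n × Fin n) (ω : Fin n → Fin n → Bool) :
    weight n r ω = wt r (ω c.1 c.2) * ∏ pr ∈ Finset.univ.erase c, wt r (ω pr.1 pr.2) := by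
  conv_lhs => rw [← upd_eq_self c ω]
  rw [weight_upd]

/-- Key independence: if `A` is invariant under changing coordinate `c`, then
the measure of `A ∩ {coordinate c is true}` is `q r * μ A`. -/
lemma indep_coord (c : Fin n × Fin n) (A : Set (Fin n → Fin n → Bool))
    (hA : ∀ ω v, ω ∈ A → upd c ω v ∈ A) :
    graphMeasure n r (A ∩ {ω | ω c.1 c.2 = true}) = q r * graphMeasure n r A := by
  classical
  set Ct := (A ∩ {ω | ω c.1 c.2 = true})
  set Cf := (A ∩ {ω | ω c.1 c.2 = false})
  have hsplit : A = Ct ∪ Cf := by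
    ext ω; cases h : ω c.1 c.2 <;> simp [Ct, Cf, h]
  have hdisj : Disjoint Ct Cf := by
    rw [Set.disjoint_left]; rintro ω ⟨_, h1⟩ ⟨_, h2⟩
    simp only [Set.mem_setOf_eq] at h1 h2; rw [h1] at h2; exact Bool.noConfusion h2
  have hmeas : graphMeasure n r A = graphMeasure n r Ct + graphMeasure n r Cf := by
    rw [hsplit]; exact measure_union hdisj (Cf.toFinite.measurableSet)
  -- sum over Cf equals sum over Ct with flipped coordinate
  have hCf : graphMeasure n r Cf
      = ∑ ω ∈ Ct.toFinite.toFinset, wt r false * ∏ pr ∈ Finset.univ.erase c, wt r (ω pr.1 pr.2) := by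
    rw [measure_eq_sum]
    refine Finset.sum_nbij' (fun ω => upd c ω true) (fun ω => upd c ω false) ?_ ?_ ?_ ?_ ?_
    · intro ω hω
      rw [Set.Finite.mem_toFinset] at *
      exact ⟨hA ω true hω.1, by simpa using upd_apply_self c ω true⟩
    · intro ω hω
      rw [Set.Finite.mem_toFinset] at *
      exact ⟨hA ω false hω.1, by simpa using upd_apply_self c ω false⟩
    · intro ω hω
      rw [Set.Finite.mem_toFinset] at hω
      have h2 : ω c.1 c.2 = false := hω.2
      show upd c (upd c ω true) false = ω
      rw [upd_upd, ← h2, upd_eq_self]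
    · intro ω hω
      rw [Set.Finite.mem_toFinset] at hω
      have h2 : ω c.1 c.2 = true := hω.2
      show upd c (upd c ω false) true = ω
      rw [upd_upd, ← h2, upd_eq_self]
    · intro ω hω
      rw [Set.Finite.mem_toFinset] at hω
      have h2 : ω c.1 c.2 = false := hω.2
      show weight n r ω = wt r false * ∏ pr ∈ Finset.univ.erase c, wt r (upd c ω true pr.1 pr.2)
      rw [weight_eq c ω, h2]
      congr 1
      exact (Finset.prod_congr rfl fun pr hpr => by
        rw [upd_apply_ne c pr ω _ (Finset.mem_erase.mp hpr).1]).symm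
  have hCt : graphMeasure n r Ct
      = ∑ ω ∈ Ct.toFinite.toFinset, wt r true * ∏ pr ∈ Finset.univ.erase c, wt r (ω pr.1 pr.2) := by
    rw [measure_eq_sum]
    refine Finset.sum_congr rfl fun ω hω => ?_
    rw [Set.Finite.mem_toFinset] at hω
    have : ω c.1 c.2 = true := hω.2
    rw [weight_eq c ω, this]
  rw [hmeas, hCt, hCf, ← Finset.sum_add_distrib]
  simp_rw [← add_mul, wt_add, one_mul, wt_true]
  rw [Finset.mul_sum]

def Aset (n : ℕ) (j : ℕ) : Set (Fin n → Fin n → Bool) := {ω | Reachable n ω j}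

/-- Reachability of `i` only depends on coordinates with second component `≤ i`. -/
lemma reachable_upd (c : Fin n × Fin n) (ω : Fin n → Fin n → Bool) (v : Bool)
    {i : ℕ} (hi : i < (c.2 : ℕ)) (h : Reachable n ω i) : Reachable n (upd c ω v) i := by
  induction h with
  | refl => exact Relation.ReflTransGen.refl
  | @tail b j hb hedge ih =>
    obtain ⟨hbn, hjn, hlt, hval⟩ := hedge
    have hb2 : b < (c.2 : ℕ) := lt_trans hlt hi
    refine Relation.ReflTransGen.tail (ih hb2) ⟨hbn, hjn, hlt, ?_⟩
    have hne : ((⟨b, hbn⟩ : Fin n), (⟨j, hjn⟩ : Fin n)) ≠ c := by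
      intro hc
      have : (c.2 : ℕ) = j := by rw [← hc]
      omega
    have := upd_apply_ne c (⟨⟨b, hbn⟩, ⟨j, hjn⟩⟩) ω v hne
    simp only at this
    rw [this, hval]

lemma Aset_upd {i : ℕ} (c : Fin n × Fin n) (hi : i < (c.2 : ℕ)) :
    ∀ ω v, ω ∈ Aset n i → upd c ω v ∈ Aset n i :=
  fun ω v h => reachable_upd c ω v hi h

lemma measure_Aset_zero_le : graphMeasure n r (Aset n 0) ≤ 1 := prob_le_one

lemma measure_Aset_recur {j : ℕ} (hj : 1 ≤ j) (hjn : j < n) :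
    graphMeasure n r (Aset n j) ≤ q r * ∑ i ∈ Finset.range j, graphMeasure n r (Aset n i) := by
  classical
  have hsub : Aset n j ⊆ ⋃ i ∈ Finset.range j, (Aset n i ∩ {ω | EdgeRel n ω i j}) := by
    intro ω hω
    rcases Relation.ReflTransGen.cases_tail hω with h0 | ⟨i, hri, hedge⟩
    · omega
    · have hij : i < j := hedge.2.2.1
      exact Set.mem_biUnion (Finset.mem_range.mpr hij) ⟨hri, hedge⟩
  calc graphMeasure n r (Aset n j)
      ≤ ∑ i ∈ Finset.range j, graphMeasure n r (Aset n i ∩ {ω | EdgeRel n ω i j}) :=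
        le_trans (measure_mono hsub) (measure_biUnion_finset_le _ _)
    _ = ∑ i ∈ Finset.range j, q r * graphMeasure n r (Aset n i) := by
        refine Finset.sum_congr rfl fun i hi => ?_
        have hij : i < j := Finset.mem_range.mp hi
        have hin : i < n := lt_trans hij hjn
        set c : Fin n × Fin n := (⟨i, hin⟩, ⟨j, hjn⟩) with hc
        have hset : {ω : Fin n → Fin n → Bool | EdgeRel n ω i j} = {ω | ω c.1 c.2 = true} := by
          ext ω
          simp only [Set.mem_setOf_eq, EdgeRel, hc]
          constructor
          · rintro ⟨ha, hb, _, hval⟩; exact hval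
          · intro hval; exact ⟨hin, hjn, hij, hval⟩
        rw [hset, indep_coord c _ (Aset_upd c (by simp [hc, hij]))]
    _ = q r * ∑ i ∈ Finset.range j, graphMeasure n r (Aset n i) := by
        rw [Finset.mul_sum]

noncomputable def S (n : ℕ) (r : ℝ) (m : ℕ) : ENNReal :=
  ∑ i ∈ Finset.range m, graphMeasure n r (Aset n i)

lemma S_le_pow {m : ℕ} (hm : 1 ≤ m) (hmn : m ≤ n) : S n r m ≤ (1 + q r) ^ (m - 1) := by
  induction m with
  | zero => omega
  | succ k ih =>
    rcases Nat.eq_or_lt_of_le hm with h1 | h1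
    · have : k = 0 := by omega
      subst this
      simpa [S] using (measure_Aset_zero_le (n := n) (r := r))
    · have hk1 : 1 ≤ k := by omega
      have hkn : k ≤ n := by omega
      have ihk := ih hk1 hkn
      have hrec := measure_Aset_recur (n := n) (r := r) hk1 (by omega)
      have : S n r (k+1) = S n r k + graphMeasure n r (Aset n k) := by
        simp [S, Finset.sum_range_succ]
      rw [this]
      calc S n r k + graphMeasure n r (Aset n k) ≤ S n r k + q r * S n r k := by
            exact add_le_add_right hrec _
        _ = (1 + q r) * S n r k := by ring
        _ ≤ (1 + q r) * (1 + q r) ^ (k - 1) := by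
            exact mul_le_mul_right ihk _
        _ = (1 + q r) ^ (k + 1 - 1) := by
            rw [← pow_succ']
            congr 1
            omega

lemma S_tail {m n' : ℕ} (hm : m ≤ n') : S n r n' ≤ S n r m + (n' - m : ℕ) := by
  rw [S, ← Finset.sum_range_add_sum_Ico _ hm]
  refine add_le_add_right ?_ _
  calc ∑ i ∈ Finset.Ico m n', graphMeasure n r (Aset n i)
      ≤ ∑ _i ∈ Finset.Ico m n', 1 := Finset.sum_le_sum fun i _ => prob_le_one
    _ = (n' - m : ℕ) := by simp [Nat.card_Ico]

lemma lintegral_card (n : ℕ) (r : ℝ) :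
    ∫⁻ ω, ((RSet n ω).card : ENNReal) ∂(graphMeasure n r) = S n r n := by
  classical
  have hcard : ∀ ω, ((RSet n ω).card : ENNReal)
      = ∑ j ∈ Finset.range n, (Aset n j).indicator (fun _ => (1:ENNReal)) ω := by
    intro ω
    rw [RSet, Finset.card_filter]
    push_cast
    refine Finset.sum_congr rfl fun j _ => ?_
    by_cases h : Reachable n ω j <;> simp [h, Set.indicator_apply, Aset]
  simp_rw [hcard]
  rw [lintegral_finset_sum _ (fun j _ => Measurable.indicator measurable_const
    (Set.toFinite _).measurableSet)]
  exact Finset.sum_congr rfl fun j _ =>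
    lintegral_indicator_one (Set.toFinite _).measurableSet

lemma markov (n : ℕ) (r : ℝ) (t : ℝ) :
    ENNReal.ofReal t * graphMeasure n r {ω | ¬ ((RSet n ω).card : ℝ) ≤ t} ≤ S n r n := by
  rw [← lintegral_card n r]
  refine le_trans ?_ (mul_meas_ge_le_lintegral₀
    (f := fun ω => ((RSet n ω).card : ENNReal))
    (Measurable.aemeasurable fun s _ => (Set.toFinite _).measurableSet) (ENNReal.ofReal t))
  refine mul_le_mul_right (measure_mono ?_) _
  intro ω hω
  simp only [Set.mem_setOf_eq, not_le] at hω ⊢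
  calc ENNReal.ofReal t ≤ ENNReal.ofReal ((RSet n ω).card : ℝ) :=
        ENNReal.ofReal_le_ofReal hω.le
    _ = ((RSet n ω).card : ENNReal) := ENNReal.ofReal_natCast _

lemma key_bound (n m : ℕ) (r t : ℝ) (hm : 1 ≤ m) (hmn : m ≤ n) (hr : 0 ≤ r) :
    ENNReal.ofReal t * graphMeasure n r {ω | ¬ ((RSet n ω).card : ℝ) ≤ t}
      ≤ ENNReal.ofReal ((1 + r) ^ (m - 1) + ((n - m : ℕ) : ℝ)) := by
  refine le_trans (markov n r t) ?_
  calc S n r n ≤ S n r m + (n - m : ℕ) := S_tail hmn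
    _ ≤ (1 + q r) ^ (m - 1) + (n - m : ℕ) := add_le_add_left (S_le_pow hm hmn) _
    _ ≤ ENNReal.ofReal ((1 + r) ^ (m - 1)) + ENNReal.ofReal ((n - m : ℕ) : ℝ) := by
        refine add_le_add ?_ (le_of_eq (ENNReal.ofReal_natCast _).symm)
        rw [ENNReal.ofReal_pow (by linarith)]
        refine pow_le_pow_left' ?_ _
        rw [ENNReal.ofReal_add zero_le_one hr, ENNReal.ofReal_one]
        exact add_le_add_right (min_le_left _ _) _
    _ = ENNReal.ofReal ((1 + r) ^ (m - 1) + ((n - m : ℕ) : ℝ)) :=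
        (ENNReal.ofReal_add (by positivity) (Nat.cast_nonneg _)).symm

end Aux2

open Asymptotics


set_option maxHeartbeats 1000000 in
lemma analytic (p ξ : ℕ → ℝ)
    (hξ : ξ =o[atTop] fun n : ℕ => Real.log n / n)
    (hp : ∀ n : ℕ, p n = Real.log n / n + ξ n)
    (ε η : ℝ) (hε : 0 < ε) (hη : 0 < η) :
    ∀ᶠ n : ℕ in atTop, ∃ m : ℕ, 1 ≤ m ∧ m ≤ n ∧ 0 ≤ p n ∧
      (1 + p n) ^ (m - 1) + ((n - m : ℕ) : ℝ) ≤ η * (ε * n) := by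
  set δ : ℝ := min (η * ε / 2) (1/2) with hδdef
  have hδ0 : 0 < δ := lt_min (by positivity) (by norm_num)
  have hδhalf : δ ≤ 1/2 := min_le_right _ _
  have hδηε : δ ≤ η * ε / 2 := min_le_left _ _
  have hlog : Tendsto (fun n : ℕ => Real.log n / n) atTop (nhds 0) :=
    (Real.isLittleO_log_id_atTop.tendsto_div_nhds_zero).comp tendsto_natCast_atTop_atTop
  have hsmall : ∀ᶠ n : ℕ in atTop, ‖ξ n‖ ≤ (δ/2) * ‖Real.log n / n‖ :=
    isLittleO_iff.mp hξ (by positivity)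
  have hhalf : ∀ᶠ n : ℕ in atTop, ‖ξ n‖ ≤ (1/2) * ‖Real.log n / n‖ :=
    isLittleO_iff.mp hξ (by norm_num)
  have hrpow : Tendsto (fun n : ℕ => (n:ℝ) ^ (-(δ/2))) atTop (nhds 0) :=
    (tendsto_rpow_neg_atTop (by positivity)).comp tendsto_natCast_atTop_atTop
  have hrpow' : ∀ᶠ n : ℕ in atTop, (n:ℝ) ^ (-(δ/2)) ≤ η * ε / 4 :=
    hrpow.eventually (eventually_le_nhds (show (0:ℝ) < η*ε/4 by positivity))
  have hone : ∀ᶠ n : ℕ in atTop, (1:ℝ) ≤ (η * ε / 4) * n := by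
    have : Tendsto (fun n : ℕ => (η * ε / 4) * n) atTop atTop :=
      Tendsto.const_mul_atTop (by positivity) tendsto_natCast_atTop_atTop
    exact this.eventually_ge_atTop 1
  have hn4 : ∀ᶠ n : ℕ in atTop, (4:ℕ) ≤ n := eventually_ge_atTop 4
  filter_upwards [hsmall, hhalf, hrpow', hone, hn4] with n hsm hhf hrp h1n hn4
  have hn1 : (1:ℕ) ≤ n := by omega
  have hnpos : (0:ℝ) < n := by positivity
  have hlogn : (0:ℝ) ≤ Real.log n := Real.log_natCast_nonneg n
  have hLpos : 0 ≤ Real.log n / n := by positivity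
  rw [Real.norm_eq_abs, Real.norm_eq_abs, abs_of_nonneg hLpos] at hsm hhf
  -- p is nonnegative
  have hp0 : 0 ≤ p n := by
    rw [hp n]
    have h1 : -(ξ n) ≤ |ξ n| := neg_le_abs _
    linarith
  -- choose k and m
  set k : ℕ := ⌈δ * n⌉₊ with hkdef
  have hkge : δ * n ≤ k := Nat.le_ceil _
  have hkle : (k:ℝ) ≤ δ * n + 1 := (Nat.ceil_lt_add_one (by positivity)).le
  have hn4' : (4:ℝ) ≤ n := by exact_mod_cast hn4
  have hkn : (k:ℝ) ≤ (n:ℝ) - 1 := by nlinarith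
  have hkn' : k + 1 ≤ n := by
    have : (k:ℝ) + 1 ≤ (n:ℝ) := by linarith
    exact_mod_cast this
  refine ⟨n - k, by omega, by omega, hp0, ?_⟩
  set m : ℕ := n - k with hmdef
  have hkltn : k ≤ n := by omega
  have hmcast : (m:ℝ) = (n:ℝ) - k := by
    rw [hmdef, Nat.cast_sub hkltn]
  have hnm : ((n - m : ℕ) : ℝ) = (k : ℝ) := by
    have h : n - m = k := by omega
    rw [h]
  -- bound on m - 1
  have hm1 : ((m - 1 : ℕ) : ℝ) ≤ (1 - δ) * n := by
    have h1 : ((m - 1 : ℕ) : ℝ) ≤ (m : ℝ) := by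
      exact_mod_cast Nat.cast_le.mpr (Nat.sub_le m 1)
    have h2 : (m:ℝ) ≤ (1 - δ) * n := by rw [hmcast]; nlinarith
    linarith
  -- |n ξ n| bound
  have hξabs : |(n:ℝ) * ξ n| ≤ (δ/2) * Real.log n := by
    rw [abs_mul, abs_of_nonneg hnpos.le]
    calc (n:ℝ) * |ξ n| ≤ (n:ℝ) * ((δ/2) * (Real.log n / n)) := by nlinarith
      _ = (δ/2) * Real.log n := by field_simp
  -- power bound
  have hpow : (1 + p n) ^ (m - 1) ≤ Real.exp ((1 - δ/2) * Real.log n) := by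
    calc (1 + p n) ^ (m - 1) ≤ Real.exp (p n) ^ (m - 1) := by
          refine pow_le_pow_left₀ (by linarith) ?_ _
          linarith [Real.add_one_le_exp (p n)]
      _ = Real.exp (p n * ((m - 1 : ℕ) : ℝ)) := by
          rw [← Real.exp_nat_mul]; ring_nf
      _ ≤ Real.exp ((1 - δ/2) * Real.log n) := by
          refine Real.exp_le_exp.mpr ?_
          have hb : p n * ((m-1:ℕ):ℝ) ≤ p n * ((1 - δ) * n) :=
            mul_le_mul_of_nonneg_left hm1 hp0
          have hpn : p n * n = Real.log n + n * ξ n := by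
            rw [hp n]; field_simp
          have habs := abs_le.mp hξabs
          nlinarith [habs.1, habs.2, hlogn, hδ0, hδhalf]
  have hexp : Real.exp ((1 - δ/2) * Real.log n) ≤ (η * ε / 4) * n := by
    have h1 : Real.exp ((1 - δ/2) * Real.log n) = (n:ℝ) ^ ((1:ℝ) - δ/2) := by
      rw [Real.rpow_def_of_pos hnpos]; ring_nf
    have h2 : (n:ℝ) ^ ((1:ℝ) - δ/2) = (n:ℝ) * (n:ℝ) ^ (-(δ/2)) := by
      have he : (1:ℝ) - δ/2 = 1 + (-(δ/2)) := by ring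
      rw [he, Real.rpow_add hnpos, Real.rpow_one]
    rw [h1, h2]
    calc (n:ℝ) * (n:ℝ) ^ (-(δ/2)) ≤ (n:ℝ) * (η * ε / 4) :=
          mul_le_mul_of_nonneg_left hrp hnpos.le
      _ = (η * ε / 4) * n := by ring
  have hktotal : ((n - m : ℕ) : ℝ) ≤ (η * ε / 2) * n + 1 := by
    rw [hnm]
    nlinarith
  calc (1 + p n) ^ (m - 1) + ((n - m : ℕ) : ℝ)
      ≤ (η * ε / 4) * n + ((η * ε / 2) * n + 1) := by
        have := le_trans hpow hexp; linarith
    _ ≤ (η * ε / 4) * n + ((η * ε / 2) * n + (η * ε / 4) * n) := by linarith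
    _ = η * (ε * n) := by ring

open Aux Aux2 Asymptotics in
/-- If `p n = (log n)/n + ξ n` with `ξ = o((log n)/n)`, then `|R| = o(n)`
a.a.s.: for every `ε > 0`, the probability that `|R| ≤ ε·n` tends to `1` as `n → ∞`. -/
theorem reachable_card_aas_of_eq_one (p ξ : ℕ → ℝ)
    (hξ : ξ =o[atTop] fun n : ℕ => Real.log n / n)
    (hp : ∀ n : ℕ, p n = Real.log n / n + ξ n)
    (ε : ℝ) (hε : 0 < ε) :
    Tendsto (fun n : ℕ => graphMeasure n (p n)
        {ω | ((RSet n ω).card : ℝ) ≤ ε * n})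
      atTop (nhds 1) := by
  have hbad : Tendsto (fun n : ℕ => graphMeasure n (p n)
      {ω | ¬ ((RSet n ω).card : ℝ) ≤ ε * n}) atTop (nhds 0) := by
    rw [ENNReal.tendsto_atTop_zero]
    intro e he
    have hmin_ne : min 1 e ≠ ⊤ := ne_top_of_le_ne_top ENNReal.one_ne_top (min_le_left _ _)
    have hmin_pos : 0 < min 1 e := lt_min zero_lt_one he
    set η : ℝ := (min 1 e).toReal with hηdef
    have hηpos : 0 < η := ENNReal.toReal_pos hmin_pos.ne' hmin_ne
    have hofη : ENNReal.ofReal η = min 1 e := ENNReal.ofReal_toReal hmin_ne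
    obtain ⟨N, hN⟩ := eventually_atTop.mp
      ((analytic p ξ hξ hp ε η hε hηpos).and (eventually_ge_atTop 1))
    refine ⟨N, fun n hn => ?_⟩
    obtain ⟨⟨m, hm1, hmn, hp0, hineq⟩, hn1⟩ := hN n hn
    have hnpos : (0:ℝ) < n := by exact_mod_cast Nat.pos_of_ne_zero (by omega)
    have hεn : 0 < ε * n := by positivity
    have hkey := key_bound n m (p n) (ε * n) hm1 hmn hp0
    have hstep : ENNReal.ofReal (ε * n) * graphMeasure n (p n)
        {ω | ¬ ((RSet n ω).card : ℝ) ≤ ε * n}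
        ≤ ENNReal.ofReal (ε * n) * ENNReal.ofReal η := by
      refine le_trans hkey ?_
      calc ENNReal.ofReal ((1 + p n) ^ (m - 1) + ((n - m : ℕ) : ℝ))
          ≤ ENNReal.ofReal (η * (ε * n)) := ENNReal.ofReal_le_ofReal hineq
        _ = ENNReal.ofReal (ε * n) * ENNReal.ofReal η := by
            rw [mul_comm (ENNReal.ofReal (ε * ↑n)), ← ENNReal.ofReal_mul hηpos.le]
    have := (ENNReal.mul_le_mul_iff_right (a := ENNReal.ofReal (ε * n))
      (by simp [ENNReal.ofReal_eq_zero, not_le, hεn]) ENNReal.ofReal_ne_top).mp hstep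
    exact le_trans (hofη ▸ this) (min_le_right _ _)
  have hgood : ∀ n : ℕ, {ω : Fin n → Fin n → Bool | ((RSet n ω).card : ℝ) ≤ ε * n}
      = {ω | ¬ ((RSet n ω).card : ℝ) ≤ ε * n}ᶜ := by
    intro n; ext ω; simp
  have hcompl : ∀ n : ℕ, graphMeasure n (p n)
      {ω | ¬ ((RSet n ω).card : ℝ) ≤ ε * n}ᶜ
      = 1 - graphMeasure n (p n) {ω | ¬ ((RSet n ω).card : ℝ) ≤ ε * n} :=
    fun n => prob_compl_eq_one_sub (Set.toFinite _).measurableSet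
  simp_rw [hgood, hcompl]
  have := ENNReal.Tendsto.sub (tendsto_const_nhds (x := (1:ENNReal)) (f := atTop))
    hbad (Or.inl ENNReal.one_ne_top)
  simpa using this
end

section
/- For every n, every p ∈ [0,1], and every index i with 2 ≤ i ≤ n, the probability that v_i is reachable from v_1 in the ordered directed random graph is at most p·(1+p)^{i-2}, and hence at most p·e^{p·i}. -/
open MeasureTheory Filter

lemma bern_true {p : ℝ} (hp1 : p ≤ 1) : bernMeasure p {true} = ENNReal.ofReal p := by
  have h : min (ENNReal.ofReal p) 1 = ENNReal.ofReal p :=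
    min_eq_left (ENNReal.ofReal_le_one.2 hp1)
  simp [bernMeasure, h]

/-- Measure of the event that a finite set of (distinct) coordinates are all `true`. -/
lemma edgeEvent_measure {n : ℕ} {p : ℝ} (hp0 : 0 ≤ p) (hp1 : p ≤ 1)
    (E : Finset (Fin n × Fin n)) :
    graphMeasure n p {ω | ∀ e ∈ E, ω e.1 e.2 = true}
      = (ENNReal.ofReal p) ^ E.card := by
  classical
  have hset : {ω : Fin n → Fin n → Bool | ∀ e ∈ E, ω e.1 e.2 = true}
      = Set.pi Set.univ (fun a => Set.pi Set.univ
          (fun b => if (a, b) ∈ E then ({true} : Set Bool) else Set.univ)) := by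
    ext ω
    simp only [Set.mem_setOf_eq, Set.mem_pi, Set.mem_univ, forall_true_left]
    constructor
    · intro h a b
      split_ifs with hab
      · exact h (a, b) hab
      · trivial
    · intro h e he
      have := h e.1 e.2
      rw [if_pos (by simpa using he)] at this
      simpa using this
  rw [graphMeasure, hset, Measure.pi_pi]
  have inner : ∀ a : Fin n,
      (Measure.pi fun _ : Fin n => bernMeasure p)
        (Set.pi Set.univ (fun b => if (a, b) ∈ E then ({true} : Set Bool) else Set.univ))
      = ∏ b : Fin n, (if (a, b) ∈ E then ENNReal.ofReal p else 1) := by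
    intro a
    rw [Measure.pi_pi]
    refine Finset.prod_congr rfl fun b _ => ?_
    split_ifs with h
    · exact bern_true hp1
    · exact measure_univ
  calc (∏ a : Fin n, (Measure.pi fun _ : Fin n => bernMeasure p)
        (Set.pi Set.univ (fun b => if (a, b) ∈ E then ({true} : Set Bool) else Set.univ)))
      = ∏ a : Fin n, ∏ b : Fin n, (if (a, b) ∈ E then ENNReal.ofReal p else 1) :=
        Finset.prod_congr rfl fun a _ => inner a
    _ = ∏ x ∈ Finset.univ ×ˢ Finset.univ,
          (if x ∈ E then ENNReal.ofReal p else 1) := by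
        rw [Finset.prod_product]
    _ = ∏ x ∈ (Finset.univ : Finset (Fin n × Fin n)),
          (if x ∈ E then ENNReal.ofReal p else 1) := by
        rw [Finset.univ_product_univ]
    _ = ∏ _x ∈ Finset.univ ∩ E, ENNReal.ofReal p := Finset.prod_ite_mem _ _ _
    _ = (ENNReal.ofReal p) ^ E.card := by rw [Finset.univ_inter, Finset.prod_const]

lemma reachable_fin {n : ℕ} {ω : Fin n → Fin n → Bool} {j : ℕ}
    (h : Reachable n ω j) (h0 : 0 < n) :
    ∀ hj : j < n, Relation.ReflTransGen
      (fun a b : Fin n => a < b ∧ ω a b = true) ⟨0, h0⟩ ⟨j, hj⟩ := by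
  induction h with
  | refl => intro hj; exact Relation.ReflTransGen.refl
  | tail hab hbc ih =>
      intro hj
      obtain ⟨hb, hc, hlt, hω⟩ := hbc
      exact (ih hb).tail ⟨Fin.mk_lt_mk.2 hlt, hω⟩

lemma chain_edges {α : Type*} {r : α → α → Prop} :
    ∀ {a : α} {l : List α}, List.Chain r a l → ∀ e ∈ (a :: l).zip l, r e.1 e.2 := by
  intro a l
  induction l generalizing a with
  | nil => intro _ e he; simp at he
  | cons b t ih =>
      intro h e he
      simp only [List.Chain, List.isChain_cons_cons] at h
      rcases List.mem_cons.1 he with he | he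
      · rw [he]; exact h.1
      · exact ih h.2 e he

/-- For every `n`, every `p ∈ [0,1]` and every `2 ≤ i ≤ n`, the probability
that `v_i` is reachable from `v_1` is at most `p·(1+p)^{i-2}`, hence at most `p·e^{p·i}`. -/
theorem prob_reachable_le (n : ℕ) (p : ℝ) (hp0 : 0 ≤ p) (hp1 : p ≤ 1)
    (i : ℕ) (h2 : 2 ≤ i) (hin : i ≤ n) :
    graphMeasure n p {ω | Reachable n ω (i - 1)} ≤
        ENNReal.ofReal (p * (1 + p) ^ (i - 2)) ∧
    ENNReal.ofReal (p * (1 + p) ^ (i - 2)) ≤ ENNReal.ofReal (p * Real.exp (p * i)) := by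
  classical
  constructor
  · -- main probabilistic bound
    set q := ENNReal.ofReal p with hq
    have h0n : 0 < n := by omega
    have htgt : i - 1 < n := by omega
    set z : Fin n := ⟨0, h0n⟩ with hz
    set tgt : Fin n := ⟨i - 1, htgt⟩ with htgt'
    set t : Finset (Fin n) := Finset.Ioo z tgt with ht
    -- the path associated with a set of intermediate vertices
    let P : Finset (Fin n) → List (Fin n) := fun S => z :: (S.sort (· ≤ ·) ++ [tgt])
    let Ed : Finset (Fin n) → Finset (Fin n × Fin n) :=
      fun S => ((P S).zip (P S).tail).toFinset
    -- inclusion in the union of path events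
    have hsub : {ω : Fin n → Fin n → Bool | Reachable n ω (i - 1)} ⊆
        ⋃ S ∈ t.powerset, {ω | ∀ e ∈ Ed S, ω e.1 e.2 = true} := by
      intro ω hω
      have hr := reachable_fin hω h0n htgt
      obtain ⟨l, hchain, hlast⟩ := List.exists_isChain_cons_of_relationReflTransGen hr
      have hlt : List.Chain (· < ·) z l := hchain.imp fun _ _ h => h.1
      have hpw : List.Pairwise (· < ·) (z :: l) := List.isChain_iff_pairwise.1 hlt
      have hne : l ≠ [] := by
        intro h
        subst h
        simp only [List.getLast_singleton] at hlast
        have : (0 : ℕ) = i - 1 := congrArg Fin.val hlast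
        omega
      have hlastl : l.getLast hne = tgt := by
        rwa [List.getLast_cons hne] at hlast
      have hpwl : List.Pairwise (· < ·) l := hpw.of_cons
      have hdecomp : l.dropLast ++ [tgt] = l := by
        rw [← hlastl]; exact List.dropLast_append_getLast hne
      have hpwd : List.Pairwise (· < ·) l.dropLast :=
        List.Pairwise.sublist (List.dropLast_sublist l) hpwl
      have hnodup : l.dropLast.Nodup := hpwd.imp fun h => ne_of_lt h
      set S : Finset (Fin n) := l.dropLast.toFinset with hS
      have hsort : S.sort (· ≤ ·) = l.dropLast :=
        (List.toFinset_sort _ hnodup).2 (hpwd.imp fun h => le_of_lt h)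
      have hSsub : S ∈ t.powerset := by
        rw [Finset.mem_powerset]
        intro x hx
        rw [hS, List.mem_toFinset] at hx
        have hxl : x ∈ l := List.mem_of_mem_dropLast hx
        have h1 : z < x := List.rel_of_pairwise_cons hpw hxl
        have h2 : x < tgt := by
          rw [← hdecomp] at hpwl
          exact (List.pairwise_append.1 hpwl).2.2 x hx tgt (by simp)
        exact Finset.mem_Ioo.2 ⟨h1, h2⟩
      refine Set.mem_biUnion hSsub ?_
      intro e he
      have hPl : P S = z :: l := by
        show z :: (S.sort (· ≤ ·) ++ [tgt]) = z :: l
        rw [hsort, hdecomp]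
      have he' : e ∈ (z :: l).zip l := by
        have : e ∈ (P S).zip (P S).tail := List.mem_toFinset.1 he
        rwa [hPl] at this
      exact (chain_edges hchain e he').2
    -- measure computation
    have hq1 : q ≤ 1 := ENNReal.ofReal_le_one.2 hp1
    have hcard : ∀ S ∈ t.powerset, S.card + 1 ≤ (Ed S).card := by
      intro S hSp
      have hSsub : S ⊆ t := Finset.mem_powerset.1 hSp
      set L : List (Fin n) := S.sort (· ≤ ·) ++ [tgt] with hL
      have hPtail : (P S).tail = L := rfl
      have hlen : (P S).length = L.length + 1 := rfl
      have hmap : ((P S).zip L).map Prod.snd = L :=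
        List.map_snd_zip (by rw [hlen]; omega)
      have himg : (Ed S).image Prod.snd = L.toFinset := by
        rw [← hmap]
        show (((P S).zip (P S).tail).toFinset).image Prod.snd
          = (((P S).zip L).map Prod.snd).toFinset
        rw [hPtail]
        ext x; simp
      have hLnodup : L.Nodup := by
        rw [hL, List.nodup_append]
        refine ⟨(S.sort_nodup (· ≤ ·)), List.nodup_singleton _, ?_⟩
        intro x hx y hy hxy
        have : x ∈ S := (Finset.mem_sort (· ≤ ·)).1 hx
        have hxt : x ∈ t := hSsub this
        have hxl : x < tgt := (Finset.mem_Ioo.1 hxt).2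
        simp only [List.mem_singleton] at hy
        subst hy; subst hxy
        exact absurd hxl (lt_irrefl _)
      have hLcard : L.toFinset.card = S.card + 1 := by
        rw [List.toFinset_card_of_nodup hLnodup, hL]
        simp [Finset.length_sort]
      calc S.card + 1 = ((Ed S).image Prod.snd).card := by rw [himg, hLcard]
        _ ≤ (Ed S).card := Finset.card_image_le
    have hmeas : ∀ S ∈ t.powerset,
        graphMeasure n p {ω | ∀ e ∈ Ed S, ω e.1 e.2 = true} ≤ q ^ (S.card + 1) := by
      intro S hSp
      rw [edgeEvent_measure hp0 hp1]
      exact pow_le_pow_of_le_one zero_le hq1 (hcard S hSp)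
    have htcard : t.card = i - 2 := by
      rw [ht, Fin.card_Ioo]
      show (i - 1) - 0 - 1 = i - 2
      omega
    have hsum : ∑ S ∈ t.powerset, q ^ (S.card + 1) = q * (1 + q) ^ (i - 2) := by
      have h1 : ∑ S ∈ t.powerset, q ^ S.card = (q + 1) ^ t.card := by
        have := Finset.prod_add (fun _ : Fin n => q) (fun _ : Fin n => 1) t
        simp only [Finset.prod_const, one_pow, mul_one] at this
        exact this.symm
      calc ∑ S ∈ t.powerset, q ^ (S.card + 1)
          = ∑ S ∈ t.powerset, q ^ S.card * q := by
            refine Finset.sum_congr rfl fun S _ => ?_; rw [pow_succ]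
        _ = (∑ S ∈ t.powerset, q ^ S.card) * q := by rw [Finset.sum_mul]
        _ = (q + 1) ^ t.card * q := by rw [h1]
        _ = q * (1 + q) ^ (i - 2) := by rw [htcard, add_comm q 1, mul_comm]
    have hofReal : ENNReal.ofReal (p * (1 + p) ^ (i - 2)) = q * (1 + q) ^ (i - 2) := by
      rw [ENNReal.ofReal_mul hp0, ENNReal.ofReal_pow (by linarith),
        ENNReal.ofReal_add zero_le_one hp0, ENNReal.ofReal_one]
    calc graphMeasure n p {ω | Reachable n ω (i - 1)}
        ≤ graphMeasure n p (⋃ S ∈ t.powerset, {ω | ∀ e ∈ Ed S, ω e.1 e.2 = true}) :=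
          measure_mono hsub
      _ ≤ ∑ S ∈ t.powerset, graphMeasure n p {ω | ∀ e ∈ Ed S, ω e.1 e.2 = true} :=
          measure_biUnion_finset_le _ _
      _ ≤ ∑ S ∈ t.powerset, q ^ (S.card + 1) := Finset.sum_le_sum hmeas
      _ = q * (1 + q) ^ (i - 2) := hsum
      _ = ENNReal.ofReal (p * (1 + p) ^ (i - 2)) := hofReal.symm
  · -- elementary estimate
    apply ENNReal.ofReal_le_ofReal
    apply mul_le_mul_of_nonneg_left _ hp0
    have h1 : (1 + p) ^ (i - 2) ≤ Real.exp p ^ (i - 2) := by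
      apply pow_le_pow_left₀ (by linarith)
      linarith [Real.add_one_le_exp p]
    have h2 : Real.exp p ^ (i - 2) = Real.exp (p * (i - 2 : ℕ)) := by
      rw [mul_comm, Real.exp_nat_mul]
    have h3 : Real.exp (p * (i - 2 : ℕ)) ≤ Real.exp (p * i) := by
      apply Real.exp_le_exp.2
      apply mul_le_mul_of_nonneg_left _ hp0
      exact_mod_cast Nat.cast_le.2 (Nat.sub_le i 2)
    linarith
end

section
/- For every n ≥ 2 and every p ∈ (0,1], the expected number of vertices other than v_1 that are reachable from v_1 in the ordered directed random graph is at most p·(e^{p(n+1)} − 1)/(e^p − 1). -/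
open MeasureTheory Filter

def edgesOf {α : Type*} : List α → List (α × α)
  | [] => []
  | [_] => []
  | a :: b :: t => (a, b) :: edgesOf (b :: t)

lemma edgesOf_length {α : Type*} : ∀ l : List α, (edgesOf l).length = l.length - 1
  | [] => rfl
  | [_] => rfl
  | _ :: b :: t => by
      simp [edgesOf, edgesOf_length (b :: t)]

lemma map_fst_edgesOf {α : Type*} : ∀ l : List α, (edgesOf l).map Prod.fst = l.dropLast
  | [] => rfl
  | [_] => rfl
  | a :: b :: t => by
      simp [edgesOf, map_fst_edgesOf (b :: t)]

lemma chain_edgesOf {α : Type*} {r : α → α → Prop} : ∀ {a : α} {l : List α},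
    List.Chain r a l → ∀ q ∈ edgesOf (a :: l), r q.1 q.2
  | _, [], _, q, hq => by simp [edgesOf] at hq
  | a, b :: t, h, q, hq => by
      obtain ⟨hab, ht⟩ := List.isChain_cons_cons.1 h
      rcases List.mem_cons.1 hq with h | h
      · subst h; exact hab
      · exact chain_edgesOf ht q h

def event (n : ℕ) (E : Finset (Fin n × Fin n)) : Set (Fin n → Fin n → Bool) :=
  {ω | ∀ q ∈ E, ω q.1 q.2 = true}

lemma measure_event {n : ℕ} {p : ℝ} (hp1 : p ≤ 1) (E : Finset (Fin n × Fin n)) :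
    graphMeasure n p (event n E) = (ENNReal.ofReal p) ^ E.card := by
  have hev : event n E = Set.pi Set.univ (fun a => Set.pi Set.univ
      (fun b => if (a, b) ∈ E then ({true} : Set Bool) else Set.univ)) := by
    ext ω
    simp only [event, Set.mem_setOf_eq, Set.mem_pi, Set.mem_univ, forall_true_left]
    constructor
    · intro h a b
      split_ifs with hab
      · exact h (a, b) hab
      · trivial
    · intro h q hq
      have := h q.1 q.2
      rwa [if_pos hq] at this
  rw [graphMeasure, hev, Measure.pi_pi]
  have : ∀ a : Fin n, (Measure.pi fun _ => bernMeasure p)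
      (Set.pi Set.univ (fun b => if (a, b) ∈ E then ({true} : Set Bool) else Set.univ))
      = ∏ b : Fin n, (if (a, b) ∈ E then ENNReal.ofReal p else 1) := by
    intro a
    rw [Measure.pi_pi]
    refine Finset.prod_congr rfl fun b _ => ?_
    split_ifs with h
    · exact bern_true hp1
    · exact measure_univ
  simp_rw [this]
  rw [← Finset.prod_product']
  have : (Finset.univ : Finset (Fin n × Fin n)) = Finset.univ ×ˢ Finset.univ := by
    simp
  rw [← this]
  rw [Finset.prod_ite_mem, Finset.univ_inter, Finset.prod_const]

def EdgeRelF {n : ℕ} (ω : Fin n → Fin n → Bool) (a b : Fin n) : Prop :=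
  a < b ∧ ω a b = true

noncomputable def chainEdges {n : ℕ} [NeZero n] (S : Finset (Fin n)) (j : Fin n) :
    Finset (Fin n × Fin n) :=
  (edgesOf ((0 : Fin n) :: (S.sort (· ≤ ·) ++ [j]))).toFinset

lemma reachable_fin_s7 {n : ℕ} [NeZero n] (ω : Fin n → Fin n → Bool) :
    ∀ {b : ℕ}, Reachable n ω b → ∀ hb : b < n,
      Relation.ReflTransGen (EdgeRelF ω) 0 ⟨b, hb⟩ := by
  intro b h
  induction h with
  | refl => intro hb; exact Relation.ReflTransGen.refl
  | @tail b' c hrt hedge ih =>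
      intro hc
      obtain ⟨hb', hc', hlt, htrue⟩ := hedge
      exact (ih hb').tail ⟨hlt, htrue⟩

lemma reach_mem_event {n : ℕ} [NeZero n] (ω : Fin n → Fin n → Bool) (j : Fin n)
    (hj : (0 : Fin n) < j) (h : Relation.ReflTransGen (EdgeRelF ω) 0 j) :
    ∃ S ∈ (Finset.Ioo (0 : Fin n) j).powerset, ω ∈ event n (chainEdges S j) := by
  obtain ⟨l, hchain, hlast⟩ := List.exists_isChain_cons_of_relationReflTransGen h
  have hlt : List.Chain (· < ·) 0 l := hchain.imp fun _ _ hab => hab.1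
  have hpw : List.Pairwise (· < ·) ((0 : Fin n) :: l) := List.isChain_iff_pairwise.1 hlt
  have hlne : l ≠ [] := by
    rintro rfl
    simp at hlast
    exact absurd hlast.symm (ne_of_gt hj)
  have hlastl : l.getLast hlne = j := by
    rwa [List.getLast_cons hlne] at hlast
  have hl_eq : l = l.dropLast ++ [j] := by
    conv_lhs => rw [← List.dropLast_append_getLast hlne]
    rw [hlastl]
  have hnodup : ((0 : Fin n) :: l).Nodup := (List.pairwise_cons.2
    ⟨fun x hx => ne_of_lt (List.rel_of_pairwise_cons hpw hx),
     (List.pairwise_cons.1 hpw).2.imp ne_of_lt⟩)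
  have hnodupd : l.dropLast.Nodup :=
    ((List.dropLast_sublist l).nodup (List.nodup_cons.1 hnodup).2)
  have hsortedd : l.dropLast.Pairwise (· ≤ ·) := by
    have : l.Pairwise (· < ·) := (List.pairwise_cons.1 hpw).2
    exact (this.sublist (List.dropLast_sublist l)).imp le_of_lt
  refine ⟨l.dropLast.toFinset, ?_, ?_⟩
  · rw [Finset.mem_powerset]
    intro x hx
    rw [List.mem_toFinset] at hx
    have hxl : x ∈ l := List.dropLast_sublist l |>.mem hx
    rw [Finset.mem_Ioo]
    constructor
    · exact List.rel_of_pairwise_cons hpw hxl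
    · have := (List.pairwise_append.1 (hl_eq ▸ (List.pairwise_cons.1 hpw).2)).2.2
      exact this x hx j (List.mem_singleton_self j)
  · have hsort : l.dropLast.toFinset.sort (· ≤ ·) = l.dropLast :=
      (List.toFinset_sort _ hnodupd).2 hsortedd
    intro q hq
    rw [chainEdges, List.mem_toFinset, hsort, ← hl_eq] at hq
    exact (chain_edgesOf hchain q hq).2

lemma chainEdges_card {n : ℕ} [NeZero n] {S : Finset (Fin n)} {j : Fin n}
    (hj : (0 : Fin n) < j) (hS : S ⊆ Finset.Ioo (0 : Fin n) j) :
    (chainEdges S j).card = S.card + 1 := by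
  set c : List (Fin n) := (0 : Fin n) :: (S.sort (· ≤ ·) ++ [j]) with hc
  have hmem : ∀ x ∈ S.sort (· ≤ ·), (0 : Fin n) < x ∧ x < j := by
    intro x hx
    have := hS (Finset.mem_sort (α := Fin n) (· ≤ ·) |>.1 hx)
    exact Finset.mem_Ioo.1 this
  have hpw : c.Pairwise (· < ·) := by
    rw [hc, List.pairwise_cons]
    constructor
    · intro x hx
      rcases List.mem_append.1 hx with h | h
      · exact (hmem x h).1
      · rw [List.mem_singleton.1 h]; exact hj
    · rw [List.pairwise_append]
      refine ⟨(Finset.sortedLT_sort S).pairwise, List.pairwise_singleton _ _, ?_⟩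
      intro x hx y hy
      rw [List.mem_singleton.1 hy]
      exact (hmem x hx).2
  have hnodup : (edgesOf c).Nodup := by
    have h1 : c.dropLast.Nodup := (List.dropLast_sublist c).nodup (hpw.imp ne_of_lt)
    rw [← map_fst_edgesOf c] at h1
    exact h1.of_map _
  rw [chainEdges, List.toFinset_card_of_nodup hnodup, edgesOf_length]
  simp [hc, Finset.length_sort]

lemma measure_reachable_le {n : ℕ} [NeZero n] {p : ℝ} (hp1 : p ≤ 1) (j : Fin n)
    (hj : (0 : Fin n) < j) :
    graphMeasure n p {ω | Reachable n ω j} ≤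
      ENNReal.ofReal p * (1 + ENNReal.ofReal p) ^ ((j : ℕ) - 1) := by
  set q := ENNReal.ofReal p with hqdef
  have hsub : {ω : Fin n → Fin n → Bool | Reachable n ω j} ⊆
      ⋃ S ∈ (Finset.Ioo (0 : Fin n) j).powerset, event n (chainEdges S j) := by
    intro ω hω
    have h1 : Relation.ReflTransGen (EdgeRelF ω) 0 ⟨(j : ℕ), j.isLt⟩ :=
      reachable_fin_s7 ω hω j.isLt
    rw [Fin.eta] at h1
    obtain ⟨S, hS, hmem⟩ := reach_mem_event ω j hj h1
    exact Set.mem_biUnion hS hmem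
  calc graphMeasure n p {ω | Reachable n ω j}
      ≤ graphMeasure n p (⋃ S ∈ (Finset.Ioo (0 : Fin n) j).powerset,
          event n (chainEdges S j)) := measure_mono hsub
    _ ≤ ∑ S ∈ (Finset.Ioo (0 : Fin n) j).powerset,
          graphMeasure n p (event n (chainEdges S j)) :=
        measure_biUnion_finset_le _ _
    _ = ∑ S ∈ (Finset.Ioo (0 : Fin n) j).powerset, q ^ (S.card + 1) := by
        refine Finset.sum_congr rfl fun S hS => ?_
        rw [measure_event hp1, chainEdges_card hj (Finset.mem_powerset.1 hS)]
    _ = q * (1 + q) ^ ((j : ℕ) - 1) := by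
        have hprod : ∑ S ∈ (Finset.Ioo (0 : Fin n) j).powerset, q ^ S.card
            = (q + 1) ^ (Finset.Ioo (0 : Fin n) j).card := by
          rw [← Finset.prod_const]
          rw [Finset.prod_add]
          refine Finset.sum_congr rfl fun t ht => ?_
          rw [Finset.prod_const, Finset.prod_const, one_pow, mul_one]
        have hcard : (Finset.Ioo (0 : Fin n) j).card = (j : ℕ) - 1 := by
          rw [Fin.card_Ioo, Fin.val_zero, Nat.sub_zero]
        simp_rw [pow_succ, ← Finset.sum_mul]
        rw [hprod, hcard, mul_comm, add_comm q 1]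

/-- For every `n ≥ 2` and every `p ∈ (0,1]`, the expected number of
vertices other than `v_1` that are reachable from `v_1` is at most
`p·(e^{p(n+1)} − 1)/(e^p − 1)`. -/
theorem expected_reachable_le (n : ℕ) (hn : 2 ≤ n) (p : ℝ) (hp0 : 0 < p) (hp1 : p ≤ 1) :
    (∫ ω, (((RSet n ω).erase 0).card : ℝ) ∂(graphMeasure n p)) ≤
      p * (Real.exp (p * (n + 1)) - 1) / (Real.exp p - 1) := by
  haveI : NeZero n := ⟨by omega⟩
  set μ := graphMeasure n p with hμ
  haveI : IsProbabilityMeasure μ := by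
    rw [hμ, graphMeasure]; infer_instance
  -- pointwise: card as a sum of indicators
  have hcard : ∀ ω : Fin n → Fin n → Bool, (((RSet n ω).erase 0).card : ℝ) =
      ∑ j ∈ (Finset.range n).erase 0,
        ({ω' | Reachable n ω' j}.indicator (fun _ => (1 : ℝ)) ω) := by
    intro ω
    classical
    rw [RSet, ← Finset.filter_erase, Finset.card_filter]
    push_cast
    refine Finset.sum_congr rfl fun j _ => ?_
    by_cases h : Reachable n ω j <;>
      simp [h, Set.indicator_apply]
  have hmeas : ∀ j : ℕ, MeasurableSet {ω' : Fin n → Fin n → Bool | Reachable n ω' j} :=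
    fun j => (Set.to_countable _).measurableSet
  have hint : ∀ j : ℕ,
      Integrable ({ω' | Reachable n ω' j}.indicator (fun _ => (1 : ℝ))) μ :=
    fun j => (integrable_const (1 : ℝ)).indicator (hmeas j)
  calc (∫ ω, (((RSet n ω).erase 0).card : ℝ) ∂μ)
      = ∑ j ∈ (Finset.range n).erase 0,
          ∫ ω, ({ω' | Reachable n ω' j}.indicator (fun _ => (1 : ℝ)) ω) ∂μ := by
        rw [← integral_finset_sum _ (fun j _ => hint j)]
        exact integral_congr_ae (Filter.Eventually.of_forall hcard)
    _ = ∑ j ∈ (Finset.range n).erase 0, (μ {ω' | Reachable n ω' j}).toReal := by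
        refine Finset.sum_congr rfl fun j _ => ?_
        rw [integral_indicator_const (1 : ℝ) (hmeas j), smul_eq_mul, mul_one, measureReal_def]
    _ ≤ ∑ j ∈ (Finset.range n).erase 0, p * (1 + p) ^ (j - 1) := by
        refine Finset.sum_le_sum fun j hj => ?_
        obtain ⟨hj0, hjn⟩ : j ≠ 0 ∧ j < n := by
          rw [Finset.mem_erase, Finset.mem_range] at hj; exact hj
        set jF : Fin n := ⟨j, hjn⟩ with hjF
        have hjFpos : (0 : Fin n) < jF := by
          rw [Fin.lt_def]; simpa [hjF] using Nat.pos_of_ne_zero hj0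
        have hbound := measure_reachable_le (n := n) (p := p) hp1 jF hjFpos
        have hfin : ENNReal.ofReal p * (1 + ENNReal.ofReal p) ^ ((jF : ℕ) - 1) ≠ ⊤ := by
          exact ENNReal.mul_ne_top ENNReal.ofReal_ne_top
            (ENNReal.pow_ne_top (by simp [ENNReal.add_ne_top]))
        have := ENNReal.toReal_mono hfin hbound
        rw [ENNReal.toReal_mul, ENNReal.toReal_pow, ENNReal.toReal_add
          ENNReal.one_ne_top ENNReal.ofReal_ne_top, ENNReal.toReal_one,
          ENNReal.toReal_ofReal hp0.le] at this
        exact this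
    _ ≤ p * (Real.exp (p * (n + 1)) - 1) / (Real.exp p - 1) := by
        have herase : (Finset.range n).erase 0 = Finset.Ico 1 n := by
          ext x
          simp only [Finset.mem_erase, Finset.mem_range, Finset.mem_Ico]
          omega
        have h1p : (0 : ℝ) ≤ 1 + p := by linarith
        have hexp1 : (1 : ℝ) < Real.exp p := by
          calc (1 : ℝ) = Real.exp 0 := Real.exp_zero.symm
            _ < Real.exp p := Real.exp_lt_exp.2 hp0
        have hsum1 : ∑ j ∈ Finset.Ico 1 n, p * (1 + p) ^ (j - 1)
            = p * ∑ i ∈ Finset.range (n - 1), (1 + p) ^ i := by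
          rw [Finset.sum_Ico_eq_sum_range, Finset.mul_sum]
          refine Finset.sum_congr rfl fun i _ => ?_
          have h1i : 1 + i - 1 = i := by omega
          rw [h1i]
        have hgeom : ∑ k ∈ Finset.range (n + 1), (Real.exp p) ^ k
            = (Real.exp (p * (n + 1)) - 1) / (Real.exp p - 1) := by
          rw [geom_sum_eq (ne_of_gt hexp1)]
          congr 2
          rw [← Real.exp_nat_mul]
          congr 1
          push_cast
          ring
        rw [herase, hsum1, mul_div_assoc, ← hgeom]
        refine mul_le_mul_of_nonneg_left ?_ hp0.le
        calc ∑ i ∈ Finset.range (n - 1), (1 + p) ^ i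
            ≤ ∑ i ∈ Finset.range (n - 1), (Real.exp p) ^ i := by
              refine Finset.sum_le_sum fun i _ => ?_
              refine pow_le_pow_left₀ h1p ?_ i
              linarith [Real.add_one_le_exp p]
          _ ≤ ∑ i ∈ Finset.range (n + 1), (Real.exp p) ^ i := by
              refine Finset.sum_le_sum_of_subset_of_nonneg
                (Finset.range_subset_range.2 (by omega)) fun i _ _ => ?_
              positivity
end

section
/- There is a constant C > 0 such that for every p ∈ (0,1) and every positive integer t, Σ_{i=1}^{∞} d_t(i)·(1−p)^{i} ≤ (log t + C)/p. -/
/-- `dCount t i` is `d_t(i)`, the number of positive divisors of `i` that are at most `t`. -/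
def dCount (t i : ℕ) : ℕ := (i.divisors.filter fun d => d ≤ t).card

lemma dCount_eq (t n : ℕ) (hn : 0 < n) :
    dCount t n = ((Finset.Icc 1 t).filter fun d => d ∣ n).card := by
  unfold dCount
  congr 1
  ext d
  simp only [Finset.mem_filter, Nat.mem_divisors, Finset.mem_Icc]
  constructor
  · rintro ⟨⟨hd, -⟩, hdt⟩
    exact ⟨⟨Nat.pos_of_dvd_of_pos hd hn, hdt⟩, hd⟩
  · rintro ⟨⟨-, hdt⟩, hd⟩
    exact ⟨⟨hd, hn.ne'⟩, hdt⟩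

lemma summable_aux {x : ℝ} (hx0 : 0 ≤ x) (hx1 : x < 1) (d : ℕ) :
    Summable (fun i : ℕ => if d ∣ (i + 1) then x ^ (i + 1) else 0) := by
  have hg : Summable (fun i : ℕ => x ^ (i + 1)) := by
    simpa [pow_succ, mul_comm] using (summable_geometric_of_lt_one hx0 hx1).mul_left x
  refine Summable.of_nonneg_of_le (fun i => ?_) (fun i => ?_) hg
  · split <;> positivity
  · split
    · exact le_rfl
    · positivity

lemma tsum_aux {x : ℝ} (hx0 : 0 < x) (hx1 : x < 1) {d : ℕ} (hd : 1 ≤ d) :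
    (∑' i : ℕ, if d ∣ (i + 1) then x ^ (i + 1) else 0)
      = x ^ d * (1 - x ^ d)⁻¹ := by
  have hxd1 : x ^ d < 1 := pow_lt_one₀ hx0.le hx1 (by omega)
  have hxd0 : (0:ℝ) ≤ x ^ d := by positivity
  have key : (∑' i : ℕ, if d ∣ (i + 1) then x ^ (i + 1) else 0)
      = ∑' k : ℕ, x ^ (d * (k + 1)) := by
    apply tsum_eq_tsum_of_ne_zero_bij (fun k => d * ((k : ℕ) + 1) - 1)
    · intro a b hab
      simp only at hab
      have ha : 1 ≤ d * ((a:ℕ) + 1) := Nat.one_le_iff_ne_zero.mpr (by positivity)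
      have hb : 1 ≤ d * ((b:ℕ) + 1) := Nat.one_le_iff_ne_zero.mpr (by positivity)
      have : d * ((a:ℕ) + 1) = d * ((b:ℕ) + 1) := by omega
      have := Nat.eq_of_mul_eq_mul_left (by omega) this
      exact Subtype.ext (by omega)
    · intro n hn
      simp only [Function.mem_support, ne_eq, ite_eq_right_iff, not_forall] at hn
      obtain ⟨⟨m, hm⟩, -⟩ := hn
      rcases m with _ | m
      · simp at hm
      · refine ⟨⟨m, ?_⟩, ?_⟩
        · simp only [Function.mem_support]
          positivity
        · show d * (m + 1) - 1 = n
          omega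
    · rintro ⟨k, hk⟩
      have h1 : 1 ≤ d * (k + 1) := Nat.one_le_iff_ne_zero.mpr (by positivity)
      have h2 : d * (k + 1) - 1 + 1 = d * (k + 1) := by omega
      simp only [h2]
      rw [if_pos ⟨k + 1, rfl⟩]
  rw [key]
  have heq : ∀ k : ℕ, x ^ (d * (k + 1)) = x ^ d * (x ^ d) ^ k := by
    intro k
    rw [← pow_mul]
    ring_nf
  rw [tsum_congr heq, tsum_mul_left, tsum_geometric_of_lt_one hxd0 hxd1]

lemma bound_aux {p : ℝ} (hp0 : 0 < p) (hp1 : p < 1) {d : ℕ} (hd : 1 ≤ d) :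
    (1 - p) ^ d * (1 - (1 - p) ^ d)⁻¹ ≤ 1 / (p * d) := by
  have hx0 : (0:ℝ) < 1 - p := by linarith
  have hx1 : 1 - p < 1 := by linarith
  have hxd1 : (1 - p) ^ d < 1 := pow_lt_one₀ hx0.le hx1 (by omega)
  have hxd0 : (0:ℝ) < (1 - p) ^ d := by positivity
  have hden : (0:ℝ) < 1 - (1 - p) ^ d := by linarith
  have hdpos : (0:ℝ) < d := by exact_mod_cast hd
  have hgeom : 1 - (1 - p) ^ d = p * ∑ j ∈ Finset.range d, (1 - p) ^ j := by
    have h := geom_sum_mul (1 - p) d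
    nlinarith [h]
  have hsum : (d : ℝ) * (1 - p) ^ d ≤ ∑ j ∈ Finset.range d, (1 - p) ^ j := by
    calc (d : ℝ) * (1 - p) ^ d = ∑ _j ∈ Finset.range d, (1 - p) ^ d := by
          rw [Finset.sum_const, Finset.card_range, nsmul_eq_mul]
      _ ≤ ∑ j ∈ Finset.range d, (1 - p) ^ j := by
          apply Finset.sum_le_sum
          intro j hj
          exact pow_le_pow_of_le_one hx0.le hx1.le (Finset.mem_range.mp hj).le
  have h2 : p * ((d:ℝ) * (1 - p) ^ d) ≤ 1 - (1 - p) ^ d := by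
    rw [hgeom]
    exact mul_le_mul_of_nonneg_left hsum hp0.le
  rw [← div_eq_mul_inv, div_le_div_iff₀ hden (by positivity)]
  nlinarith [h2]

/-- There is a constant `C > 0` such that for every `p ∈ (0,1)` and every
positive integer `t`, `Σ_{i=1}^∞ d_t(i)·(1−p)^i ≤ (log t + C)/p`. -/
theorem tsum_dCount_le :
    ∃ C : ℝ, 0 < C ∧ ∀ p : ℝ, 0 < p → p < 1 → ∀ t : ℕ, 0 < t →
      (∑' i : ℕ, (dCount t (i + 1) : ℝ) * (1 - p) ^ (i + 1)) ≤ (Real.log t + C) / p := by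
  refine ⟨1, one_pos, fun p hp0 hp1 t ht => ?_⟩
  have hx0 : (0:ℝ) < 1 - p := by linarith
  have hx1 : 1 - p < 1 := by linarith
  have hterm : ∀ i : ℕ, (dCount t (i + 1) : ℝ) * (1 - p) ^ (i + 1)
      = ∑ d ∈ Finset.Icc 1 t, (if d ∣ (i + 1) then (1 - p) ^ (i + 1) else 0) := by
    intro i
    rw [dCount_eq t (i+1) (Nat.succ_pos i)]
    rw [← Finset.sum_filter, Finset.sum_const, nsmul_eq_mul]
  rw [tsum_congr hterm, Summable.tsum_finsetSum (fun d _ => summable_aux hx0.le hx1 d)]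
  have hineq : ∀ d ∈ Finset.Icc 1 t,
      (∑' i : ℕ, if d ∣ (i + 1) then (1 - p) ^ (i + 1) else 0) ≤ 1 / (p * d) := by
    intro d hd
    obtain ⟨hd1, -⟩ := Finset.mem_Icc.mp hd
    rw [tsum_aux hx0 hx1 hd1]
    exact bound_aux hp0 hp1 hd1
  calc ∑ d ∈ Finset.Icc 1 t, (∑' i : ℕ, if d ∣ (i + 1) then (1 - p) ^ (i + 1) else 0)
      ≤ ∑ d ∈ Finset.Icc 1 t, 1 / (p * d) := Finset.sum_le_sum hineq
    _ = (harmonic t : ℝ) / p := by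
        rw [harmonic_eq_sum_Icc]
        push_cast
        rw [Finset.sum_div]
        apply Finset.sum_congr rfl
        intro d hd
        rw [one_div, mul_inv]
        ring
    _ ≤ (Real.log t + 1) / p := by
        gcongr
        linarith [harmonic_le_one_add_log t]
end

section
/- For every p ∈ (0,1) and every positive integer t, Σ_{k=1}^{t} p/(1 − (1−p)^k)^2 ≤ sqrt( (t/p) · Σ_{k=1}^{t} 1/(1 − (1−p)^k) ). (This follows from the Cauchy–Schwarz inequality together with the bound p^2/(1 − (1−p)^k)^3 ≤ 1/p, valid since 1 − (1−p)^k ≥ p for all k ≥ 1.) -/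
/-- For every `p ∈ (0,1)` and every positive integer `t`,
`Σ_{k=1}^t p/(1 − (1−p)^k)² ≤ sqrt((t/p) · Σ_{k=1}^t 1/(1 − (1−p)^k))`. -/
theorem sum_var_le_sqrt (p : ℝ) (hp0 : 0 < p) (hp1 : p < 1) (t : ℕ) (ht : 0 < t) :
    (∑ k ∈ Finset.Icc 1 t, p / (1 - (1 - p) ^ k) ^ 2) ≤
      Real.sqrt ((t / p) * ∑ k ∈ Finset.Icc 1 t, 1 / (1 - (1 - p) ^ k)) := by
  have hkey : ∀ k ∈ Finset.Icc 1 t, p ≤ 1 - (1 - p) ^ k := by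
    intro k hk
    simp only [Finset.mem_Icc] at hk
    have : (1 - p) ^ k ≤ 1 - p :=
      pow_le_of_le_one (by linarith) (by linarith) (by omega)
    linarith
  have hpos : ∀ k ∈ Finset.Icc 1 t, 0 < 1 - (1 - p) ^ k := fun k hk =>
    lt_of_lt_of_le hp0 (hkey k hk)
  have hLnn : 0 ≤ ∑ k ∈ Finset.Icc 1 t, p / (1 - (1 - p) ^ k) ^ 2 :=
    Finset.sum_nonneg fun k hk => by positivity
  rw [show (∑ k ∈ Finset.Icc 1 t, p / (1 - (1 - p) ^ k) ^ 2)
      = Real.sqrt ((∑ k ∈ Finset.Icc 1 t, p / (1 - (1 - p) ^ k) ^ 2) ^ 2) from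
      (Real.sqrt_sq hLnn).symm]
  apply Real.sqrt_le_sqrt
  have hcs : (∑ k ∈ Finset.Icc 1 t, (1 : ℝ) * (p / (1 - (1 - p) ^ k) ^ 2)) ^ 2 ≤
      (∑ k ∈ Finset.Icc 1 t, (1 : ℝ) ^ 2) *
      (∑ k ∈ Finset.Icc 1 t, (p / (1 - (1 - p) ^ k) ^ 2) ^ 2) :=
    Finset.sum_mul_sq_le_sq_mul_sq (Finset.Icc 1 t) _ _
  simp only [one_mul, one_pow, Finset.sum_const, Nat.card_Icc, Nat.add_sub_cancel,
    nsmul_eq_mul] at hcs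
  refine hcs.trans ?_
  have hsum : (∑ k ∈ Finset.Icc 1 t, (p / (1 - (1 - p) ^ k) ^ 2) ^ 2)
      ≤ (1 / p) * ∑ k ∈ Finset.Icc 1 t, 1 / (1 - (1 - p) ^ k) := by
    rw [Finset.mul_sum]
    apply Finset.sum_le_sum
    intro k hk
    have hx := hpos k hk
    have hxk := hkey k hk
    rw [div_pow, ← pow_mul, one_div, mul_one_div,
      div_le_div_iff₀ (by positivity) (by positivity)]
    have h3 : p ^ 3 ≤ (1 - (1 - p) ^ k) ^ 3 := pow_le_pow_left₀ hp0.le hxk 3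
    have h4 : p ^ 3 * (1 - (1 - p) ^ k) ≤ (1 - (1 - p) ^ k) ^ 4 := by
      nlinarith [mul_le_mul_of_nonneg_right h3 hx.le]
    rw [show 2 * 2 = 4 from rfl]
    rw [← mul_le_mul_iff_right₀ hp0, ← mul_assoc, ← mul_assoc,
      mul_inv_cancel₀ hp0.ne', one_mul]
    nlinarith [h4]
  calc (t : ℝ) * 1 * ∑ k ∈ Finset.Icc 1 t, (p / (1 - (1 - p) ^ k) ^ 2) ^ 2
      = (t : ℝ) * ∑ k ∈ Finset.Icc 1 t, (p / (1 - (1 - p) ^ k) ^ 2) ^ 2 := by ring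
    _ ≤ (t : ℝ) * ((1 / p) * ∑ k ∈ Finset.Icc 1 t, 1 / (1 - (1 - p) ^ k)) :=
        mul_le_mul_of_nonneg_left hsum (Nat.cast_nonneg t)
    _ = (t : ℝ) / p * ∑ k ∈ Finset.Icc 1 t, 1 / (1 - (1 - p) ^ k) := by ring
end

section
/- In the infinite ordered directed random graph with edge probability p ∈ (0,1): almost surely, for every i ≥ 1 the i-th reachable vertex other than v_1 exists; moreover the increments X_i − X_{i−1} for i ≥ 1 are mutually independent, and X_i − X_{i−1} is geometrically distributed with success probability 1 − (1−p)^{i}, i.e. P(X_i − X_{i−1} = m) = (1 − (1−p)^{i})·(1−p)^{i·(m−1)} for every integer m ≥ 1. -/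
open MeasureTheory ProbabilityTheory Filter

/-- `IsInfOrderedRandomGraph μ edge p` says that, on the probability space `(Ω, μ)`, the
family `edge` of Boolean random variables models the infinite ordered directed random graph
with edge probability `p`: vertices are `0, 1, 2, …` (vertex `k` standing for `v_{k+1}`),
and for each pair `a < b` the indicator `edge a b` of the presence of the directed edge
from `a` to `b` takes the value `true` with probability `p`, these indicators (for the
pairs `a < b`) forming a mutually independent family. -/
structure IsInfOrderedRandomGraph {Ω : Type*} [MeasurableSpace Ω] (μ : Measure Ω)
    (edge : ℕ → ℕ → Ω → Bool) (p : ℝ) : Prop where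
  isProb : IsProbabilityMeasure μ
  meas : ∀ a b : ℕ, Measurable (edge a b)
  indep : iIndepFun
      (fun (e : {q : ℕ × ℕ // q.1 < q.2}) ω => edge e.1.1 e.1.2 ω) μ
  marginal : ∀ a b : ℕ, a < b → μ {ω | edge a b ω = true} = ENNReal.ofReal p

/-- Vertex `j` (i.e. `v_{j+1}`) is reachable from vertex `0` (i.e. `v_1`) by a directed
path along present edges with strictly increasing indices. -/
def ReachableI {Ω : Type*} (edge : ℕ → ℕ → Ω → Bool) (ω : Ω) (j : ℕ) : Prop :=
  Relation.ReflTransGen (fun a b => a < b ∧ edge a b ω = true) 0 j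

/-- `Xr edge ω i` is `X_i`: for `i ≥ 1`, the (1-based) index of the `i`-th reachable vertex
other than `v_1` (in increasing order of index), and `X_0 = 1` (the index of `v_1`).
Vertex `j` has 1-based index `j + 1`. -/
noncomputable def Xr {Ω : Type*} (edge : ℕ → ℕ → Ω → Bool) (ω : Ω) : ℕ → ℕ
  | 0 => 1
  | i + 1 => Nat.nth (fun j => 0 < j ∧ ReachableI edge ω j) i + 1

namespace IORG
open scoped Classical ENNReal

variable {Ω : Type*}

/-! ### Deterministic lemmas about reachability -/

theorem reach_zero (edge : ℕ → ℕ → Ω → Bool) (ω : Ω) : ReachableI edge ω 0 :=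
  Relation.ReflTransGen.refl

theorem reach_iff (edge : ℕ → ℕ → Ω → Bool) (ω : Ω) (j : ℕ) :
    ReachableI edge ω j ↔ j = 0 ∨ ∃ a, a < j ∧ ReachableI edge ω a ∧ edge a j ω = true := by
  constructor
  · intro h
    rcases Relation.ReflTransGen.cases_tail h with h0 | ⟨b, hb, hbj⟩
    · exact Or.inl h0
    · exact Or.inr ⟨b, hbj.1, hb, hbj.2⟩
  · rintro (rfl | ⟨a, hlt, ha, he⟩)
    · exact Relation.ReflTransGen.refl
    · exact ha.tail ⟨hlt, he⟩

/-! ### The success positions -/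

/-- Partial sums: `xs m k` is the position of the `k`-th success when the `i`-th increment
is `m i + 1`; `xs m 0 = 0`. -/
def xs (m : ℕ → ℕ) : ℕ → ℕ
  | 0 => 0
  | k + 1 => xs m k + m k + 1

theorem xs_strictMono (m : ℕ → ℕ) : StrictMono (xs m) :=
  strictMono_nat_of_lt_succ (fun k => by simp [xs])

theorem xs_pos (m : ℕ → ℕ) {k : ℕ} (hk : 0 < k) : 0 < xs m k := by
  have := xs_strictMono m hk
  simpa [xs] using this

/-- The success predicate: `j` is one of the positive success positions. -/
def cX (m : ℕ → ℕ) (j : ℕ) : Prop := ∃ k, 0 < k ∧ xs m k = j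

/-- The prescribed set of reachable vertices strictly below `j`. -/
noncomputable def TX (m : ℕ → ℕ) (j : ℕ) : Finset ℕ :=
  (Finset.range j).filter (fun a => a = 0 ∨ cX m a)

theorem TX_lt (m : ℕ → ℕ) (j : ℕ) : ∀ a ∈ TX m j, a < j := by
  intro a ha
  exact Finset.mem_range.1 (Finset.mem_filter.1 ha).1

theorem TX_eq_image (m : ℕ → ℕ) {n j : ℕ} (h1 : xs m n < j) (h2 : j ≤ xs m (n + 1)) :
    TX m j = (Finset.range (n + 1)).image (xs m) := by
  ext a
  simp only [TX, Finset.mem_filter, Finset.mem_range, Finset.mem_image]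
  constructor
  · rintro ⟨haj, rfl | ⟨k, hk, rfl⟩⟩
    · exact ⟨0, Nat.succ_pos n, rfl⟩
    · refine ⟨k, ?_, rfl⟩
      have : xs m k < xs m (n + 1) := lt_of_lt_of_le haj h2
      exact (xs_strictMono m).lt_iff_lt.1 this
  · rintro ⟨i, hi, rfl⟩
    have hle : xs m i ≤ xs m n := (xs_strictMono m).monotone (by omega)
    refine ⟨lt_of_le_of_lt hle h1, ?_⟩
    rcases Nat.eq_zero_or_pos i with rfl | hpos
    · exact Or.inl rfl
    · exact Or.inr ⟨i, hpos, rfl⟩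

theorem TX_card (m : ℕ → ℕ) {n j : ℕ} (h1 : xs m n < j) (h2 : j ≤ xs m (n + 1)) :
    (TX m j).card = n + 1 := by
  rw [TX_eq_image m h1 h2,
    Finset.card_image_of_injective _ (xs_strictMono m).injective, Finset.card_range]

theorem cX_iff (m : ℕ → ℕ) {n j : ℕ} (h1 : xs m n < j) (h2 : j ≤ xs m (n + 1)) :
    cX m j ↔ j = xs m (n + 1) := by
  constructor
  · rintro ⟨k, hk, rfl⟩
    have hkn : n < k := (xs_strictMono m).lt_iff_lt.1 h1
    have hk1 : k ≤ n + 1 := (xs_strictMono m).le_iff_le.1 h2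
    have : k = n + 1 := by omega
    rw [this]
  · rintro rfl
    exact ⟨n + 1, Nat.succ_pos n, rfl⟩

/-! ### Pattern condition versus column conditions -/

/-- Pattern condition up to `J`: reachability below `J` matches the prescribed pattern. -/
def patt (edge : ℕ → ℕ → Ω → Bool) (m : ℕ → ℕ) (J : ℕ) (ω : Ω) : Prop :=
  ∀ j, 0 < j → j ≤ J → (ReachableI edge ω j ↔ cX m j)

/-- Column condition at `j`. -/
def colC (edge : ℕ → ℕ → Ω → Bool) (m : ℕ → ℕ) (j : ℕ) (ω : Ω) : Prop :=
  (∃ a ∈ TX m j, edge a j ω = true) ↔ cX m j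

theorem patt_iff_col (edge : ℕ → ℕ → Ω → Bool) (m : ℕ → ℕ) (ω : Ω) :
    ∀ J, patt edge m J ω ↔ ∀ j, 0 < j → j ≤ J → colC edge m j ω := by
  intro J
  induction J with
  | zero => constructor <;> (intro _ j hj hjJ; omega)
  | succ J ih =>
    have split₁ : patt edge m (J + 1) ω ↔
        patt edge m J ω ∧ (ReachableI edge ω (J + 1) ↔ cX m (J + 1)) := by
      constructor
      · intro h
        exact ⟨fun j hj hjJ => h j hj (by omega), h (J + 1) (by omega) le_rfl⟩
      · rintro ⟨h1, h2⟩ j hj hjJ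
        rcases Nat.lt_succ_iff_lt_or_eq.1 (Nat.lt_succ_of_le hjJ) with h | rfl
        · exact h1 j hj (by omega)
        · exact h2
    have split₂ : (∀ j, 0 < j → j ≤ J + 1 → colC edge m j ω) ↔
        (∀ j, 0 < j → j ≤ J → colC edge m j ω) ∧ colC edge m (J + 1) ω := by
      constructor
      · intro h
        exact ⟨fun j hj hjJ => h j hj (by omega), h (J + 1) (by omega) le_rfl⟩
      · rintro ⟨h1, h2⟩ j hj hjJ
        rcases Nat.lt_succ_iff_lt_or_eq.1 (Nat.lt_succ_of_le hjJ) with h | rfl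
        · exact h1 j hj (by omega)
        · exact h2
    rw [split₁, split₂, ← ih]
    constructor
    · rintro ⟨h1, h2⟩
      refine ⟨h1, ?_⟩
      unfold colC
      rw [← h2]
      -- reach (J+1) ↔ ∃ a ∈ TX, edge a (J+1)
      rw [reach_iff]
      simp only [Nat.succ_ne_zero, false_or]
      constructor
      · rintro ⟨a, haT, he⟩
        simp only [TX, Finset.mem_filter, Finset.mem_range] at haT
        refine ⟨a, haT.1, ?_, he⟩
        rcases haT.2 with rfl | hc
        · exact reach_zero edge ω
        · rcases Nat.eq_zero_or_pos a with rfl | hpos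
          · exact reach_zero edge ω
          · exact (h1 a hpos (by omega)).2 hc
      · rintro ⟨a, hlt, ha, he⟩
        refine ⟨a, ?_, he⟩
        simp only [TX, Finset.mem_filter, Finset.mem_range]
        refine ⟨hlt, ?_⟩
        rcases Nat.eq_zero_or_pos a with rfl | hpos
        · exact Or.inl rfl
        · exact Or.inr ((h1 a hpos (by omega)).1 ha)
    · rintro ⟨h1, h2⟩
      refine ⟨h1, ?_⟩
      unfold colC at h2
      rw [← h2, reach_iff]
      simp only [Nat.succ_ne_zero, false_or]
      constructor
      · rintro ⟨a, hlt, ha, he⟩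
        refine ⟨a, ?_, he⟩
        simp only [TX, Finset.mem_filter, Finset.mem_range]
        refine ⟨hlt, ?_⟩
        rcases Nat.eq_zero_or_pos a with rfl | hpos
        · exact Or.inl rfl
        · exact Or.inr ((h1 a hpos (by omega)).1 ha)
      · rintro ⟨a, haT, he⟩
        simp only [TX, Finset.mem_filter, Finset.mem_range] at haT
        refine ⟨a, haT.1, ?_, he⟩
        rcases haT.2 with rfl | hc
        · exact reach_zero edge ω
        · rcases Nat.eq_zero_or_pos a with rfl | hpos
          · exact reach_zero edge ω
          · exact (h1 a hpos (by omega)).2 hc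


/-! ### Nat.nth lemmas -/

theorem infinite_iff (s : Set ℕ) : s.Infinite ↔ ∀ N, ∃ j, N < j ∧ j ∈ s := by
  constructor
  · intro hs N
    by_contra h
    push_neg at h
    exact hs (Set.Finite.subset (Set.finite_Iic N) (fun j hj => by
      by_contra hj'
      simp only [Set.mem_Iic, not_le] at hj'
      exact absurd hj (by simpa using h j hj')))
  · intro h hfin
    obtain ⟨N, hN⟩ := hfin.bddAbove
    obtain ⟨j, hj1, hj2⟩ := h N
    exact absurd (hN hj2) (by omega)

theorem nth_eq_of_patt (edge : ℕ → ℕ → Ω → Bool) (ω : Ω) (m : ℕ → ℕ) (n : ℕ)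
    (hpatt : patt edge m (xs m n) ω) :
    ∀ i < n, Nat.nth (fun j => 0 < j ∧ ReachableI edge ω j) i = xs m (i + 1) := by
  set p : ℕ → Prop := fun j => 0 < j ∧ ReachableI edge ω j with hp
  intro i hin
  induction i using Nat.strong_induction_on with
  | _ i IH =>
  rw [Nat.nth_eq_sInf]
  have hmem : xs m (i + 1) ∈ {x | p x ∧ ∀ k < i, Nat.nth p k < x} := by
    refine ⟨⟨xs_pos m (Nat.succ_pos i), ?_⟩, ?_⟩
    · refine (hpatt (xs m (i + 1)) (xs_pos m (Nat.succ_pos i))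
        ((xs_strictMono m).monotone (by omega))).2 ⟨i + 1, Nat.succ_pos i, rfl⟩
    · intro k hk
      rw [IH k hk (by omega)]
      exact xs_strictMono m (by omega)
  have hlb : ∀ y ∈ {x | p x ∧ ∀ k < i, Nat.nth p k < x}, xs m (i + 1) ≤ y := by
    rintro y ⟨⟨hy0, hyr⟩, hlt⟩
    have hxi : xs m i < y := by
      rcases Nat.eq_zero_or_pos i with rfl | hipos
      · simpa [xs] using hy0
      · obtain ⟨k, rfl⟩ : ∃ k, i = k + 1 := ⟨i - 1, by omega⟩
        have := hlt k (by omega)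
        rw [IH k (by omega) (by omega)] at this
        exact this
    by_cases hyn : y ≤ xs m n
    · obtain ⟨k', hk'0, rfl⟩ := (hpatt y hy0 hyn).1 hyr
      have : i < k' := (xs_strictMono m).lt_iff_lt.1 hxi
      exact (xs_strictMono m).monotone (by omega)
    · have : xs m (i + 1) ≤ xs m n := (xs_strictMono m).monotone (by omega)
      omega
  exact le_antisymm (Nat.sInf_le hmem) (hlb _ (Nat.sInf_mem (Set.nonempty_of_mem hmem)))

theorem patt_of_nth (edge : ℕ → ℕ → Ω → Bool) (ω : Ω) (m : ℕ → ℕ) (n : ℕ)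
    (hinf : {j : ℕ | 0 < j ∧ ReachableI edge ω j}.Infinite)
    (h : ∀ i < n, Nat.nth (fun j => 0 < j ∧ ReachableI edge ω j) i = xs m (i + 1)) :
    patt edge m (xs m n) ω := by
  set p : ℕ → Prop := fun j => 0 < j ∧ ReachableI edge ω j with hp
  have hinf' : (setOf p).Infinite := hinf
  intro j hj0 hjn
  rcases Nat.eq_zero_or_pos n with rfl | hnpos
  · simp only [xs] at hjn; omega
  obtain ⟨n', rfl⟩ : ∃ n', n = n' + 1 := ⟨n - 1, by omega⟩
  constructor
  · intro hreach
    have hpj : p j := ⟨hj0, hreach⟩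
    have : j ∈ Set.range (Nat.nth p) := by
      rw [Nat.range_nth_of_infinite hinf']
      exact hpj
    obtain ⟨t, ht⟩ := this
    have hxn : Nat.nth p n' = xs m (n' + 1) := h n' (by omega)
    have htle : t ≤ n' := by
      rw [← Nat.nth_le_nth hinf', ht, hxn]
      exact hjn
    rw [← ht, h t (by omega)]
    exact ⟨t + 1, Nat.succ_pos t, rfl⟩
  · rintro ⟨k, hk0, rfl⟩
    have hkn : k ≤ n' + 1 := (xs_strictMono m).le_iff_le.1 hjn
    obtain ⟨k', rfl⟩ : ∃ k', k = k' + 1 := ⟨k - 1, by omega⟩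
    have := h k' (by omega)
    have hmem : p (Nat.nth p k') := Nat.nth_mem_of_infinite hinf' k'
    rw [this] at hmem
    exact hmem.2

theorem D_iff_nth (edge : ℕ → ℕ → Ω → Bool) (ω : Ω) (m : ℕ → ℕ) (n : ℕ)
    (hinf : {j : ℕ | 0 < j ∧ ReachableI edge ω j}.Infinite) :
    (∀ i < n, Xr edge ω (i + 1) - Xr edge ω i = m i + 1) ↔
      (∀ i < n, Nat.nth (fun j => 0 < j ∧ ReachableI edge ω j) i = xs m (i + 1)) := by
  set p : ℕ → Prop := fun j => 0 < j ∧ ReachableI edge ω j with hp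
  have hinf' : (setOf p).Infinite := hinf
  have hX0 : Xr edge ω 0 = 1 := rfl
  have hXs : ∀ i, Xr edge ω (i + 1) = Nat.nth p i + 1 := fun i => rfl
  constructor
  · intro h i hi
    induction i using Nat.strong_induction_on with
    | _ i IH =>
    have hD := h i hi
    rcases Nat.eq_zero_or_pos i with rfl | hipos
    · rw [hXs, hX0] at hD
      simp only [xs]
      omega
    · obtain ⟨k, rfl⟩ : ∃ k, i = k + 1 := ⟨i - 1, by omega⟩
      rw [hXs, hXs] at hD
      have hIH := IH k (by omega) (by omega)
      have hlt : Nat.nth p k < Nat.nth p (k + 1) := (Nat.nth_lt_nth hinf').2 (by omega)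
      have : xs m (k + 1 + 1) = xs m (k + 1) + m (k + 1) + 1 := rfl
      omega
  · intro h i hi
    rcases Nat.eq_zero_or_pos i with rfl | hipos
    · rw [hXs, hX0, h 0 hi]
      simp only [xs]
      omega
    · obtain ⟨k, rfl⟩ : ∃ k, i = k + 1 := ⟨i - 1, by omega⟩
      rw [hXs, hXs, h (k + 1) hi, h k (by omega)]
      have : xs m (k + 1 + 1) = xs m (k + 1) + m (k + 1) + 1 := rfl
      omega

theorem D_pos (edge : ℕ → ℕ → Ω → Bool) (ω : Ω)
    (hinf : {j : ℕ | 0 < j ∧ ReachableI edge ω j}.Infinite) (i : ℕ) :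
    1 ≤ Xr edge ω (i + 1) - Xr edge ω i := by
  set p : ℕ → Prop := fun j => 0 < j ∧ ReachableI edge ω j with hp
  have hinf' : (setOf p).Infinite := hinf
  rcases Nat.eq_zero_or_pos i with rfl | hipos
  · have : p (Nat.nth p 0) := Nat.nth_mem_of_infinite hinf' 0
    have hX1 : Xr edge ω (0 + 1) = Nat.nth p 0 + 1 := rfl
    have hX0 : Xr edge ω 0 = 1 := rfl
    omega
  · obtain ⟨k, rfl⟩ : ∃ k, i = k + 1 := ⟨i - 1, by omega⟩
    have hlt : Nat.nth p k < Nat.nth p (k + 1) := (Nat.nth_lt_nth hinf').2 (by omega)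
    have h1 : Xr edge ω (k + 1 + 1) = Nat.nth p (k + 1) + 1 := rfl
    have h2 : Xr edge ω (k + 1) = Nat.nth p k + 1 := rfl
    omega


/-! ### Measure-theoretic lemmas -/

section Measure

variable [MeasurableSpace Ω] (μ : Measure Ω) (edge : ℕ → ℕ → Ω → Bool) (p : ℝ)

/-- The failure probability as an extended nonneg real. -/
noncomputable def qE (p : ℝ) : ℝ≥0∞ := ENNReal.ofReal (1 - p)

theorem meas_reach (hG : IsInfOrderedRandomGraph μ edge p) (j : ℕ) :
    MeasurableSet {ω | ReachableI edge ω j} := by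
  induction j using Nat.strong_induction_on with
  | _ j IH =>
  rcases Nat.eq_zero_or_pos j with rfl | hj
  · have : {ω | ReachableI edge ω 0} = Set.univ :=
      Set.eq_univ_of_forall (fun ω => reach_zero edge ω)
    rw [this]; exact MeasurableSet.univ
  · have : {ω | ReachableI edge ω j} =
        ⋃ (a : ℕ) (_ : a < j), ({ω | ReachableI edge ω a} ∩ (edge a j) ⁻¹' {true}) := by
      ext ω
      simp only [Set.mem_setOf_eq, Set.mem_iUnion, Set.mem_inter_iff, Set.mem_preimage,
        Set.mem_singleton_iff]
      rw [reach_iff]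
      constructor
      · rintro (rfl | ⟨a, h1, h2, h3⟩)
        · omega
        · exact ⟨a, h1, h2, h3⟩
      · rintro ⟨a, h1, h2, h3⟩
        exact Or.inr ⟨a, h1, h2, h3⟩
    rw [this]
    exact MeasurableSet.iUnion fun a => MeasurableSet.iUnion fun ha =>
      (IH a ha).inter (hG.meas a j (measurableSet_singleton true))

theorem edge_false_prob (hG : IsInfOrderedRandomGraph μ edge p) (hp0 : 0 ≤ p) (hp1 : p ≤ 1)
    {a b : ℕ} (hab : a < b) :
    μ {ω | edge a b ω = false} = qE p := by
  haveI := hG.isProb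
  have hc : {ω | edge a b ω = false} = {ω | edge a b ω = true}ᶜ := by
    ext ω; simp
  have hm : MeasurableSet {ω | edge a b ω = true} := hG.meas a b (measurableSet_singleton true)
  rw [hc, prob_compl_eq_one_sub hm, hG.marginal a b hab,
    qE, ENNReal.ofReal_sub _ hp0, ENNReal.ofReal_one]

/-- Probability that a finite set of edges are all absent. -/
theorem prod_edges (hG : IsInfOrderedRandomGraph μ edge p) (hp0 : 0 ≤ p) (hp1 : p ≤ 1)
    (S : Finset {q : ℕ × ℕ // q.1 < q.2}) :
    μ (⋂ e ∈ S, {ω | edge e.1.1 e.1.2 ω = false}) = qE p ^ S.card := by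
  have h := hG.indep.measure_inter_preimage_eq_mul (S := S)
    (sets := fun _ => {false}) (fun i _ => measurableSet_singleton false)
  have heq : (⋂ e ∈ S, (fun ω => edge e.1.1 e.1.2 ω) ⁻¹' {false}) =
      ⋂ e ∈ S, {ω | edge e.1.1 e.1.2 ω = false} := by
    ext ω; simp
  rw [heq] at h
  rw [h]
  have : ∀ e ∈ S, μ ((fun ω => edge e.1.1 e.1.2 ω) ⁻¹' {false}) = qE p := by
    intro e _
    have : (fun ω => edge e.1.1 e.1.2 ω) ⁻¹' {false} = {ω | edge e.1.1 e.1.2 ω = false} := by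
      ext ω; simp
    rw [this]
    exact edge_false_prob μ edge p hG hp0 hp1 e.2
  rw [Finset.prod_congr rfl this, Finset.prod_const]

/-- The edges of column `j` relevant to the pattern. -/
noncomputable def colF (m : ℕ → ℕ) (j : ℕ) : Finset {q : ℕ × ℕ // q.1 < q.2} :=
  (TX m j).attach.image (fun a => ⟨(a.1, j), TX_lt m j a.1 a.2⟩)

theorem mem_colF (m : ℕ → ℕ) (j : ℕ) (e : {q : ℕ × ℕ // q.1 < q.2}) :
    e ∈ colF m j ↔ e.1.2 = j ∧ e.1.1 ∈ TX m j := by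
  simp only [colF, Finset.mem_image, Finset.mem_attach, true_and]
  constructor
  · rintro ⟨a, rfl⟩
    exact ⟨rfl, a.2⟩
  · rintro ⟨h2, h1⟩
    refine ⟨⟨e.1.1, h1⟩, ?_⟩
    apply Subtype.ext
    exact Prod.ext rfl h2.symm

theorem colF_card (m : ℕ → ℕ) (j : ℕ) : (colF m j).card = (TX m j).card := by
  rw [colF, Finset.card_image_of_injective, Finset.card_attach]
  intro a b hab
  apply Subtype.ext
  exact congrArg (fun e => e.1.1) hab

/-- The column event. -/
def ColE (m : ℕ → ℕ) (j : ℕ) : Set Ω := {ω | colC edge m j ω}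

theorem colE_eq (m : ℕ → ℕ) (j : ℕ) :
    ColE edge m j = if cX m j then (⋂ a ∈ TX m j, {ω | edge a j ω = false})ᶜ
      else (⋂ a ∈ TX m j, {ω | edge a j ω = false}) := by
  by_cases hc : cX m j
  · rw [if_pos hc]
    ext ω
    have hcol : colC edge m j ω ↔ (∃ a ∈ TX m j, edge a j ω = true) := by
      simp [colC, hc]
    simp only [ColE, Set.mem_setOf_eq, hcol, Set.mem_compl_iff, Set.mem_iInter]
    constructor
    · rintro ⟨a, ha, he⟩ hall
      have := hall a ha
      rw [this] at he
      exact Bool.false_ne_true he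
    · intro h
      by_contra h2
      push_neg at h2
      exact h (fun a ha => Bool.eq_false_iff.2 (h2 a ha))
  · rw [if_neg hc]
    ext ω
    have hcol : colC edge m j ω ↔ ¬(∃ a ∈ TX m j, edge a j ω = true) := by
      simp [colC, hc]
    simp only [ColE, Set.mem_setOf_eq, hcol, Set.mem_iInter]
    constructor
    · intro h a ha
      exact Bool.eq_false_iff.2 (fun he => h ⟨a, ha, he⟩)
    · rintro h ⟨a, ha, he⟩
      rw [h a ha] at he
      exact Bool.false_ne_true he

theorem colE_biInter_eq (m : ℕ → ℕ) (j : ℕ) :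
    (⋂ e ∈ colF m j, {ω : Ω | edge e.1.1 e.1.2 ω = false}) =
      ⋂ a ∈ TX m j, {ω | edge a j ω = false} := by
  ext ω
  simp only [Set.mem_iInter, Set.mem_setOf_eq]
  constructor
  · intro h a ha
    exact h ⟨(a, j), TX_lt m j a ha⟩ ((mem_colF m j _).2 ⟨rfl, ha⟩)
  · intro h e he
    obtain ⟨h2, h1⟩ := (mem_colF m j e).1 he
    have := h e.1.1 h1
    rw [h2]
    exact this

theorem colE_measurable (hG : IsInfOrderedRandomGraph μ edge p) (m : ℕ → ℕ) (j : ℕ) :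
    MeasurableSet (ColE edge m j) := by
  have hN : MeasurableSet (⋂ a ∈ TX m j, {ω : Ω | edge a j ω = false}) := by
    refine MeasurableSet.biInter (TX m j).countable_toSet (fun a _ => ?_)
    exact hG.meas a j (measurableSet_singleton false)
  rw [colE_eq]
  split <;> [exact hN.compl; exact hN]

theorem colE_measure (hG : IsInfOrderedRandomGraph μ edge p) (hp0 : 0 ≤ p) (hp1 : p ≤ 1)
    (m : ℕ → ℕ) (j : ℕ) :
    μ (ColE edge m j) = if cX m j then 1 - qE p ^ (TX m j).card
      else qE p ^ (TX m j).card := by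
  haveI := hG.isProb
  have hN : μ (⋂ a ∈ TX m j, {ω : Ω | edge a j ω = false}) = qE p ^ (TX m j).card := by
    rw [← colE_biInter_eq edge m j, prod_edges μ edge p hG hp0 hp1, colF_card]
  have hNmeas : MeasurableSet (⋂ a ∈ TX m j, {ω : Ω | edge a j ω = false}) := by
    refine MeasurableSet.biInter (TX m j).countable_toSet (fun a _ => ?_)
    exact hG.meas a j (measurableSet_singleton false)
  rw [colE_eq]
  by_cases hc : cX m j
  · rw [if_pos hc, if_pos hc, prob_compl_eq_one_sub hNmeas, hN]
  · rw [if_neg hc, if_neg hc, hN]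


theorem col_prod (hG : IsInfOrderedRandomGraph μ edge p) (m : ℕ → ℕ) (Js : Finset ℕ) :
    μ (⋂ j ∈ Js, ColE edge m j) = ∏ j ∈ Js, μ (ColE edge m j) := by
  classical
  induction Js using Finset.induction_on with
  | empty =>
    haveI := hG.isProb
    simp
  | @insert j Js hj ih =>
    set S : Finset {q : ℕ × ℕ // q.1 < q.2} := colF m j with hS
    set U : Finset {q : ℕ × ℕ // q.1 < q.2} := Js.biUnion (colF m) with hU
    have hdisj : Disjoint S U := by
      rw [Finset.disjoint_left]
      intro e heS heU
      obtain ⟨h2, _⟩ := (mem_colF m j e).1 heS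
      obtain ⟨j', hj', hej'⟩ := Finset.mem_biUnion.1 heU
      obtain ⟨h2', _⟩ := (mem_colF m j' e).1 hej'
      rw [h2] at h2'
      rw [← h2'] at hj'
      exact hj hj'
    have hIndep := hG.indep.indepFun_finset S U hdisj (fun e => hG.meas e.1.1 e.1.2)
    set BS : Set (↥S → Bool) := {g | (∃ e : ↥S, g e = true) ↔ cX m j} with hBSdef
    set BU : Set (↥U → Bool) :=
      {g | ∀ j' ∈ Js, ((∃ e : ↥U, (e : {q : ℕ × ℕ // q.1 < q.2}).1.2 = j' ∧ g e = true)
        ↔ cX m j')} with hBUdef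
    have hBS : MeasurableSet BS := BS.to_countable.measurableSet
    have hBU : MeasurableSet BU := BU.to_countable.measurableSet
    have hA : (fun a (i : ↥S) => edge (i : {q : ℕ × ℕ // q.1 < q.2}).1.1
        (i : {q : ℕ × ℕ // q.1 < q.2}).1.2 a) ⁻¹' BS = ColE edge m j := by
      ext ω
      simp only [Set.mem_preimage, hBSdef, Set.mem_setOf_eq, ColE, colC]
      have hex : (∃ e : ↥S, edge (e : {q : ℕ × ℕ // q.1 < q.2}).1.1
          (e : {q : ℕ × ℕ // q.1 < q.2}).1.2 ω = true) ↔
          ∃ a ∈ TX m j, edge a j ω = true := by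
        constructor
        · rintro ⟨e, he⟩
          obtain ⟨h2, h1⟩ := (mem_colF m j (e : {q : ℕ × ℕ // q.1 < q.2})).1 e.2
          rw [h2] at he
          exact ⟨(e : {q : ℕ × ℕ // q.1 < q.2}).1.1, h1, he⟩
        · rintro ⟨a, ha, he⟩
          exact ⟨⟨⟨(a, j), TX_lt m j a ha⟩, (mem_colF m j _).2 ⟨rfl, ha⟩⟩, he⟩
      rw [hex]
    have hB : (fun a (i : ↥U) => edge (i : {q : ℕ × ℕ // q.1 < q.2}).1.1
        (i : {q : ℕ × ℕ // q.1 < q.2}).1.2 a) ⁻¹' BU = ⋂ j' ∈ Js, ColE edge m j' := by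
      ext ω
      simp only [Set.mem_preimage, hBUdef, Set.mem_setOf_eq, Set.mem_iInter, ColE, colC]
      have hex : ∀ j' ∈ Js, ((∃ e : ↥U, (e : {q : ℕ × ℕ // q.1 < q.2}).1.2 = j' ∧
          edge (e : {q : ℕ × ℕ // q.1 < q.2}).1.1
            (e : {q : ℕ × ℕ // q.1 < q.2}).1.2 ω = true) ↔
          ∃ a ∈ TX m j', edge a j' ω = true) := by
        intro j' hj'
        constructor
        · rintro ⟨e, hsnd, he⟩
          obtain ⟨j'', hj'', hej''⟩ := Finset.mem_biUnion.1 e.2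
          obtain ⟨h2, h1⟩ := (mem_colF m j'' _).1 hej''
          rw [hsnd] at he
          have hjj : j'' = j' := by rw [← h2, hsnd]
          rw [hjj] at h1
          exact ⟨(e : {q : ℕ × ℕ // q.1 < q.2}).1.1, h1, he⟩
        · rintro ⟨a, ha, he⟩
          refine ⟨⟨⟨(a, j'), TX_lt m j' a ha⟩, ?_⟩, rfl, he⟩
          exact Finset.mem_biUnion.2 ⟨j', hj', (mem_colF m j' _).2 ⟨rfl, ha⟩⟩
      constructor
      · intro h j' hj'
        rw [← hex j' hj']
        exact h j' hj'
      · intro h j' hj'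
        rw [hex j' hj']
        exact h j' hj'
    have hmul := hIndep.measure_inter_preimage_eq_mul BS BU hBS hBU
    rw [hA, hB] at hmul
    rw [Finset.set_biInter_insert, hmul, ih, Finset.prod_insert hj]


theorem rinf_compl_zero (hG : IsInfOrderedRandomGraph μ edge p) (hp0 : 0 < p) (hp1 : p < 1) :
    μ {ω | ¬ {j : ℕ | 0 < j ∧ ReachableI edge ω j}.Infinite} = 0 := by
  classical
  set A : ℕ → Set Ω := fun N => {ω | ∀ j, N < j → edge 0 j ω = false} with hA
  have hAzero : ∀ N, μ (A N) = 0 := by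
    intro N
    have hk : ∀ k : ℕ, μ (A N) ≤ qE p ^ k := by
      intro k
      set S : Finset {q : ℕ × ℕ // q.1 < q.2} :=
        (Finset.Ioc N (N + k)).attach.image
          (fun j => ⟨(0, j.1), lt_of_le_of_lt (Nat.zero_le N) (Finset.mem_Ioc.1 j.2).1⟩) with hSdef
      have hcard : S.card = k := by
        rw [hSdef, Finset.card_image_of_injective, Finset.card_attach, Nat.card_Ioc]
        · omega
        · intro a b hab
          apply Subtype.ext
          exact congrArg (fun e => e.1.2) hab
      have hsub : A N ⊆ ⋂ e ∈ S, {ω | edge e.1.1 e.1.2 ω = false} := by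
        intro ω hω
        simp only [Set.mem_iInter]
        intro e he
        rw [hSdef, Finset.mem_image] at he
        obtain ⟨a, _, rfl⟩ := he
        exact hω a.1 (Finset.mem_Ioc.1 a.2).1
      calc μ (A N) ≤ μ (⋂ e ∈ S, {ω | edge e.1.1 e.1.2 ω = false}) := measure_mono hsub
        _ = qE p ^ S.card := prod_edges μ edge p hG (le_of_lt hp0) (le_of_lt hp1) S
        _ = qE p ^ k := by rw [hcard]
    have htend : Filter.Tendsto (fun k : ℕ => qE p ^ k) Filter.atTop (nhds 0) :=
      ENNReal.tendsto_pow_atTop_nhds_zero_of_lt_one (by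
        rw [qE]
        exact ENNReal.ofReal_lt_one.2 (by linarith))
    exact le_antisymm (ge_of_tendsto htend (Filter.Eventually.of_forall hk)) zero_le
  have hsub : {ω | ¬ {j : ℕ | 0 < j ∧ ReachableI edge ω j}.Infinite} ⊆ ⋃ N, A N := by
    intro ω hω
    have hfin : {j : ℕ | 0 < j ∧ ReachableI edge ω j}.Finite := Set.not_infinite.1 hω
    obtain ⟨N, hN⟩ := hfin.bddAbove
    refine Set.mem_iUnion.2 ⟨N, ?_⟩
    intro j hNj
    by_contra he
    have he' : edge 0 j ω = true := by
      cases h : edge 0 j ω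
      · exact absurd h he
      · rfl
    have hreach : ReachableI edge ω j :=
      Relation.ReflTransGen.single ⟨by omega, he'⟩
    have : j ≤ N := hN ⟨by omega, hreach⟩
    omega
  refine le_antisymm ?_ zero_le
  calc μ {ω | ¬ {j : ℕ | 0 < j ∧ ReachableI edge ω j}.Infinite}
      ≤ μ (⋃ N, A N) := measure_mono hsub
    _ ≤ ∑' N, μ (A N) := measure_iUnion_le A
    _ = 0 := by simp [hAzero]

theorem rinf_one (hG : IsInfOrderedRandomGraph μ edge p) (hp0 : 0 < p) (hp1 : p < 1) :
    μ {ω | {j : ℕ | 0 < j ∧ ReachableI edge ω j}.Infinite} = 1 := by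
  haveI := hG.isProb
  refine le_antisymm prob_le_one ?_
  have h1 : (1 : ℝ≥0∞) = μ Set.univ := (measure_univ).symm
  rw [h1]
  have : (Set.univ : Set Ω) ⊆ {ω | {j : ℕ | 0 < j ∧ ReachableI edge ω j}.Infinite} ∪
      {ω | ¬ {j : ℕ | 0 < j ∧ ReachableI edge ω j}.Infinite} := by
    intro ω _
    by_cases h : {j : ℕ | 0 < j ∧ ReachableI edge ω j}.Infinite
    · exact Or.inl h
    · exact Or.inr h
  calc μ Set.univ ≤ μ ({ω | {j : ℕ | 0 < j ∧ ReachableI edge ω j}.Infinite} ∪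
        {ω | ¬ {j : ℕ | 0 < j ∧ ReachableI edge ω j}.Infinite}) := measure_mono this
    _ ≤ μ {ω | {j : ℕ | 0 < j ∧ ReachableI edge ω j}.Infinite} +
        μ {ω | ¬ {j : ℕ | 0 < j ∧ ReachableI edge ω j}.Infinite} := measure_union_le _ _
    _ = μ {ω | {j : ℕ | 0 < j ∧ ReachableI edge ω j}.Infinite} := by
        rw [rinf_compl_zero μ edge p hG hp0 hp1, add_zero]

theorem measure_inter_rinf (hG : IsInfOrderedRandomGraph μ edge p) (hp0 : 0 < p) (hp1 : p < 1)
    (s : Set Ω) :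
    μ s = μ (s ∩ {ω | {j : ℕ | 0 < j ∧ ReachableI edge ω j}.Infinite}) := by
  set I := {ω : Ω | {j : ℕ | 0 < j ∧ ReachableI edge ω j}.Infinite} with hI
  refine le_antisymm ?_ (measure_mono Set.inter_subset_left)
  have hs : s = (s ∩ I) ∪ (s ∩ Iᶜ) := (Set.inter_union_compl s I).symm
  calc μ s = μ ((s ∩ I) ∪ (s ∩ Iᶜ)) := by rw [← hs]
    _ ≤ μ (s ∩ I) + μ (s ∩ Iᶜ) := measure_union_le _ _
    _ ≤ μ (s ∩ I) + μ Iᶜ := by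
        exact add_le_add_right (measure_mono Set.inter_subset_right) _
    _ = μ (s ∩ I) := by
        have : μ Iᶜ = 0 := by
          have hIc : Iᶜ = {ω : Ω | ¬ {j : ℕ | 0 < j ∧ ReachableI edge ω j}.Infinite} := rfl
          rw [hIc]
          exact rinf_compl_zero μ edge p hG hp0 hp1
        rw [this, add_zero]


theorem meas_nth (hG : IsInfOrderedRandomGraph μ edge p) :
    ∀ i v : ℕ, MeasurableSet {ω | Nat.nth (fun j => 0 < j ∧ ReachableI edge ω j) i = v} := by
  intro i
  induction i using Nat.strong_induction_on with
  | _ i IH =>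
  -- the set `Q x` of candidates
  have hQ : ∀ x : ℕ, MeasurableSet {ω | (0 < x ∧ ReachableI edge ω x) ∧
      ∀ k < i, Nat.nth (fun j => 0 < j ∧ ReachableI edge ω j) k < x} := by
    intro x
    refine MeasurableSet.inter ?_ ?_
    · show MeasurableSet {ω : Ω | 0 < x ∧ ReachableI edge ω x}
      rcases Nat.eq_zero_or_pos x with rfl | hx
      · have : {ω : Ω | 0 < 0 ∧ ReachableI edge ω 0} = ∅ := by
          ext ω; simp
        rw [this]; exact MeasurableSet.empty
      · have : {ω : Ω | 0 < x ∧ ReachableI edge ω x} = {ω | ReachableI edge ω x} := by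
          ext ω; simp [hx]
        rw [this]; exact meas_reach μ edge p hG x
    · show MeasurableSet {ω : Ω | ∀ k < i,
        Nat.nth (fun j => 0 < j ∧ ReachableI edge ω j) k < x}
      have : {ω : Ω | ∀ k < i, Nat.nth (fun j => 0 < j ∧ ReachableI edge ω j) k < x} =
          ⋂ (k : ℕ) (_ : k < i),
            ⋃ (u : ℕ) (_ : u < x),
              {ω | Nat.nth (fun j => 0 < j ∧ ReachableI edge ω j) k = u} := by
        ext ω
        simp only [Set.mem_setOf_eq, Set.mem_iInter, Set.mem_iUnion]
        constructor
        · intro h k hk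
          exact ⟨_, h k hk, rfl⟩
        · intro h k hk
          obtain ⟨u, hu, hnth⟩ := h k hk
          omega
      rw [this]
      exact MeasurableSet.iInter fun k => MeasurableSet.iInter fun hk =>
        MeasurableSet.iUnion fun u => MeasurableSet.iUnion fun hu => IH k hk u
  intro v
  have hsInf : ∀ ω : Ω, Nat.nth (fun j => 0 < j ∧ ReachableI edge ω j) i =
      sInf {x | (0 < x ∧ ReachableI edge ω x) ∧
        ∀ k < i, Nat.nth (fun j => 0 < j ∧ ReachableI edge ω j) k < x} :=
    fun ω => Nat.nth_eq_sInf _ _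
  rcases Nat.eq_zero_or_pos v with rfl | hv
  · have : {ω | Nat.nth (fun j => 0 < j ∧ ReachableI edge ω j) i = 0} =
        ({ω | (0 < 0 ∧ ReachableI edge ω 0) ∧
          ∀ k < i, Nat.nth (fun j => 0 < j ∧ ReachableI edge ω j) k < 0} ∪
         ⋂ (u : ℕ), {ω | (0 < u ∧ ReachableI edge ω u) ∧
          ∀ k < i, Nat.nth (fun j => 0 < j ∧ ReachableI edge ω j) k < u}ᶜ) := by
      ext ω
      simp only [Set.mem_setOf_eq, Set.mem_union, Set.mem_iInter, Set.mem_compl_iff]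
      rw [hsInf ω]
      constructor
      · intro h
        by_cases hne : {x | (0 < x ∧ ReachableI edge ω x) ∧
            ∀ k < i, Nat.nth (fun j => 0 < j ∧ ReachableI edge ω j) k < x}.Nonempty
        · left
          have := Nat.sInf_mem hne
          rw [h] at this
          exact this
        · right
          intro u hu
          exact hne ⟨u, hu⟩
      · rintro (h | h)
        · omega
        · have : {x | (0 < x ∧ ReachableI edge ω x) ∧
              ∀ k < i, Nat.nth (fun j => 0 < j ∧ ReachableI edge ω j) k < x} = ∅ := by
            ext u; simp only [Set.mem_setOf_eq, Set.mem_empty_iff_false, iff_false]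
            exact h u
          rw [this, Nat.sInf_empty]
    rw [this]
    exact (hQ 0).union (MeasurableSet.iInter fun u => (hQ u).compl)
  · have : {ω | Nat.nth (fun j => 0 < j ∧ ReachableI edge ω j) i = v} =
        ({ω | (0 < v ∧ ReachableI edge ω v) ∧
          ∀ k < i, Nat.nth (fun j => 0 < j ∧ ReachableI edge ω j) k < v} ∩
         ⋂ (u : ℕ) (_ : u < v), {ω | (0 < u ∧ ReachableI edge ω u) ∧
          ∀ k < i, Nat.nth (fun j => 0 < j ∧ ReachableI edge ω j) k < u}ᶜ) := by
      ext ω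
      simp only [Set.mem_setOf_eq, Set.mem_inter_iff, Set.mem_iInter, Set.mem_compl_iff]
      rw [hsInf ω]
      set T := {x | (0 < x ∧ ReachableI edge ω x) ∧
        ∀ k < i, Nat.nth (fun j => 0 < j ∧ ReachableI edge ω j) k < x} with hT
      constructor
      · intro h
        have hne : T.Nonempty := by
          by_contra hne
          rw [Set.not_nonempty_iff_eq_empty] at hne
          rw [hne, Nat.sInf_empty] at h
          omega
        have hmem := Nat.sInf_mem hne
        rw [h] at hmem
        refine ⟨hmem, ?_⟩
        intro u hu hmem'
        have := Nat.sInf_le (show u ∈ T from hmem')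
        omega
      · rintro ⟨hmem, hlt⟩
        have h1 : sInf T ≤ v := Nat.sInf_le hmem
        have hne : T.Nonempty := ⟨v, hmem⟩
        have h2 := Nat.sInf_mem hne
        by_contra hne2
        have : sInf T < v := by omega
        exact hlt _ this h2
    rw [this]
    exact (hQ v).inter
      (MeasurableSet.iInter fun u => MeasurableSet.iInter fun hu => (hQ u).compl)

theorem measurable_Xr (hG : IsInfOrderedRandomGraph μ edge p) (i : ℕ) :
    Measurable (fun ω => Xr edge ω i) := by
  cases i with
  | zero => exact measurable_const
  | succ i =>
    have h : Measurable (fun ω => Nat.nth (fun j => 0 < j ∧ ReachableI edge ω j) i) :=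
      measurable_to_countable' (fun v => meas_nth μ edge p hG i v)
    exact h.add_const 1

theorem measurable_D (hG : IsInfOrderedRandomGraph μ edge p) (i : ℕ) :
    Measurable (fun ω => Xr edge ω (i + 1) - Xr edge ω i) :=
  (measurable_Xr μ edge p hG (i + 1)).sub (measurable_Xr μ edge p hG i)


/-- The geometric weight: `gE p k v = (1 - q^k) * q^(k*v)` where `q = 1-p`;
`v` is the increment minus one. -/
noncomputable def gE (p : ℝ) (k v : ℕ) : ℝ≥0∞ := (1 - qE p ^ k) * qE p ^ (k * v)

theorem prod_col_eval (hG : IsInfOrderedRandomGraph μ edge p) (hp0 : 0 < p) (hp1 : p < 1)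
    (m : ℕ → ℕ) (n : ℕ) :
    ∏ j ∈ Finset.Ioc 0 (xs m n), μ (ColE edge m j) =
      ∏ i ∈ Finset.range n, gE p (i + 1) (m i) := by
  induction n with
  | zero => simp [xs]
  | succ n ih =>
    have hmono : xs m n ≤ xs m (n + 1) := le_of_lt (xs_strictMono m (by omega))
    rw [← Finset.Ioc_union_Ioc_eq_Ioc (Nat.zero_le (xs m n)) hmono,
      Finset.prod_union (Finset.disjoint_left.2 (fun {j} hj1 hj2 => by
        simp only [Finset.mem_Ioc] at hj1 hj2; omega)),
      ih, Finset.prod_range_succ]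
    congr 1
    have hcol : ∀ j ∈ Finset.Ioc (xs m n) (xs m (n + 1)), μ (ColE edge m j) =
        if j = xs m (n + 1) then 1 - qE p ^ (n + 1) else qE p ^ (n + 1) := by
      intro j hj
      obtain ⟨h1, h2⟩ := Finset.mem_Ioc.1 hj
      rw [colE_measure μ edge p hG hp0.le hp1.le m j, TX_card m h1 h2]
      by_cases hc : j = xs m (n + 1)
      · rw [if_pos ((cX_iff m h1 h2).2 hc), if_pos hc]
      · rw [if_neg (fun h => hc ((cX_iff m h1 h2).1 h)), if_neg hc]
    rw [Finset.prod_congr rfl hcol]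
    have htop : xs m (n + 1) ∈ Finset.Ioc (xs m n) (xs m (n + 1)) :=
      Finset.mem_Ioc.2 ⟨xs_strictMono m (by omega), le_rfl⟩
    rw [← Finset.mul_prod_erase _ _ htop, if_pos rfl]
    have herase : ∀ j ∈ (Finset.Ioc (xs m n) (xs m (n + 1))).erase (xs m (n + 1)),
        (if j = xs m (n + 1) then 1 - qE p ^ (n + 1) else qE p ^ (n + 1)) =
          qE p ^ (n + 1) := by
      intro j hj
      rw [if_neg (Finset.ne_of_mem_erase hj)]
    rw [Finset.prod_congr rfl herase, Finset.prod_const]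
    have hcard : ((Finset.Ioc (xs m n) (xs m (n + 1))).erase (xs m (n + 1))).card = m n := by
      rw [Finset.card_erase_of_mem htop, Nat.card_Ioc]
      have : xs m (n + 1) = xs m n + m n + 1 := rfl
      omega
    rw [hcard, gE, ← pow_mul]

theorem joint (hG : IsInfOrderedRandomGraph μ edge p) (hp0 : 0 < p) (hp1 : p < 1)
    (n : ℕ) (m : ℕ → ℕ) :
    μ {ω | ∀ i < n, Xr edge ω (i + 1) - Xr edge ω i = m i + 1} =
      ∏ i ∈ Finset.range n, gE p (i + 1) (m i) := by
  rw [measure_inter_rinf μ edge p hG hp0 hp1]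
  have hEI : {ω | ∀ i < n, Xr edge ω (i + 1) - Xr edge ω i = m i + 1} ∩
      {ω | {j : ℕ | 0 < j ∧ ReachableI edge ω j}.Infinite} =
      {ω | patt edge m (xs m n) ω} ∩
      {ω | {j : ℕ | 0 < j ∧ ReachableI edge ω j}.Infinite} := by
    ext ω
    simp only [Set.mem_inter_iff, Set.mem_setOf_eq]
    constructor
    · rintro ⟨h, hI⟩
      exact ⟨patt_of_nth edge ω m n hI ((D_iff_nth edge ω m n hI).1 h), hI⟩
    · rintro ⟨h, hI⟩
      exact ⟨(D_iff_nth edge ω m n hI).2 (nth_eq_of_patt edge ω m n h), hI⟩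
  rw [hEI, ← measure_inter_rinf μ edge p hG hp0 hp1]
  have hPatt : {ω : Ω | patt edge m (xs m n) ω} = ⋂ j ∈ Finset.Ioc 0 (xs m n), ColE edge m j := by
    ext ω
    simp only [Set.mem_setOf_eq, Set.mem_iInter, Finset.mem_Ioc, ColE]
    rw [patt_iff_col]
    constructor
    · intro h j hj
      exact h j hj.1 hj.2
    · intro h j h1 h2
      exact h j ⟨h1, h2⟩
  rw [hPatt, col_prod μ edge p hG m, prod_col_eval μ edge p hG hp0 hp1 m n]


theorem geo_sum (hp0 : 0 < p) (hp1 : p < 1) (k : ℕ) :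
    ∑' v : ℕ, gE p (k + 1) v = 1 := by
  have hq : qE p ^ (k + 1) < 1 := by
    rw [qE, ← ENNReal.ofReal_pow (by linarith)]
    refine ENNReal.ofReal_lt_one.2 ?_
    exact pow_lt_one₀ (by linarith) (by linarith) (Nat.succ_ne_zero k)
  have hcong : ∀ v, gE p (k + 1) v = (1 - qE p ^ (k + 1)) * (qE p ^ (k + 1)) ^ v := by
    intro v
    rw [gE, pow_mul]
  rw [tsum_congr hcong, ENNReal.tsum_mul_left, ENNReal.tsum_geometric]
  exact ENNReal.mul_inv_cancel (tsub_pos_of_lt hq).ne'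
    (tsub_le_self.trans_lt ENNReal.one_lt_top).ne

theorem meas_rinf (hG : IsInfOrderedRandomGraph μ edge p) :
    MeasurableSet {ω : Ω | {j : ℕ | 0 < j ∧ ReachableI edge ω j}.Infinite} := by
  have hset : {ω : Ω | {j : ℕ | 0 < j ∧ ReachableI edge ω j}.Infinite} =
      ⋂ N, ⋃ j, ⋃ (_ : N < j), {ω | ReachableI edge ω j} := by
    ext ω
    simp only [Set.mem_setOf_eq, Set.mem_iInter, Set.mem_iUnion]
    rw [infinite_iff]
    constructor
    · intro h N
      obtain ⟨j, hNj, hj⟩ := h N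
      exact ⟨j, hNj, hj.2⟩
    · intro h N
      obtain ⟨j, hNj, hj⟩ := h N
      exact ⟨j, hNj, ⟨by omega, hj⟩⟩
  rw [hset]
  exact MeasurableSet.iInter fun N => MeasurableSet.iUnion fun j =>
    MeasurableSet.iUnion fun _ => meas_reach μ edge p hG j

theorem meas_D_eq (hG : IsInfOrderedRandomGraph μ edge p) (i v : ℕ) :
    MeasurableSet {ω | Xr edge ω (i + 1) - Xr edge ω i = v} := by
  have := measurable_D μ edge p hG i (measurableSet_singleton v)
  exact this

theorem partition_D (hG : IsInfOrderedRandomGraph μ edge p) (hp0 : 0 < p) (hp1 : p < 1)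
    (s : Set Ω) (hs : MeasurableSet s) (i : ℕ) :
    μ s = ∑' v : ℕ, μ (s ∩ {ω | Xr edge ω (i + 1) - Xr edge ω i = v + 1}) := by
  rw [measure_inter_rinf μ edge p hG hp0 hp1 s]
  have hdecomp : s ∩ {ω | {j : ℕ | 0 < j ∧ ReachableI edge ω j}.Infinite} =
      ⋃ v : ℕ, (s ∩ {ω | Xr edge ω (i + 1) - Xr edge ω i = v + 1} ∩
        {ω | {j : ℕ | 0 < j ∧ ReachableI edge ω j}.Infinite}) := by
    ext ω
    simp only [Set.mem_inter_iff, Set.mem_setOf_eq, Set.mem_iUnion]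
    constructor
    · rintro ⟨hws, hwI⟩
      have hpos := D_pos edge ω hwI i
      exact ⟨Xr edge ω (i + 1) - Xr edge ω i - 1, ⟨hws, by omega⟩, hwI⟩
    · rintro ⟨v, ⟨hws, _⟩, hwI⟩
      exact ⟨hws, hwI⟩
  rw [hdecomp, measure_iUnion]
  · exact tsum_congr fun v => (measure_inter_rinf μ edge p hG hp0 hp1 _).symm
  · intro v w hvw
    refine Set.disjoint_left.2 (fun {ω} hv hw => ?_)
    obtain ⟨⟨_, hv2⟩, _⟩ := hv
    obtain ⟨⟨_, hw2⟩, _⟩ := hw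
    simp only [Set.mem_setOf_eq] at hv2 hw2
    omega
  · intro v
    exact (hs.inter (meas_D_eq μ edge p hG i (v + 1))).inter (meas_rinf μ edge p hG)

theorem margin_aux (hG : IsInfOrderedRandomGraph μ edge p) (hp0 : 0 < p) (hp1 : p < 1)
    (h : ℕ) : ∀ (S : Finset ℕ) (m : ℕ → ℕ),
    ((Finset.range (S.sup id)).filter (fun j => j ∉ S)).card = h →
    μ {ω | ∀ i ∈ S, Xr edge ω (i + 1) - Xr edge ω i = m i + 1} =
      ∏ i ∈ S, gE p (i + 1) (m i) := by
  haveI := hG.isProb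
  induction h with
  | zero =>
    intro S m hcard
    rcases Finset.eq_empty_or_nonempty S with rfl | hne
    · have : {ω : Ω | ∀ i ∈ (∅ : Finset ℕ), Xr edge ω (i + 1) - Xr edge ω i = m i + 1} =
          Set.univ := by
        ext ω; simp
      rw [this, measure_univ, Finset.prod_empty]
    · have hfe : (Finset.range (S.sup id)).filter (fun j => j ∉ S) = ∅ :=
        Finset.card_eq_zero.1 hcard
      obtain ⟨b, hb, hsupb⟩ := Finset.exists_mem_eq_sup S hne id
      have hMS : S.sup id ∈ S := by rw [hsupb]; exact hb
      have hSeq : S = Finset.range (S.sup id + 1) := by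
        ext i
        simp only [Finset.mem_range]
        constructor
        · intro hi
          have := Finset.le_sup (f := id) hi
          simpa using Nat.lt_succ_of_le this
        · intro hi
          rcases Nat.lt_succ_iff_lt_or_eq.1 hi with hlt | heq
          · by_contra hiS
            have hmem : i ∈ (Finset.range (S.sup id)).filter (fun j => j ∉ S) :=
              Finset.mem_filter.2 ⟨Finset.mem_range.2 hlt, hiS⟩
            rw [hfe] at hmem
            exact absurd hmem (Finset.notMem_empty i)
          · rw [heq]; exact hMS
      have hev : {ω : Ω | ∀ i ∈ S, Xr edge ω (i + 1) - Xr edge ω i = m i + 1} =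
          {ω | ∀ i < S.sup id + 1, Xr edge ω (i + 1) - Xr edge ω i = m i + 1} := by
        ext ω
        simp only [Set.mem_setOf_eq]
        constructor
        · intro hh i hi
          exact hh i (by rw [hSeq]; exact Finset.mem_range.2 hi)
        · intro hh i hi
          refine hh i (Finset.mem_range.1 ?_)
          rw [← hSeq]
          exact hi
      rw [hev, joint μ edge p hG hp0 hp1 (S.sup id + 1) m]
      conv_rhs => rw [hSeq]
  | succ h ih =>
    intro S m hcard
    have hfne : ((Finset.range (S.sup id)).filter (fun j => j ∉ S)).Nonempty :=
      Finset.card_pos.1 (by omega)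
    obtain ⟨j, hjmem⟩ := hfne
    have hjr : j ∈ Finset.range (S.sup id) := (Finset.mem_filter.1 hjmem).1
    have hjS : j ∉ S := (Finset.mem_filter.1 hjmem).2
    have hsup : (insert j S).sup id = S.sup id := by
      rw [Finset.sup_insert]
      exact sup_eq_right.2 (le_of_lt (Finset.mem_range.1 hjr))
    have hcard' : ((Finset.range ((insert j S).sup id)).filter
        (fun i => i ∉ insert j S)).card = h := by
      rw [hsup]
      have hfe : (Finset.range (S.sup id)).filter (fun i => i ∉ insert j S) =
          ((Finset.range (S.sup id)).filter (fun i => i ∉ S)).erase j := by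
        ext i
        simp only [Finset.mem_filter, Finset.mem_erase, Finset.mem_insert]
        tauto
      rw [hfe, Finset.card_erase_of_mem hjmem, hcard]
      omega
    have hmeasS : MeasurableSet
        {ω | ∀ i ∈ S, Xr edge ω (i + 1) - Xr edge ω i = m i + 1} := by
      have hre : {ω : Ω | ∀ i ∈ S, Xr edge ω (i + 1) - Xr edge ω i = m i + 1} =
          ⋂ i ∈ S, {ω | Xr edge ω (i + 1) - Xr edge ω i = m i + 1} := by
        ext ω; simp
      rw [hre]
      exact MeasurableSet.biInter S.countable_toSet
        (fun i _ => meas_D_eq μ edge p hG i (m i + 1))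
    rw [partition_D μ edge p hG hp0 hp1 _ hmeasS j]
    have hstep : ∀ v : ℕ, {ω | ∀ i ∈ S, Xr edge ω (i + 1) - Xr edge ω i = m i + 1} ∩
        {ω | Xr edge ω (j + 1) - Xr edge ω j = v + 1} =
        {ω | ∀ i ∈ insert j S,
          Xr edge ω (i + 1) - Xr edge ω i = Function.update m j v i + 1} := by
      intro v
      ext ω
      simp only [Set.mem_inter_iff, Set.mem_setOf_eq, Finset.mem_insert]
      constructor
      · rintro ⟨h1, h2⟩ i hi
        rcases hi with rfl | hiS
        · rw [Function.update_self]; exact h2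
        · rw [Function.update_of_ne (show i ≠ j from fun he => hjS (he ▸ hiS))]
          exact h1 i hiS
      · intro h1
        constructor
        · intro i hiS
          have := h1 i (Or.inr hiS)
          rwa [Function.update_of_ne (show i ≠ j from fun he => hjS (he ▸ hiS))] at this
        · have := h1 j (Or.inl rfl)
          rwa [Function.update_self] at this
    calc ∑' v : ℕ, μ ({ω | ∀ i ∈ S, Xr edge ω (i + 1) - Xr edge ω i = m i + 1} ∩
          {ω | Xr edge ω (j + 1) - Xr edge ω j = v + 1})
        = ∑' v : ℕ, μ {ω | ∀ i ∈ insert j S,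
            Xr edge ω (i + 1) - Xr edge ω i = Function.update m j v i + 1} :=
          tsum_congr fun v => by rw [hstep v]
      _ = ∑' v : ℕ, ∏ i ∈ insert j S, gE p (i + 1) (Function.update m j v i) :=
          tsum_congr fun v => ih (insert j S) (Function.update m j v) hcard'
      _ = ∑' v : ℕ, gE p (j + 1) v * ∏ i ∈ S, gE p (i + 1) (m i) := by
          refine tsum_congr fun v => ?_
          rw [Finset.prod_insert hjS, Function.update_self]
          congr 1
          exact Finset.prod_congr rfl
            (fun i hiS => by rw [Function.update_of_ne (show i ≠ j from fun he => hjS (he ▸ hiS))])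
      _ = (∑' v : ℕ, gE p (j + 1) v) * ∏ i ∈ S, gE p (i + 1) (m i) :=
          ENNReal.tsum_mul_right
      _ = ∏ i ∈ S, gE p (i + 1) (m i) := by rw [geo_sum p hp0 hp1 j, one_mul]


theorem margin (hG : IsInfOrderedRandomGraph μ edge p) (hp0 : 0 < p) (hp1 : p < 1)
    (S : Finset ℕ) (m : ℕ → ℕ) :
    μ {ω | ∀ i ∈ S, Xr edge ω (i + 1) - Xr edge ω i = m i + 1} =
      ∏ i ∈ S, gE p (i + 1) (m i) :=
  margin_aux μ edge p hG hp0 hp1 _ S m rfl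

theorem single_marginal (hG : IsInfOrderedRandomGraph μ edge p) (hp0 : 0 < p) (hp1 : p < 1)
    (i v : ℕ) :
    μ {ω | Xr edge ω (i + 1) - Xr edge ω i = v + 1} = gE p (i + 1) v := by
  have h := margin μ edge p hG hp0 hp1 {i} (fun _ => v)
  have hev : {ω : Ω | ∀ i' ∈ ({i} : Finset ℕ), Xr edge ω (i' + 1) - Xr edge ω i' =
      (fun _ => v) i' + 1} = {ω | Xr edge ω (i + 1) - Xr edge ω i = v + 1} := by
    ext ω; simp
  rw [hev] at h
  rw [h, Finset.prod_singleton]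

theorem D_zero_null (hG : IsInfOrderedRandomGraph μ edge p) (hp0 : 0 < p) (hp1 : p < 1)
    (i : ℕ) :
    μ {ω | Xr edge ω (i + 1) - Xr edge ω i = 0} = 0 := by
  rw [measure_inter_rinf μ edge p hG hp0 hp1]
  have : {ω | Xr edge ω (i + 1) - Xr edge ω i = 0} ∩
      {ω | {j : ℕ | 0 < j ∧ ReachableI edge ω j}.Infinite} = ∅ := by
    ext ω
    simp only [Set.mem_inter_iff, Set.mem_setOf_eq, Set.mem_empty_iff_false, iff_false,
      not_and]
    intro h hI
    have := D_pos edge ω hI i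
    omega
  rw [this, measure_empty]

theorem nat_top_eq :
    (⊤ : MeasurableSpace ℕ) =
      MeasurableSpace.generateFrom (Set.range (fun v : ℕ => ({v} : Set ℕ))) := by
  refine le_antisymm ?_ le_top
  intro s _
  have hs : s = ⋃ v ∈ s, {v} := (Set.biUnion_of_singleton s).symm
  rw [hs]
  exact MeasurableSet.biUnion s.to_countable
    (fun v _ => MeasurableSpace.measurableSet_generateFrom ⟨v, rfl⟩)

theorem indep_D (hG : IsInfOrderedRandomGraph μ edge p) (hp0 : 0 < p) (hp1 : p < 1) :
    iIndepFun
      (fun (i : ℕ) ω => Xr edge ω (i + 1) - Xr edge ω i) μ := by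
  haveI := hG.isProb
  show iIndep (fun i => MeasurableSpace.comap
    (fun ω => Xr edge ω (i + 1) - Xr edge ω i) inferInstance) μ
  refine iIndepSets.iIndep
    (fun i => (measurable_D μ edge p hG i).comap_le)
    (fun i => {s | ∃ v : ℕ, s = (fun ω => Xr edge ω (i + 1) - Xr edge ω i) ⁻¹' {v}})
    (fun i => ?_) (fun i => ?_) ?_
  · -- pi-system
    rintro s ⟨v, rfl⟩ t ⟨u, rfl⟩ hne
    obtain ⟨ω, hω⟩ := hne
    simp only [Set.mem_inter_iff, Set.mem_preimage, Set.mem_singleton_iff] at hω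
    have huv : u = v := by omega
    rw [huv]
    exact ⟨v, Set.inter_self _⟩
  · -- generateFrom
    rw [show (inferInstance : MeasurableSpace ℕ) = ⊤ from rfl, nat_top_eq,
      MeasurableSpace.comap_generateFrom]
    congr 1
    ext s
    simp only [Set.mem_image, Set.mem_range, Set.mem_setOf_eq]
    constructor
    · rintro ⟨t, ⟨v, rfl⟩, rfl⟩
      exact ⟨v, rfl⟩
    · rintro ⟨v, rfl⟩
      exact ⟨{v}, ⟨v, rfl⟩, rfl⟩
  · -- independence of the pi-systems
    rw [iIndepSets_iff]
    intro S f hf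
    classical
    have hch : ∀ i ∈ S, ∃ v : ℕ, f i = (fun ω => Xr edge ω (i + 1) - Xr edge ω i) ⁻¹' {v} :=
      fun i hi => hf i hi
    choose v hv using hch
    by_cases hz : ∃ i, ∃ hi : i ∈ S, v i hi = 0
    · obtain ⟨i0, hi0, hvz⟩ := hz
      have hnull : μ (f i0) = 0 := by
        rw [hv i0 hi0, hvz]
        have : (fun ω => Xr edge ω (i0 + 1) - Xr edge ω i0) ⁻¹' {0} =
            {ω | Xr edge ω (i0 + 1) - Xr edge ω i0 = 0} := rfl
        rw [this]
        exact D_zero_null μ edge p hG hp0 hp1 i0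
      have hL : μ (⋂ i ∈ S, f i) = 0 :=
        le_antisymm (le_trans (measure_mono (Set.biInter_subset_of_mem hi0)) hnull.le)
          zero_le
      rw [hL, Finset.prod_eq_zero hi0 hnull]
    · push_neg at hz
      set m : ℕ → ℕ := fun i => if hi : i ∈ S then v i hi - 1 else 0 with hm
      have hvm : ∀ i (hi : i ∈ S), v i hi = m i + 1 := by
        intro i hi
        have := hz i hi
        rw [hm]
        simp only [dif_pos hi]
        omega
      have hL : (⋂ i ∈ S, f i) =
          {ω | ∀ i ∈ S, Xr edge ω (i + 1) - Xr edge ω i = m i + 1} := by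
        ext ω
        simp only [Set.mem_iInter, Set.mem_setOf_eq]
        constructor
        · intro h i hi
          have := h i hi
          rw [hv i hi] at this
          simp only [Set.mem_preimage, Set.mem_singleton_iff] at this
          rw [← hvm i hi]
          exact this
        · intro h i hi
          rw [hv i hi]
          simp only [Set.mem_preimage, Set.mem_singleton_iff]
          rw [hvm i hi]
          exact h i hi
      rw [hL, margin μ edge p hG hp0 hp1 S m]
      refine Finset.prod_congr rfl (fun i hi => ?_)
      rw [hv i hi, hvm i hi]
      have : (fun ω => Xr edge ω (i + 1) - Xr edge ω i) ⁻¹' {m i + 1} =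
          {ω | Xr edge ω (i + 1) - Xr edge ω i = m i + 1} := rfl
      rw [this]
      exact (single_marginal μ edge p hG hp0 hp1 i (m i)).symm


theorem gE_ofReal (hp0 : 0 < p) (hp1 : p < 1) (k v : ℕ) :
    gE p (k + 1) v = ENNReal.ofReal ((1 - (1 - p) ^ (k + 1)) * (1 - p) ^ ((k + 1) * v)) := by
  have hq : (0 : ℝ) ≤ 1 - p := by linarith
  have h1 : ∀ t : ℕ, qE p ^ t = ENNReal.ofReal ((1 - p) ^ t) := by
    intro t
    rw [qE, ← ENNReal.ofReal_pow hq]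
  have ha : (0 : ℝ) ≤ 1 - (1 - p) ^ (k + 1) := by
    have := pow_le_one₀ hq (by linarith : (1 : ℝ) - p ≤ 1) (n := k + 1)
    linarith
  rw [gE, h1, h1, ENNReal.ofReal_mul ha, ENNReal.ofReal_sub _ (pow_nonneg hq _),
    ENNReal.ofReal_one]

end Measure

end IORG

/-- In the infinite ordered directed random graph with edge probability
`p ∈ (0,1)`: almost surely every `i`-th reachable vertex other than `v_1` exists (i.e. the
set of reachable vertices other than `v_1` is infinite); the increments `X_i − X_{i−1}`
(`i ≥ 1`) are mutually independent; and `X_i − X_{i−1}` is geometric with success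
probability `1 − (1−p)^i`, i.e. `P(X_i − X_{i−1} = m) = (1 − (1−p)^i)·(1−p)^{i(m−1)}` for
every integer `m ≥ 1`. -/
theorem increments_indep_geometric {Ω : Type*} [MeasurableSpace Ω] (μ : Measure Ω)
    (edge : ℕ → ℕ → Ω → Bool) (p : ℝ) (hp0 : 0 < p) (hp1 : p < 1)
    (hG : IsInfOrderedRandomGraph μ edge p) :
    μ {ω | {j : ℕ | 0 < j ∧ ReachableI edge ω j}.Infinite} = 1 ∧
    iIndepFun
      (fun (i : ℕ) ω => Xr edge ω (i + 1) - Xr edge ω i) μ ∧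
    (∀ i : ℕ, 1 ≤ i → ∀ m : ℕ, 1 ≤ m →
      μ {ω | Xr edge ω i - Xr edge ω (i - 1) = m} =
        ENNReal.ofReal ((1 - (1 - p) ^ i) * (1 - p) ^ (i * (m - 1)))) := by
  refine ⟨IORG.rinf_one μ edge p hG hp0 hp1, IORG.indep_D μ edge p hG hp0 hp1, ?_⟩
  intro i hi m hm
  obtain ⟨k, rfl⟩ : ∃ k, i = k + 1 := ⟨i - 1, by omega⟩
  obtain ⟨v, rfl⟩ : ∃ v, m = v + 1 := ⟨m - 1, by omega⟩
  have hset : {ω | Xr edge ω (k + 1) - Xr edge ω (k + 1 - 1) = v + 1} =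
      {ω | Xr edge ω (k + 1) - Xr edge ω k = v + 1} := by
    norm_num
  have hexp : (k + 1) * (v + 1 - 1) = (k + 1) * v := by simp
  rw [hset, hexp, IORG.single_marginal μ edge p hG hp0 hp1 k v,
    IORG.gE_ofReal p hp0 hp1 k v]
end

section
/- Suppose p = p(n) = c·(log n)/n + ξ(n) where ξ(n) = o((log n)/n) and 0 < c < 1 is fixed, and let t = t(n) = ⌊n^{c}·exp(−n·|ξ(n)| − log log n)⌋. Then the probability that X_t < n tends to 1 as n → ∞; consequently, the set of vertices among v_1, …, v_n reachable from v_1 has size at least t = n^{c+o(1)} asymptotically almost surely. -/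
open MeasureTheory ProbabilityTheory Filter

-- `reachCount edge ω n` is the number of vertices among `v_1, …, v_n` (including `v_1`)
-- reachable from `v_1`.
open Classical in
noncomputable def reachCount {Ω : Type*} (edge : ℕ → ℕ → Ω → Bool) (ω : Ω) (n : ℕ) : ℕ :=
  ((Finset.range n).filter fun j => ReachableI edge ω j).card

set_option linter.unusedSectionVars false
set_option maxHeartbeats 1000000

namespace S15
variable {Ω : Type*} [MeasurableSpace Ω] {edge : ℕ → ℕ → Ω → Bool} {p : ℝ}

lemma reachableI_iff (ω : Ω) (j : ℕ) :
    ReachableI edge ω j ↔ (j = 0 ∨ ∃ a, a < j ∧ ReachableI edge ω a ∧ edge a j ω = true) := by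
  constructor
  · intro h
    rcases Relation.ReflTransGen.cases_tail h with h0 | ⟨b, hb, hr⟩
    · exact Or.inl h0
    · exact Or.inr ⟨b, hr.1, hb, hr.2⟩
  · rintro (rfl | ⟨a, hlt, hr, he⟩)
    · exact Relation.ReflTransGen.refl
    · exact hr.tail ⟨hlt, he⟩

lemma reachableI_zero (ω : Ω) : ReachableI edge ω 0 := Relation.ReflTransGen.refl

lemma reachableI_congr {ω ω' : Ω} {m : ℕ}
    (h : ∀ a b, a < b → b < m → edge a b ω = edge a b ω') :
    ∀ j, j < m → (ReachableI edge ω j ↔ ReachableI edge ω' j) := by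
  intro j
  induction j using Nat.strong_induction_on with
  | _ j ih =>
    intro hj
    rw [reachableI_iff, reachableI_iff]
    refine or_congr Iff.rfl (exists_congr fun a => ?_)
    constructor
    · rintro ⟨ha, hr, he⟩
      exact ⟨ha, (ih a ha (ha.trans hj)).mp hr, (h a j ha hj) ▸ he⟩
    · rintro ⟨ha, hr, he⟩
      exact ⟨ha, (ih a ha (ha.trans hj)).mpr hr, (h a j ha hj) ▸ he⟩

lemma measurableSet_reachableI (hmeas : ∀ a b : ℕ, Measurable (edge a b)) (j : ℕ) :
    MeasurableSet {ω : Ω | ReachableI edge ω j} := by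
  induction j using Nat.strong_induction_on with
  | _ j ih =>
    have hset : {ω : Ω | ReachableI edge ω j}
        = {ω : Ω | j = 0} ∪
          ⋃ (a : ℕ) (_ : a < j), ({ω : Ω | ReachableI edge ω a} ∩ (edge a j) ⁻¹' {true}) := by
      ext ω
      simp only [Set.mem_setOf_eq, Set.mem_union, Set.mem_iUnion, Set.mem_inter_iff,
        Set.mem_preimage, Set.mem_singleton_iff]
      rw [reachableI_iff]
      constructor
      · rintro (h0 | ⟨a, ha, hr, he⟩)
        · exact Or.inl h0
        · exact Or.inr ⟨a, ha, hr, he⟩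
      · rintro (h0 | ⟨a, ha, hr, he⟩)
        · exact Or.inl h0
        · exact Or.inr ⟨a, ha, hr, he⟩
    rw [hset]
    refine MeasurableSet.union (MeasurableSet.const _) ?_
    refine MeasurableSet.biUnion (Set.to_countable _) fun a ha => ?_
    exact (ih a ha).inter ((hmeas a j) (measurableSet_singleton true))


set_option linter.unusedSectionVars false

variable {μ : Measure Ω}

abbrev PI := {q : ℕ × ℕ // q.1 < q.2}

lemma measurableSet_pi_bool {ι : Type*} [Finite ι] (s : Set (ι → Bool)) : MeasurableSet s := by
  have : Finite (ι → Bool) := inferInstance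
  exact s.toFinite.measurableSet

lemma indep_inter (hG : IsInfOrderedRandomGraph μ edge p)
    (S T : Finset PI) (hST : Disjoint S T) (A B : Set Ω)
    (hA : ∀ ω ω' : Ω, (∀ e ∈ S, edge e.1.1 e.1.2 ω = edge e.1.1 e.1.2 ω') → ω ∈ A → ω' ∈ A)
    (hB : ∀ ω ω' : Ω, (∀ e ∈ T, edge e.1.1 e.1.2 ω = edge e.1.1 e.1.2 ω') → ω ∈ B → ω' ∈ B) :
    μ (A ∩ B) = μ A * μ B := by
  have hIF : IndepFun (fun a (i : S) => edge i.1.1.1 i.1.1.2 a)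
      (fun a (i : T) => edge i.1.1.1 i.1.1.2 a) μ :=
    hG.indep.indepFun_finset S T hST (fun i => hG.meas _ _)
  set sA : Set (S → Bool) :=
    {v | ∃ ω', ω' ∈ A ∧ ∀ i : S, edge i.1.1.1 i.1.1.2 ω' = v i} with hsA
  set sB : Set (T → Bool) :=
    {v | ∃ ω', ω' ∈ B ∧ ∀ i : T, edge i.1.1.1 i.1.1.2 ω' = v i} with hsB
  have hAeq : (fun a (i : S) => edge i.1.1.1 i.1.1.2 a) ⁻¹' sA = A := by
    ext ω
    simp only [Set.mem_preimage, hsA, Set.mem_setOf_eq]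
    constructor
    · rintro ⟨ω', hω', heq⟩
      exact hA ω' ω (fun e he => heq ⟨e, he⟩) hω'
    · intro hω
      exact ⟨ω, hω, fun _ => rfl⟩
  have hBeq : (fun a (i : T) => edge i.1.1.1 i.1.1.2 a) ⁻¹' sB = B := by
    ext ω
    simp only [Set.mem_preimage, hsB, Set.mem_setOf_eq]
    constructor
    · rintro ⟨ω', hω', heq⟩
      exact hB ω' ω (fun e he => heq ⟨e, he⟩) hω'
    · intro hω
      exact ⟨ω, hω, fun _ => rfl⟩
  have key := hIF.measure_inter_preimage_eq_mul sA sB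
    (measurableSet_pi_bool _) (measurableSet_pi_bool _)
  rw [hAeq, hBeq] at key
  exact key

lemma meas_edge_true (hG : IsInfOrderedRandomGraph μ edge p) {a b : ℕ} (hab : a < b) :
    μ {ω | edge a b ω = true} = ENNReal.ofReal p := hG.marginal a b hab

lemma meas_edge_false (hG : IsInfOrderedRandomGraph μ edge p) (hp0 : 0 ≤ p)
    {a b : ℕ} (hab : a < b) :
    μ {ω | edge a b ω = false} = ENNReal.ofReal (1 - p) := by
  have := hG.isProb
  have hc : {ω : Ω | edge a b ω = false} = {ω : Ω | edge a b ω = true}ᶜ := by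
    ext ω; simp
  have hms : MeasurableSet {ω : Ω | edge a b ω = true} :=
    (hG.meas a b) (measurableSet_singleton true)
  rw [hc, measure_compl hms (measure_ne_top μ _),
    hG.marginal a b hab, measure_univ, ENNReal.ofReal_sub 1 hp0, ENNReal.ofReal_one]

/-- the columns `(a, m)` for `a ∈ S` as a finset of the index type -/
def colF (S : Finset ℕ) (m : ℕ) : Finset PI :=
  (S.image (fun a => (a, m))).subtype (fun q => q.1 < q.2)

lemma mem_colF {S : Finset ℕ} {m : ℕ} (e : PI) :
    e ∈ colF S m ↔ e.1.1 ∈ S ∧ e.1.2 = m := by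
  obtain ⟨⟨x, y⟩, hxy⟩ := e
  simp only [colF, Finset.mem_subtype, Finset.mem_image]
  constructor
  · rintro ⟨a, ha, heq⟩
    obtain ⟨rfl, rfl⟩ := Prod.mk.inj heq
    exact ⟨ha, rfl⟩
  · rintro ⟨ha, rfl⟩
    exact ⟨x, ha, rfl⟩

def noHit (edge : ℕ → ℕ → Ω → Bool) (S : Finset ℕ) (m : ℕ) : Set Ω :=
  {ω | ∀ a ∈ S, edge a m ω = false}

lemma noHit_det {S : Finset ℕ} {m : ℕ} (hS : ∀ a ∈ S, a < m) :
    ∀ ω ω' : Ω, (∀ e ∈ colF S m, edge e.1.1 e.1.2 ω = edge e.1.1 e.1.2 ω') →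
      ω ∈ noHit edge S m → ω' ∈ noHit edge S m := by
  intro ω ω' h hω a ha
  have he : (⟨(a, m), hS a ha⟩ : PI) ∈ colF S m := by
    rw [mem_colF]; exact ⟨ha, rfl⟩
  have := h _ he
  simp only at this
  rw [← this]
  exact hω a ha

lemma measurableSet_noHit (hmeas : ∀ a b : ℕ, Measurable (edge a b)) (S : Finset ℕ) (m : ℕ) :
    MeasurableSet (noHit edge S m) := by
  have : noHit edge S m = ⋂ a ∈ S, (edge a m) ⁻¹' {false} := by
    ext ω; simp [noHit]
  rw [this]
  exact MeasurableSet.biInter (S : Set ℕ).to_countable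
    (fun a _ => (hmeas a m) (measurableSet_singleton false))

lemma meas_noHit (hG : IsInfOrderedRandomGraph μ edge p) (hp0 : 0 ≤ p) (hp1 : p ≤ 1)
    (S : Finset ℕ) (m : ℕ) (hS : ∀ a ∈ S, a < m) :
    μ (noHit edge S m) = ENNReal.ofReal ((1 - p) ^ S.card) := by
  have := hG.isProb
  classical
  induction S using Finset.induction with
  | empty =>
      simp [noHit, Set.setOf_true]
  | @insert a S ha ih =>
      have hS' : ∀ b ∈ S, b < m := fun b hb => hS b (Finset.mem_insert_of_mem hb)
      have ham : a < m := hS a (Finset.mem_insert_self a S)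
      have hsplit : noHit edge (insert a S) m = {ω | edge a m ω = false} ∩ noHit edge S m := by
        ext ω
        simp only [noHit, Set.mem_setOf_eq, Set.mem_inter_iff, Finset.mem_insert]
        constructor
        · intro h; exact ⟨h a (Or.inl rfl), fun b hb => h b (Or.inr hb)⟩
        · rintro ⟨h1, h2⟩ b hb
          rcases hb with rfl | hb
          · exact h1
          · exact h2 b hb
      have hdisj : Disjoint (colF {a} m) (colF S m) := by
        rw [Finset.disjoint_left]
        intro e he1 he2
        rw [mem_colF] at he1 he2
        simp only [Finset.mem_singleton] at he1
        exact ha (he1.1 ▸ he2.1)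
      have hdet1 : ∀ ω ω' : Ω, (∀ e ∈ colF {a} m, edge e.1.1 e.1.2 ω = edge e.1.1 e.1.2 ω') →
          ω ∈ {ω : Ω | edge a m ω = false} → ω' ∈ {ω : Ω | edge a m ω = false} := by
        intro ω ω' h hω
        have he : (⟨(a, m), ham⟩ : PI) ∈ colF {a} m := by
          rw [mem_colF]; exact ⟨Finset.mem_singleton_self a, rfl⟩
        have := h _ he
        simp only at this
        simp only [Set.mem_setOf_eq, ← this]
        exact hω
      rw [hsplit, indep_inter hG (colF {a} m) (colF S m) hdisj _ _ hdet1 (noHit_det hS'),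
        meas_edge_false hG hp0 ham, ih hS', Finset.card_insert_of_notMem ha,
        ← ENNReal.ofReal_mul (by nlinarith : (0:ℝ) ≤ 1 - p), pow_succ, mul_comm ((1-p)^S.card)]


end S15

namespace S15
variable {Ω : Type*} [MeasurableSpace Ω] {μ : Measure Ω} {edge : ℕ → ℕ → Ω → Bool} {p : ℝ}

/-- pairs with both endpoints `< m` -/
def belowF (m : ℕ) : Finset PI :=
  ((Finset.range m ×ˢ Finset.range m)).subtype (fun q => q.1 < q.2)

lemma mem_belowF {m : ℕ} (e : PI) : e ∈ belowF m ↔ e.1.2 < m := by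
  obtain ⟨⟨x, y⟩, hxy⟩ := e
  simp only [belowF, Finset.mem_subtype, Finset.mem_product, Finset.mem_range]
  exact ⟨fun h => h.2, fun h => ⟨hxy.trans h, h⟩⟩

lemma disjoint_belowF_colF (m : ℕ) (S : Finset ℕ) : Disjoint (belowF m) (colF S m) := by
  rw [Finset.disjoint_left]
  intro e he1 he2
  rw [mem_belowF] at he1
  rw [mem_colF] at he2
  omega

/-- the event that the reachable vertices below `m` are exactly `S` -/
def RSet (edge : ℕ → ℕ → Ω → Bool) (m : ℕ) (S : Finset ℕ) : Set Ω :=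
  {ω | ∀ j, j < m → (ReachableI edge ω j ↔ j ∈ S)}

lemma RSet_det {m : ℕ} {S : Finset ℕ} :
    ∀ ω ω' : Ω, (∀ e ∈ belowF m, edge e.1.1 e.1.2 ω = edge e.1.1 e.1.2 ω') →
      ω ∈ RSet edge m S → ω' ∈ RSet edge m S := by
  intro ω ω' h hω j hj
  have hcong : ∀ a b : ℕ, a < b → b < m → edge a b ω = edge a b ω' := by
    intro a b hab hbm
    exact h ⟨(a, b), hab⟩ ((mem_belowF _).mpr hbm)
  rw [← reachableI_congr hcong j hj]
  exact hω j hj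

lemma measurableSet_RSet (hmeas : ∀ a b : ℕ, Measurable (edge a b)) (m : ℕ) (S : Finset ℕ) :
    MeasurableSet (RSet edge m S) := by
  classical
  have : RSet edge m S = ⋂ j ∈ Finset.range m,
      (if j ∈ S then {ω : Ω | ReachableI edge ω j} else {ω : Ω | ReachableI edge ω j}ᶜ) := by
    ext ω
    simp only [RSet, Set.mem_setOf_eq, Set.mem_iInter, Finset.mem_range]
    constructor
    · intro h j hj
      by_cases hjS : j ∈ S
      · simp only [if_pos hjS]; exact (h j hj).mpr hjS
      · simp only [if_neg hjS, Set.mem_compl_iff, Set.mem_setOf_eq]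
        exact fun hr => hjS ((h j hj).mp hr)
    · intro h j hj
      have := h j hj
      by_cases hjS : j ∈ S
      · simp only [if_pos hjS] at this
        exact ⟨fun _ => hjS, fun _ => this⟩
      · simp only [if_neg hjS, Set.mem_compl_iff, Set.mem_setOf_eq] at this
        exact ⟨fun hr => absurd hr this, fun hS => absurd hS hjS⟩
  rw [this]
  refine MeasurableSet.biInter (Set.to_countable _) fun j _ => ?_
  by_cases hjS : j ∈ S
  · simpa [hjS] using measurableSet_reachableI hmeas j
  · simpa [hjS] using (measurableSet_reachableI hmeas j).compl

/-- on `RSet m S` (with `S ⊆ [0,m)`, `1 ≤ m`), non-reachability of `m` is `noHit S m` -/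
lemma RSet_inter_notReach {m : ℕ} (hm : 1 ≤ m) {S : Finset ℕ} (hS : ∀ a ∈ S, a < m) :
    RSet edge m S ∩ {ω : Ω | ¬ ReachableI edge ω m}
      = RSet edge m S ∩ noHit edge S m := by
  ext ω
  simp only [Set.mem_inter_iff, Set.mem_setOf_eq, noHit]
  refine and_congr_right fun hR => ?_
  rw [reachableI_iff]
  push_neg
  constructor
  · intro h
    have h2 := h.2
    intro a ha
    have ham := hS a ha
    by_contra htrue
    exact (h2 a ham ((hR a ham).mpr ha)) (by simpa using htrue)
  · intro h
    refine ⟨by omega, fun a ham hr => ?_⟩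
    have haS : a ∈ S := (hR a ham).mp hr
    simp [h a haS]

lemma meas_RSet_inter_noHit (hG : IsInfOrderedRandomGraph μ edge p)
    (hp0 : 0 ≤ p) (hp1 : p ≤ 1) {m : ℕ} {S : Finset ℕ} (hS : ∀ a ∈ S, a < m) :
    μ (RSet edge m S ∩ noHit edge S m)
      = ENNReal.ofReal ((1 - p) ^ S.card) * μ (RSet edge m S) := by
  rw [indep_inter hG (belowF m) (colF S m) (disjoint_belowF_colF m S) _ _
    RSet_det (noHit_det hS), meas_noHit hG hp0 hp1 S m hS, mul_comm]

lemma meas_RSet_inter_reach (hG : IsInfOrderedRandomGraph μ edge p)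
    (hp0 : 0 ≤ p) (hp1 : p ≤ 1) {m : ℕ} (hm : 1 ≤ m) {S : Finset ℕ} (hS : ∀ a ∈ S, a < m) :
    μ (RSet edge m S ∩ {ω : Ω | ReachableI edge ω m})
      = ENNReal.ofReal (1 - (1 - p) ^ S.card) * μ (RSet edge m S) := by
  have := hG.isProb
  have hq0 : (0:ℝ) ≤ (1 - p) ^ S.card := pow_nonneg (by linarith) _
  have hq1 : (1 - p) ^ S.card ≤ 1 := pow_le_one₀ (by linarith) (by linarith)
  have hMR : MeasurableSet {ω : Ω | ReachableI edge ω m} := measurableSet_reachableI hG.meas m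
  have hsplit := measure_inter_add_diff (μ := μ) (RSet edge m S) hMR
  have hdiff : RSet edge m S \ {ω : Ω | ReachableI edge ω m}
      = RSet edge m S ∩ noHit edge S m := by
    rw [← RSet_inter_notReach hm hS]; rfl
  rw [hdiff, meas_RSet_inter_noHit hG hp0 hp1 hS] at hsplit
  have hfin1 : μ (RSet edge m S ∩ {ω : Ω | ReachableI edge ω m}) ≠ ⊤ := measure_ne_top μ _
  have hfin2 : ENNReal.ofReal (1 - (1 - p) ^ S.card) * μ (RSet edge m S) ≠ ⊤ :=
    ENNReal.mul_ne_top ENNReal.ofReal_ne_top (measure_ne_top μ _)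
  have hrhs : ENNReal.ofReal (1 - (1 - p) ^ S.card) * μ (RSet edge m S)
      + ENNReal.ofReal ((1 - p) ^ S.card) * μ (RSet edge m S) = μ (RSet edge m S) := by
    rw [← add_mul, ← ENNReal.ofReal_add (by linarith) hq0]
    norm_num
  have := hsplit.trans hrhs.symm
  exact WithTop.add_right_cancel (ENNReal.mul_ne_top ENNReal.ofReal_ne_top (measure_ne_top μ _)) this

end S15

namespace S15
variable {Ω : Type*} [MeasurableSpace Ω] {μ : Measure Ω} {edge : ℕ → ℕ → Ω → Bool} {p : ℝ}

def RC (edge : ℕ → ℕ → Ω → Bool) (m k : ℕ) : Set Ω := {ω | reachCount edge ω m = k}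

lemma RC_eq_biUnion (m k : ℕ) :
    RC edge m k = ⋃ S ∈ Finset.powersetCard k (Finset.range m), RSet edge m S := by
  classical
  ext ω
  simp only [RC, Set.mem_setOf_eq, Set.mem_iUnion, exists_prop]
  constructor
  · intro h
    refine ⟨(Finset.range m).filter (fun j => ReachableI edge ω j), ?_, ?_⟩
    · rw [Finset.mem_powersetCard]
      refine ⟨Finset.filter_subset _ _, ?_⟩
      rw [← h, reachCount]
    · intro j hj
      simp only [Finset.mem_filter, Finset.mem_range]
      constructor
      · exact fun hr => ⟨hj, hr⟩
      · exact fun hr => hr.2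
  · rintro ⟨S, hS, hR⟩
    rw [Finset.mem_powersetCard] at hS
    rw [reachCount]
    have : ((Finset.range m).filter fun j => ReachableI edge ω j) = S := by
      ext j
      simp only [Finset.mem_filter, Finset.mem_range]
      constructor
      · rintro ⟨hj, hr⟩
        exact (hR j hj).mp hr
      · intro hjS
        have hj : j < m := Finset.mem_range.mp (hS.1 hjS)
        exact ⟨hj, (hR j hj).mpr hjS⟩
    rw [this]; exact hS.2

lemma RSet_disjoint {m : ℕ} {S S' : Finset ℕ} (hS : S ⊆ Finset.range m)
    (hS' : S' ⊆ Finset.range m) (hne : S ≠ S') :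
    Disjoint (RSet edge m S) (RSet edge m S') := by
  rw [Set.disjoint_left]
  intro ω h1 h2
  apply hne
  ext j
  by_cases hj : j < m
  · rw [← h1 j hj, ← h2 j hj]
  · constructor
    · intro hjS; exact absurd (Finset.mem_range.mp (hS hjS)) hj
    · intro hjS; exact absurd (Finset.mem_range.mp (hS' hjS)) hj

lemma measurableSet_RC (hmeas : ∀ a b : ℕ, Measurable (edge a b)) (m k : ℕ) :
    MeasurableSet (RC edge m k) := by
  rw [RC_eq_biUnion]
  exact (Finset.powersetCard k (Finset.range m)).measurableSet_biUnion
    (fun S _ => measurableSet_RSet hmeas m S)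

lemma meas_RC_inter_aux (m k : ℕ) (X : Set Ω) (c : ℝ)
    (hmeas : ∀ a b : ℕ, Measurable (edge a b))
    (hX : ∀ S ∈ Finset.powersetCard k (Finset.range m),
      μ (RSet edge m S ∩ X) = ENNReal.ofReal c * μ (RSet edge m S)) (hXm : MeasurableSet X) :
    μ (RC edge m k ∩ X) = ENNReal.ofReal c * μ (RC edge m k) := by
  classical
  have hpd : Set.PairwiseDisjoint ↑(Finset.powersetCard k (Finset.range m))
      (fun S => RSet edge m S ∩ X) := by
    intro S hS S' hS' hne
    simp only [Finset.coe_sort_coe, Finset.mem_coe, Finset.mem_powersetCard] at hS hS'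
    exact Set.disjoint_of_subset Set.inter_subset_left Set.inter_subset_left
      (RSet_disjoint hS.1 hS'.1 hne)
  have hpd2 : Set.PairwiseDisjoint ↑(Finset.powersetCard k (Finset.range m))
      (fun S => RSet edge m S) := by
    intro S hS S' hS' hne
    simp only [Finset.coe_sort_coe, Finset.mem_coe, Finset.mem_powersetCard] at hS hS'
    exact RSet_disjoint hS.1 hS'.1 hne
  rw [RC_eq_biUnion, Set.iUnion₂_inter,
    measure_biUnion_finset hpd
      (fun S _ => (measurableSet_RSet hmeas m S).inter hXm),
    Finset.sum_congr rfl hX, ← Finset.mul_sum,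
    measure_biUnion_finset hpd2 (fun S _ => measurableSet_RSet hmeas m S)]

open Classical in
lemma reachCount_succ (ω : Ω) (m : ℕ) :
    reachCount edge ω (m+1)
      = reachCount edge ω m + (if ReachableI edge ω m then 1 else 0) := by
  classical
  rw [reachCount, reachCount, Finset.range_add_one, Finset.filter_insert]
  split_ifs with h
  · rw [Finset.card_insert_of_notMem (fun hmem =>
      (Finset.mem_range.mp (Finset.mem_of_mem_filter m hmem)).false)]
  · simp

open Classical in
lemma RC_succ_eq (m r : ℕ) :
    RC edge (m+1) (r+1)
      = (RC edge m (r+1) ∩ {ω : Ω | ¬ ReachableI edge ω m})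
        ∪ (RC edge m r ∩ {ω : Ω | ReachableI edge ω m}) := by
  ext ω
  simp only [RC, Set.mem_setOf_eq, Set.mem_union, Set.mem_inter_iff, reachCount_succ]
  by_cases h : ReachableI edge ω m
  · rw [if_pos h]
    simp only [h, not_true_eq_false, and_false, and_true, false_or]
    omega
  · rw [if_neg h]
    simp only [h, not_false_eq_true, and_true, and_false, or_false]
    omega

lemma meas_RC_succ (hG : IsInfOrderedRandomGraph μ edge p) (hp0 : 0 ≤ p) (hp1 : p ≤ 1)
    {m : ℕ} (hm : 1 ≤ m) (r : ℕ) :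
    μ (RC edge (m+1) (r+1))
      = ENNReal.ofReal ((1-p)^(r+1)) * μ (RC edge m (r+1))
        + ENNReal.ofReal (1 - (1-p)^r) * μ (RC edge m r) := by
  have hMR : MeasurableSet {ω : Ω | ReachableI edge ω m} := measurableSet_reachableI hG.meas m
  have hdisj : Disjoint (RC edge m (r+1) ∩ {ω : Ω | ¬ ReachableI edge ω m})
      (RC edge m r ∩ {ω : Ω | ReachableI edge ω m}) := by
    rw [Set.disjoint_left]
    rintro ω ⟨_, h1⟩ ⟨_, h2⟩
    exact h1 h2
  have hmeas2 : MeasurableSet (RC edge m r ∩ {ω : Ω | ReachableI edge ω m}) :=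
    (measurableSet_RC hG.meas m r).inter hMR
  rw [RC_succ_eq, measure_union hdisj hmeas2]
  have e1 : μ (RC edge m (r+1) ∩ {ω : Ω | ¬ ReachableI edge ω m})
      = ENNReal.ofReal ((1-p)^(r+1)) * μ (RC edge m (r+1)) := by
    refine meas_RC_inter_aux m (r+1) _ _ hG.meas (fun S hS => ?_) hMR.compl
    rw [Finset.mem_powersetCard] at hS
    have hSm : ∀ a ∈ S, a < m := fun a ha => Finset.mem_range.mp (hS.1 ha)
    have : RSet edge m S ∩ {ω : Ω | ¬ ReachableI edge ω m}
        = RSet edge m S ∩ noHit edge S m := RSet_inter_notReach hm hSm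
    rw [this, meas_RSet_inter_noHit hG hp0 hp1 hSm, hS.2]
  have e2 : μ (RC edge m r ∩ {ω : Ω | ReachableI edge ω m})
      = ENNReal.ofReal (1 - (1-p)^r) * μ (RC edge m r) := by
    refine meas_RC_inter_aux m r _ _ hG.meas (fun S hS => ?_) hMR
    rw [Finset.mem_powersetCard] at hS
    have hSm : ∀ a ∈ S, a < m := fun a ha => Finset.mem_range.mp (hS.1 ha)
    rw [meas_RSet_inter_reach hG hp0 hp1 hm hSm, hS.2]
  rw [e1, e2]

lemma RC_one_one : RC (Ω := Ω) edge 1 1 = Set.univ := by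
  classical
  ext ω
  simp only [RC, Set.mem_setOf_eq, Set.mem_univ, iff_true, reachCount]
  have : (Finset.range 1).filter (fun j => ReachableI edge ω j) = {0} := by
    ext j
    simp only [Finset.mem_filter, Finset.mem_range, Finset.mem_singleton, Nat.lt_one_iff]
    exact ⟨fun h => h.1, fun h => ⟨h, h ▸ reachableI_zero ω⟩⟩
  rw [this, Finset.card_singleton]

lemma RC_zero {m : ℕ} (hm : 1 ≤ m) : RC (Ω := Ω) edge m 0 = ∅ := by
  classical
  ext ω
  simp only [RC, Set.mem_setOf_eq, Set.mem_empty_iff_false, iff_false, reachCount]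
  intro h
  have h0 : (0:ℕ) ∈ (Finset.range m).filter (fun j => ReachableI edge ω j) := by
    classical
    simp only [Finset.mem_filter, Finset.mem_range]
    exact ⟨hm, reachableI_zero ω⟩
  have := Finset.card_pos.mpr ⟨0, h0⟩
  omega

lemma RC_one_ne {r : ℕ} (hr : r ≠ 1) : RC (Ω := Ω) edge 1 r = ∅ := by
  classical
  ext ω
  simp only [RC, Set.mem_setOf_eq, Set.mem_empty_iff_false, iff_false, reachCount]
  have : (Finset.range 1).filter (fun j => ReachableI edge ω j) = {0} := by
    ext j
    simp only [Finset.mem_filter, Finset.mem_range, Finset.mem_singleton, Nat.lt_one_iff]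
    exact ⟨fun h => h.1, fun h => ⟨h, h ▸ reachableI_zero ω⟩⟩
  rw [this, Finset.card_singleton]
  exact fun h => hr h.symm

end S15

namespace S15

lemma mart_bound (p : ℝ) (hp0 : 0 < p) (hp1 : p < 1) (t : ℕ) (ht : 1 ≤ t)
    (g : ℕ → ℕ → ℝ) (hg0 : ∀ m r, 0 ≤ g m r)
    (hg11 : g 1 1 = 1) (hg1r : ∀ r, r ≠ 1 → g 1 r = 0)
    (hrec : ∀ m r, 1 ≤ m →
      g (m+1) (r+1) = (1-p)^(r+1) * g m (r+1) + (1 - (1-p)^r) * g m r)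
    (m : ℕ) (hm : 1 ≤ m) :
    ∑ r ∈ Finset.range (t+1), g m r
      ≤ g m 0 + (∏ j ∈ Finset.Ico 1 (t+1),
          ((1+p/2) * (1 - (1-p)^j) / (1 - (1-p)^j * (1+p/2))))
        * (1/(1+p/2))^(m-1) := by
  set q : ℝ := 1 - p with hq
  set z : ℝ := 1 + p/2 with hz
  have hq0 : 0 < q := by simp only [hq]; linarith
  have hq1 : q < 1 := by simp only [hq]; linarith
  have hz1 : 1 < z := by simp only [hz]; linarith
  have hz0 : 0 < z := by linarith
  have hqz : q * z < 1 := by simp only [hq, hz]; nlinarith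
  have hqj : ∀ j : ℕ, 1 ≤ j → q^j ≤ q := by
    intro j hj
    calc q^j ≤ q^1 := pow_le_pow_of_le_one hq0.le hq1.le hj
    _ = q := pow_one q
  have hqjpos : ∀ j : ℕ, 0 < q^j := fun j => pow_pos hq0 j
  have hdj : ∀ j : ℕ, 1 ≤ j → 0 < 1 - q^j*z := by
    intro j hj
    have : q^j * z ≤ q * z := mul_le_mul_of_nonneg_right (hqj j hj) hz0.le
    linarith
  have hsj : ∀ j : ℕ, 1 ≤ j → 0 < 1 - q^j := by
    intro j hj
    have : q^j ≤ q := hqj j hj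
    linarith
  set φ : ℕ → ℝ := fun j => z * (1 - q^j) / (1 - q^j*z) with hφ
  have hφ1 : ∀ j : ℕ, 1 ≤ j → 1 ≤ φ j := by
    intro j hj
    rw [hφ]
    rw [le_div_iff₀ (hdj j hj)]
    have h1 : z * (1 - q ^ j) - 1 * (1 - q^j * z) = z - 1 := by ring
    nlinarith [hsj j hj, hdj j hj]
  set Φ : ℕ → ℝ := fun k => ∏ j ∈ Finset.Ico (k+1) (t+1), φ j with hΦ
  have hΦ1 : ∀ k, 1 ≤ Φ k := by
    intro k
    calc (1:ℝ) = ∏ _j ∈ Finset.Ico (k+1) (t+1), (1:ℝ) := by simp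
      _ ≤ Φ k := Finset.prod_le_prod (fun _ _ => zero_le_one)
          (fun j hj => hφ1 j (by have := (Finset.mem_Ico.mp hj).1; omega))
  have hΦ0 : ∀ k, 0 < Φ k := fun k => lt_of_lt_of_le one_pos (hΦ1 k)
  have hpeel : ∀ k, k < t → Φ k = φ (k+1) * Φ (k+1) := by
    intro k hk
    simp only [hΦ]
    exact Finset.prod_eq_prod_Ico_succ_bot (by omega) φ
  have hkey : ∀ k, k < t → q^(k+1)*Φ k + (1-q^(k+1))*Φ (k+1) = Φ k * (1/z) := by
    intro k hk
    rw [hpeel k hk]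
    have hd := hdj (k+1) (by omega)
    have hs := hsj (k+1) (by omega)
    have hfac : q^(k+1) * φ (k+1) + (1 - q^(k+1)) = φ (k+1) * (1/z) := by
      rw [hφ]
      field_simp
      ring
    calc q^(k+1) * (φ (k+1) * Φ (k+1)) + (1-q^(k+1)) * Φ (k+1)
        = (q^(k+1) * φ (k+1) + (1 - q^(k+1))) * Φ (k+1) := by ring
      _ = (φ (k+1) * (1/z)) * Φ (k+1) := by rw [hfac]
      _ = φ (k+1) * Φ (k+1) * (1/z) := by ring
  set T : ℕ → ℝ := fun mm => ∑ k ∈ Finset.range t, g mm (k+1) * Φ k with hT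
  have hstep : ∀ mm, 1 ≤ mm → T (mm+1) ≤ T mm * (1/z) := by
    intro mm hmm
    obtain ⟨t', rfl⟩ : ∃ t', t = t' + 1 := ⟨t - 1, by omega⟩
    have e1 : T (mm+1) = ∑ k ∈ Finset.range (t'+1),
        (q^(k+1) * g mm (k+1) * Φ k + (1 - q^k) * g mm k * Φ k) := by
      rw [hT]
      refine Finset.sum_congr rfl fun k _ => ?_
      rw [hrec mm k hmm]
      ring
    rw [e1, Finset.sum_add_distrib]
    have e2 : ∑ k ∈ Finset.range (t'+1), (1 - q^k) * g mm k * Φ k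
        ≤ ∑ k ∈ Finset.range (t'+1), (1 - q^(k+1)) * g mm (k+1) * Φ (k+1) := by
      rw [Finset.sum_range_succ']
      simp only [pow_zero, sub_self, zero_mul]
      rw [add_zero]
      refine Finset.sum_le_sum_of_subset_of_nonneg
        (Finset.range_subset_range.mpr (Nat.le_succ t')) fun k _ _ => ?_
      have h1 : 0 ≤ 1 - q^(k+1) := (hsj (k+1) (by omega)).le
      exact mul_nonneg (mul_nonneg h1 (hg0 mm (k+1))) (hΦ0 k.succ).le
    have e3 : ∑ k ∈ Finset.range (t'+1), q^(k+1) * g mm (k+1) * Φ k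
          + ∑ k ∈ Finset.range (t'+1), (1 - q^(k+1)) * g mm (k+1) * Φ (k+1)
        = T mm * (1/z) := by
      rw [← Finset.sum_add_distrib, hT, Finset.sum_mul]
      refine Finset.sum_congr rfl fun k hk => ?_
      have hkt : k < t' + 1 := Finset.mem_range.mp hk
      calc q^(k+1) * g mm (k+1) * Φ k + (1 - q^(k+1)) * g mm (k+1) * Φ (k+1)
          = g mm (k+1) * (q^(k+1)*Φ k + (1-q^(k+1))*Φ (k+1)) := by ring
        _ = g mm (k+1) * (Φ k * (1/z)) := by rw [hkey k hkt]
        _ = g mm (k+1) * Φ k * (1/z) := by ring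
    linarith [e2, e3.symm.le, e3.ge]
  have hTbound : ∀ mm, 1 ≤ mm → T mm ≤ Φ 0 * (1/z)^(mm-1) := by
    intro mm hmm
    induction mm, hmm using Nat.le_induction with
    | base =>
        have : T 1 = Φ 0 := by
          simp only [hT]
          rw [Finset.sum_eq_single_of_mem 0 (Finset.mem_range.mpr (by omega))
            (fun k _ hk => by rw [hg1r (k+1) (by omega)]; ring)]
          rw [hg11, one_mul]
        rw [this]
        simp
    | succ mm hmm ih =>
        calc T (mm+1) ≤ T mm * (1/z) := hstep mm hmm
          _ ≤ (Φ 0 * (1/z)^(mm-1)) * (1/z) := by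
              refine mul_le_mul_of_nonneg_right ih (by positivity)
          _ = Φ 0 * (1/z)^(mm-1+1) := by rw [pow_succ]; ring
          _ = Φ 0 * (1/z)^(mm+1-1) := by congr 2; omega
  have hfinal : ∑ r ∈ Finset.range (t+1), g m r ≤ g m 0 + T m := by
    rw [Finset.sum_range_succ']
    have : ∑ k ∈ Finset.range t, g m (k+1) ≤ T m := by
      rw [hT]
      refine Finset.sum_le_sum fun k _ => ?_
      exact le_mul_of_one_le_right (hg0 m (k+1)) (hΦ1 k)
    linarith
  have := hTbound m hm
  have hΦeq : Φ 0 = ∏ j ∈ Finset.Ico 1 (t+1),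
      ((1+p/2) * (1 - (1-p)^j) / (1 - (1-p)^j * (1+p/2))) := by
    rw [hΦ]
  linarith

end S15

namespace S15
variable {Ω : Type*} [MeasurableSpace Ω] {μ : Measure Ω} {edge : ℕ → ℕ → Ω → Bool} {p : ℝ}

lemma measurableSet_tail (hmeas : ∀ a b : ℕ, Measurable (edge a b)) (m t : ℕ) :
    MeasurableSet {ω : Ω | reachCount edge ω m ≤ t} := by
  have : {ω : Ω | reachCount edge ω m ≤ t} = ⋃ r ∈ Finset.range (t+1), RC edge m r := by
    ext ω
    simp only [Set.mem_setOf_eq, Set.mem_iUnion, Finset.mem_range, exists_prop, RC]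
    constructor
    · intro h; exact ⟨reachCount edge ω m, by omega, rfl⟩
    · rintro ⟨r, hr, h⟩; omega
  rw [this]
  exact (Finset.range (t+1)).measurableSet_biUnion (fun r _ => measurableSet_RC hmeas m r)

lemma reachCount_tail_bound (hG : IsInfOrderedRandomGraph μ edge p)
    (hp0 : 0 < p) (hp1 : p < 1) (t m : ℕ) (ht : 1 ≤ t) (hm : 1 ≤ m) :
    μ {ω : Ω | reachCount edge ω m ≤ t} ≤ ENNReal.ofReal
      ((∏ j ∈ Finset.Ico 1 (t+1), ((1+p/2)*(1-(1-p)^j)/(1-(1-p)^j*(1+p/2))))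
        * (1/(1+p/2))^(m-1)) := by
  have hprob := hG.isProb
  set g : ℕ → ℕ → ℝ := fun mm r => (μ (RC edge mm r)).toReal with hgdef
  have hg0 : ∀ mm r, 0 ≤ g mm r := fun mm r => ENNReal.toReal_nonneg
  have hg11 : g 1 1 = 1 := by
    simp only [hgdef, RC_one_one, measure_univ, ENNReal.toReal_one]
  have hg1r : ∀ r, r ≠ 1 → g 1 r = 0 := by
    intro r hr
    simp only [hgdef, RC_one_ne hr, measure_empty, ENNReal.toReal_zero]
  have hrec : ∀ mm r, 1 ≤ mm →
      g (mm+1) (r+1) = (1-p)^(r+1) * g mm (r+1) + (1 - (1-p)^r) * g mm r := by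
    intro mm r hmm
    have h1 : (0:ℝ) ≤ (1-p)^(r+1) := pow_nonneg (by linarith) _
    have h2 : (0:ℝ) ≤ 1 - (1-p)^r := by
      have : (1-p)^r ≤ 1 := pow_le_one₀ (by linarith) (by linarith)
      linarith
    simp only [hgdef]
    rw [meas_RC_succ hG hp0.le hp1.le hmm r,
      ENNReal.toReal_add (ENNReal.mul_ne_top ENNReal.ofReal_ne_top (measure_ne_top μ _))
        (ENNReal.mul_ne_top ENNReal.ofReal_ne_top (measure_ne_top μ _)),
      ENNReal.toReal_mul, ENNReal.toReal_mul,
      ENNReal.toReal_ofReal h1, ENNReal.toReal_ofReal h2]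
  have hunion : {ω : Ω | reachCount edge ω m ≤ t} = ⋃ r ∈ Finset.range (t+1), RC edge m r := by
    ext ω
    simp only [Set.mem_setOf_eq, Set.mem_iUnion, Finset.mem_range, exists_prop, RC]
    constructor
    · intro h; exact ⟨reachCount edge ω m, by omega, rfl⟩
    · rintro ⟨r, hr, h⟩; omega
  have hdisj : Set.PairwiseDisjoint ↑(Finset.range (t+1)) (fun r => RC edge m r) := by
    intro r _ r' _ hne
    rw [Function.onFun, Set.disjoint_left]
    intro ω h1 h2
    exact hne ((h1 : reachCount edge ω m = r).symm.trans h2)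
  have hsum : (μ {ω : Ω | reachCount edge ω m ≤ t}).toReal
      = ∑ r ∈ Finset.range (t+1), g m r := by
    rw [hunion, measure_biUnion_finset hdisj (fun r _ => measurableSet_RC hG.meas m r),
      ENNReal.toReal_sum (fun r _ => measure_ne_top μ _)]
  have hg00 : g m 0 = 0 := by
    simp only [hgdef, RC_zero hm, measure_empty, ENNReal.toReal_zero]
  have hmart := mart_bound p hp0 hp1 t ht g hg0 hg11 hg1r hrec m hm
  rw [hg00, zero_add] at hmart
  rw [← hsum] at hmart
  have hb0 : (0:ℝ) ≤ (∏ j ∈ Finset.Ico 1 (t+1),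
      ((1+p/2)*(1-(1-p)^j)/(1-(1-p)^j*(1+p/2)))) * (1/(1+p/2))^(m-1) :=
    le_trans ENNReal.toReal_nonneg hmart
  exact (ENNReal.le_ofReal_iff_toReal_le (measure_ne_top μ _) hb0).mpr hmart

end S15

namespace S15

lemma sum_inv_le : ∀ t : ℕ, 1 ≤ t →
    ∑ j ∈ Finset.Ico 1 (t+1), 1/(j:ℝ) ≤ 1 + Real.log t := by
  intro t ht
  induction t, ht using Nat.le_induction with
  | base => norm_num
  | succ t ht ih =>
      rw [Finset.sum_Ico_succ_top (by omega)]
      have hlog : Real.log t + 1/((t:ℝ)+1) ≤ Real.log (t+1) := by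
        have htpos : (0:ℝ) < t := by exact_mod_cast ht
        have h1 : Real.log ((t:ℝ)/(t+1)) ≤ (t:ℝ)/(t+1) - 1 :=
          Real.log_le_sub_one_of_pos (by positivity)
        rw [Real.log_div (by positivity) (by positivity)] at h1
        have h2 : (t:ℝ)/(t+1) - 1 = -(1/((t:ℝ)+1)) := by rw [div_sub_one (by positivity)]; ring
        rw [h2] at h1
        linarith
      push_cast
      push_cast at ih
      linarith
  
lemma sum_invsq_le : ∀ t : ℕ, 1 ≤ t →
    ∑ j ∈ Finset.Ico 1 (t+1), 1/(j:ℝ)^2 ≤ 2 - 1/(t:ℝ) := by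
  intro t ht
  induction t, ht using Nat.le_induction with
  | base => norm_num
  | succ t ht ih =>
      rw [Finset.sum_Ico_succ_top (by omega)]
      have htpos : (0:ℝ) < t := by exact_mod_cast ht
      have key : 1/((t:ℝ)+1)^2 ≤ 1/(t:ℝ) - 1/((t:ℝ)+1) := by
        rw [div_sub_div _ _ (by positivity) (by positivity : ((t:ℝ)+1) ≠ 0)]
        rw [div_le_div_iff₀ (by positivity) (by positivity)]
        ring_nf
        nlinarith
      push_cast
      push_cast at ih
      linarith

lemma prod_bound (p : ℝ) (hp0 : 0 < p) (hp1 : p < 1) (t m : ℕ) (ht : 1 ≤ t) :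
    (∏ j ∈ Finset.Ico 1 (t+1), ((1+p/2)*(1-(1-p)^j)/(1-(1-p)^j*(1+p/2))))
      * (1/(1+p/2))^(m-1)
    ≤ Real.exp (((t:ℝ) - ((m-1 : ℕ):ℝ)) * Real.log (1+p/2)
        + (1 + Real.log t)/2 + 1) := by
  set q : ℝ := 1 - p with hq
  set z : ℝ := 1 + p/2 with hz
  have hq0 : 0 < q := by simp only [hq]; linarith
  have hq1 : q < 1 := by simp only [hq]; linarith
  have hz1 : 1 < z := by simp only [hz]; linarith
  have hz0 : 0 < z := by linarith
  have hqz : q * z < 1 := by simp only [hq, hz]; nlinarith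
  have hqj : ∀ j : ℕ, 1 ≤ j → q^j ≤ q := fun j hj => by
    calc q^j ≤ q^1 := pow_le_pow_of_le_one hq0.le hq1.le hj
    _ = q := pow_one q
  have hdj : ∀ j : ℕ, 1 ≤ j → 0 < 1 - q^j*z := by
    intro j hj
    have : q^j * z ≤ q * z := mul_le_mul_of_nonneg_right (hqj j hj) hz0.le
    linarith
  have hsj : ∀ j : ℕ, 1 ≤ j → 0 < 1 - q^j := by
    intro j hj
    have := hqj j hj; linarith
  -- s ≥ p j q^j
  have hs_ge : ∀ j : ℕ, p * j * q^j ≤ 1 - q^j := by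
    intro j
    induction j with
    | zero => simp
    | succ j ih =>
        have hqq : q^(j+1) ≤ q^j := pow_le_pow_of_le_one hq0.le hq1.le (by omega)
        have hqpos : (0:ℝ) < q^j := pow_pos hq0 j
        have e1 : 1 - q^(j+1) = (1 - q^j) + q^j * p := by
          rw [pow_succ]; simp only [hq]; ring
        have e2 : p * (j+1 : ℕ) * q^(j+1) ≤ p * (j+1 : ℕ) * q^j := by
          refine mul_le_mul_of_nonneg_left hqq (by positivity)
        have e3 : p * ((j:ℝ)+1) * q^j = p * j * q^j + p * q^j := by ring
        push_cast
        push_cast at ih e2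
        nlinarith
  -- per-factor bound
  have hfac : ∀ j : ℕ, 1 ≤ j →
      z*(1-q^j)/(1-q^j*z) ≤ z * Real.exp (1/(2*(j:ℝ)) + 1/(2*(j:ℝ)^2)) := by
    intro j hj
    have hd := hdj j hj
    have hs := hsj j hj
    have hJ1 : (1:ℝ) ≤ (j:ℝ) := by exact_mod_cast hj
    have hJ0 : (0:ℝ) < (j:ℝ) := by linarith
    set J : ℝ := (j:ℝ)
    set s : ℝ := 1 - q^j with hsdef
    set d : ℝ := 1 - q^j*z with hddef
    have hds : d = s - q^j * (z - 1) := by simp only [hsdef, hddef]; ring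
    have hii : q^j * (z - 1) * (2*J) ≤ s := by
      have : q^j * (z-1) * (2*J) = p * J * q^j := by simp only [hz]; ring
      rw [this]
      exact hs_ge j
    have hg_le : q^j*(z-1)/d ≤ 1/(2*J) + 1/(2*J^2) := by
      have h2J1 : (0:ℝ) < 2*J - 1 := by linarith
      have hstep1 : q^j*(z-1)/d ≤ 1/(2*J-1) := by
        rw [div_le_div_iff₀ hd h2J1]
        have hq0j : (0:ℝ) < q^j := pow_pos hq0 j
        nlinarith [hii, hds]
      have hstep2 : 1/(2*J-1) ≤ 1/(2*J) + 1/(2*J^2) := by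
        rw [div_add_div _ _ (by positivity) (by positivity)]
        rw [div_le_div_iff₀ h2J1 (by positivity)]
        nlinarith
      linarith
    have hsd : s = d + q^j*(z-1) := by rw [hds]; ring
    have hratio : z*s/d = z * (1 + q^j*(z-1)/d) := by
      rw [mul_div_assoc]
      congr 1
      rw [hsd, add_div, div_self hd.ne']
    rw [hratio]
    refine mul_le_mul_of_nonneg_left ?_ hz0.le
    calc 1 + q^j*(z-1)/d ≤ Real.exp (q^j*(z-1)/d) := by
          rw [add_comm]; exact Real.add_one_le_exp _
      _ ≤ Real.exp (1/(2*J) + 1/(2*J^2)) := Real.exp_le_exp.mpr hg_le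
  -- product bound
  have hprod : (∏ j ∈ Finset.Ico 1 (t+1), (z*(1-q^j)/(1-q^j*z)))
      ≤ z^t * Real.exp ((1 + Real.log t)/2 + 1) := by
    have h1 : (∏ j ∈ Finset.Ico 1 (t+1), (z*(1-q^j)/(1-q^j*z)))
        ≤ ∏ j ∈ Finset.Ico 1 (t+1), (z * Real.exp (1/(2*(j:ℝ)) + 1/(2*(j:ℝ)^2))) := by
      refine Finset.prod_le_prod (fun j hj => ?_) (fun j hj => ?_)
      · have hj1 : 1 ≤ j := (Finset.mem_Ico.mp hj).1
        have := hdj j hj1; have := hsj j hj1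
        positivity
      · exact hfac j (Finset.mem_Ico.mp hj).1
    have h2 : ∏ j ∈ Finset.Ico 1 (t+1), (z * Real.exp (1/(2*(j:ℝ)) + 1/(2*(j:ℝ)^2)))
        = z^t * Real.exp (∑ j ∈ Finset.Ico 1 (t+1), (1/(2*(j:ℝ)) + 1/(2*(j:ℝ)^2))) := by
      rw [Finset.prod_mul_distrib, Finset.prod_const, Nat.card_Ico, Real.exp_sum]
      norm_num
    have h3 : ∑ j ∈ Finset.Ico 1 (t+1), (1/(2*(j:ℝ)) + 1/(2*(j:ℝ)^2))
        ≤ (1 + Real.log t)/2 + 1 := by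
      have e1 : ∑ j ∈ Finset.Ico 1 (t+1), (1/(2*(j:ℝ)) + 1/(2*(j:ℝ)^2))
          = (1/2) * (∑ j ∈ Finset.Ico 1 (t+1), 1/(j:ℝ))
            + (1/2) * (∑ j ∈ Finset.Ico 1 (t+1), 1/(j:ℝ)^2) := by
        rw [Finset.mul_sum, Finset.mul_sum, ← Finset.sum_add_distrib]
        refine Finset.sum_congr rfl fun j hj => ?_
        have hj1 : 1 ≤ j := (Finset.mem_Ico.mp hj).1
        have hJ0 : (0:ℝ) < (j:ℝ) := by exact_mod_cast hj1
        field_simp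
      rw [e1]
      have i1 := sum_inv_le t ht
      have i2 := sum_invsq_le t ht
      have htpos : (0:ℝ) < (t:ℝ) := by exact_mod_cast ht
      have : 1/(t:ℝ) > 0 := by positivity
      linarith
    calc (∏ j ∈ Finset.Ico 1 (t+1), (z*(1-q^j)/(1-q^j*z)))
        ≤ z^t * Real.exp (∑ j ∈ Finset.Ico 1 (t+1), (1/(2*(j:ℝ)) + 1/(2*(j:ℝ)^2))) := by
          rw [← h2]; exact h1
      _ ≤ z^t * Real.exp ((1 + Real.log t)/2 + 1) := by
          refine mul_le_mul_of_nonneg_left (Real.exp_le_exp.mpr h3) (by positivity)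
  -- convert to exponential form
  have hzt : z^t = Real.exp ((t:ℝ) * Real.log z) := by
    rw [← Real.log_pow, Real.exp_log (by positivity)]
  have hzm : (1/z)^(m-1) = Real.exp (-(((m-1:ℕ)):ℝ) * Real.log z) := by
    have h1 : (1/z)^(m-1) = Real.exp (((m-1:ℕ):ℝ) * Real.log (1/z)) := by
      rw [← Real.log_pow, Real.exp_log (by positivity)]
    rw [h1, one_div, Real.log_inv]
    congr 1
    ring
  calc (∏ j ∈ Finset.Ico 1 (t+1), (z*(1-q^j)/(1-q^j*z))) * (1/z)^(m-1)
      ≤ (z^t * Real.exp ((1 + Real.log t)/2 + 1)) * (1/z)^(m-1) := by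
        refine mul_le_mul_of_nonneg_right hprod (by positivity)
    _ = Real.exp (((t:ℝ) - ((m-1:ℕ)):ℝ) * Real.log z + (1 + Real.log t)/2 + 1) := by
        rw [hzt, hzm, ← Real.exp_add, ← Real.exp_add]
        congr 1
        ring
end S15

namespace S15
variable {Ω : Type*} [MeasurableSpace Ω] {edge : ℕ → ℕ → Ω → Bool}

lemma incl_Xr {n t : ℕ} (ht : 1 ≤ t) (hn : 3 ≤ n) :
    {ω : Ω | t + 1 ≤ reachCount edge ω (n-1)} ⊆ {ω : Ω | Xr edge ω t < n} := by
  classical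
  intro ω hω
  simp only [Set.mem_setOf_eq] at hω ⊢
  set P : ℕ → Prop := fun j => 0 < j ∧ ReachableI edge ω j with hP
  have hcount : t ≤ Nat.count P (n-1) := by
    have hc : Nat.count P (n-1) = ((Finset.range (n-1)).filter P).card :=
      Nat.count_eq_card_filter_range _ _
    rw [hc]
    have hsub : (Finset.range (n-1)).filter (fun j => ReachableI edge ω j)
        ⊆ insert 0 ((Finset.range (n-1)).filter P) := by
      intro j hj
      rw [Finset.mem_filter] at hj
      rcases Nat.eq_zero_or_pos j with rfl | hj0
      · exact Finset.mem_insert_self 0 _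
      · exact Finset.mem_insert_of_mem (Finset.mem_filter.mpr ⟨hj.1, hj0, hj.2⟩)
    have h1 : reachCount edge ω (n-1) ≤ ((Finset.range (n-1)).filter P).card + 1 := by
      calc reachCount edge ω (n-1) ≤ (insert 0 ((Finset.range (n-1)).filter P)).card :=
            Finset.card_le_card hsub
        _ ≤ ((Finset.range (n-1)).filter P).card + 1 := Finset.card_insert_le _ _
    omega
  have hnth : Nat.nth P (t-1) < n - 1 := Nat.nth_lt_of_lt_count (by omega)
  obtain ⟨t', rfl⟩ : ∃ t', t = t' + 1 := ⟨t - 1, by omega⟩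
  show Nat.nth (fun j => 0 < j ∧ ReachableI edge ω j) t' + 1 < n
  rw [← hP]
  have : Nat.nth P t' < n - 1 := by simpa using hnth
  omega

lemma incl_reachCount {n t : ℕ} (hn : 1 ≤ n) :
    {ω : Ω | t + 1 ≤ reachCount edge ω (n-1)} ⊆ {ω : Ω | t ≤ reachCount edge ω n} := by
  classical
  intro ω hω
  simp only [Set.mem_setOf_eq] at hω ⊢
  have hmono : reachCount edge ω (n-1) ≤ reachCount edge ω n := by
    refine Finset.card_le_card (Finset.filter_subset_filter _ ?_)
    exact Finset.range_subset_range.mpr (by omega)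
  omega

lemma compl_tail (n t : ℕ) :
    {ω : Ω | t + 1 ≤ reachCount edge ω (n-1)} = {ω : Ω | reachCount edge ω (n-1) ≤ t}ᶜ := by
  ext ω
  simp only [Set.mem_setOf_eq, Set.mem_compl_iff, not_le]
  omega

end S15

namespace S15

lemma exponent_bound (n t' : ℕ) (c p L xi : ℝ) (hc0 : 0 < c) (hc1 : c < 1)
    (hL1 : 1 ≤ L) (hn3 : 3 ≤ n)
    (hpdef : p = c*L/(n:ℝ) + xi)
    (hxi : (n:ℝ)*|xi| ≤ (c/2)*L)
    (hp0 : 0 < p) (hp1 : p < 1)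
    (hpn : p ≤ 2*L/(n:ℝ))
    (ht1 : 1 ≤ t')
    (htv : (t':ℝ) ≤ Real.exp (c*L))
    (hlogt : Real.log t' ≤ c*L - (n:ℝ)*|xi| - Real.log L)
    (f6 : L*(2 + Real.exp (c*L))/(n:ℝ) ≤ 1/2)
    (f7 : L*p ≤ 1/2) :
    ((t':ℝ) - ((n:ℝ)-2)) * Real.log (1+p/2) + (1 + Real.log t')/2 + 1
      ≤ -(Real.log L)/2 + 5/2 := by
  have hn0 : (0:ℝ) < (n:ℝ) := by
    have : (3:ℝ) ≤ (n:ℝ) := by exact_mod_cast hn3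
    linarith
  have hn3' : (3:ℝ) ≤ (n:ℝ) := by exact_mod_cast hn3
  have hz0 : (0:ℝ) < 1 + p/2 := by linarith
  -- log(1+p/2) ≥ (p/2)(1-p/2)
  have hlogz : (p/2)*(1-p/2) ≤ Real.log (1+p/2) := by
    have h1 : Real.log (1/(1+p/2)) ≤ 1/(1+p/2) - 1 :=
      Real.log_le_sub_one_of_pos (by positivity)
    rw [one_div, Real.log_inv] at h1
    have h2 : 1 - (1+p/2)⁻¹ ≤ Real.log (1+p/2) := by linarith
    have ha : 1 - (1+p/2)⁻¹ = (p/2)/(1+p/2) := by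
      rw [eq_div_iff hz0.ne', sub_mul, inv_mul_cancel₀ hz0.ne']; ring
    have hb : (p/2)*(1-p/2) ≤ (p/2)/(1+p/2) := by
      rw [le_div_iff₀ hz0]
      nlinarith [mul_pos (mul_pos hp0 hp0) hp0]
    linarith
  have hlogz0 : 0 ≤ Real.log (1+p/2) := le_trans (by nlinarith) hlogz
  have hexp0 : (0:ℝ) < Real.exp (c*L) := Real.exp_pos _
  have hnt : (t':ℝ) + 2 ≤ (n:ℝ)/2 := by
    have h1 : L*(2 + Real.exp (c*L)) ≤ 1/2 * (n:ℝ) := (div_le_iff₀ hn0).mp f6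
    nlinarith [hL1, htv, hexp0]
  have hnt0 : (0:ℝ) ≤ (n:ℝ) - 2 - t' := by linarith
  have key1 : ((n:ℝ)-2-t')*((p/2)*(1-p/2)) ≤ ((n:ℝ)-2-t') * Real.log (1+p/2) :=
    mul_le_mul_of_nonneg_left hlogz hnt0
  have hpn2 : p * (n:ℝ) ≤ 2*L := (le_div_iff₀ hn0).mp hpn
  have ht0' : (0:ℝ) ≤ (t':ℝ) := Nat.cast_nonneg t'
  have e1 : (p/2)*(2+(t':ℝ)) ≤ 1/2 := by
    have hp2 : p/2 ≤ L/(n:ℝ) := by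
      have : 2*L/(n:ℝ) = 2*(L/(n:ℝ)) := by ring
      rw [this] at hpn
      linarith
    have hLn0 : (0:ℝ) ≤ L/(n:ℝ) := by positivity
    have hmul : (p/2)*(2+(t':ℝ)) ≤ (L/(n:ℝ))*(2 + Real.exp (c*L)) :=
      mul_le_mul hp2 (by linarith) (by linarith) hLn0
    have heq : (L/(n:ℝ))*(2 + Real.exp (c*L)) = L*(2 + Real.exp (c*L))/(n:ℝ) := by ring
    rw [heq] at hmul
    linarith
  have e2 : (p^2/4)*((n:ℝ)-2-(t':ℝ)) ≤ 1/4 := by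
    have h1 : (p^2/4)*((n:ℝ)-2-(t':ℝ)) ≤ (p^2/4)*(n:ℝ) := by
      refine mul_le_mul_of_nonneg_left (by linarith) (by positivity)
    have h2 : (p^2/4)*(n:ℝ) = (p*(n:ℝ))*(p/4) := by ring
    have h3 : (p*(n:ℝ))*(p/4) ≤ (2*L)*(p/4) :=
      mul_le_mul_of_nonneg_right hpn2 (by linarith)
    have h4 : (2*L)*(p/4) = L*p/2 := by ring
    linarith
  have eid : ((n:ℝ)-2-(t':ℝ))*((p/2)*(1-p/2))
      = (n:ℝ)*p/2 - (p/2)*(2+(t':ℝ)) - (p^2/4)*((n:ℝ)-2-(t':ℝ)) := by ring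
  have key2 : (n:ℝ)*p/2 - 3/4 ≤ ((n:ℝ)-2-(t':ℝ))*((p/2)*(1-p/2)) := by
    rw [eid]; linarith
  have key3 : c*L - (n:ℝ)*|xi| ≤ (n:ℝ)*p := by
    have hnp : (n:ℝ)*p = c*L + (n:ℝ)*xi := by
      rw [hpdef]
      field_simp
    have habs : -((n:ℝ)*|xi|) ≤ (n:ℝ)*xi := by
      have h := neg_abs_le xi
      nlinarith [hn0.le]
    linarith
  have hgoal_eq : ((t':ℝ) - ((n:ℝ)-2)) * Real.log (1+p/2)
      = -(((n:ℝ)-2-(t':ℝ)) * Real.log (1+p/2)) := by ring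
  rw [hgoal_eq]
  linarith [hlogt, key1, key2, key3]

end S15



open S15 in
/-- Suppose `p n = c·(log n)/n + ξ n` with `ξ = o((log n)/n)` and
`0 < c < 1` fixed, and let `t n = ⌊n^c·exp(−n·|ξ n| − log log n)⌋`.  Then
`P(X_{t n} < n) → 1`; consequently, a.a.s. the set of vertices among `v_1, …, v_n`
reachable from `v_1` has size at least `t n`, where `t n = n^{c+o(1)}`
(i.e. `log (t n) / log n → c`). -/
theorem X_t_lt_aas_of_lt_one {Ω : ℕ → Type*} [∀ n, MeasurableSpace (Ω n)]
    (μ : ∀ n, Measure (Ω n)) (edge : ∀ n, ℕ → ℕ → Ω n → Bool)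
    (c : ℝ) (hc0 : 0 < c) (hc1 : c < 1) (p ξ : ℕ → ℝ)
    (hξ : ξ =o[atTop] fun n : ℕ => Real.log n / n)
    (hp : ∀ n : ℕ, p n = c * Real.log n / n + ξ n)
    (hG : ∀ n : ℕ, IsInfOrderedRandomGraph (μ n) (edge n) (p n))
    (t : ℕ → ℕ)
    (ht : ∀ n : ℕ, t n = ⌊(n : ℝ) ^ c * Real.exp (-(n * |ξ n|) - Real.log (Real.log n))⌋₊) :
    Tendsto (fun n : ℕ => μ n {ω | Xr (edge n) ω (t n) < n}) atTop (nhds 1) ∧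
    Tendsto (fun n : ℕ => μ n {ω | t n ≤ reachCount (edge n) ω n}) atTop (nhds 1) ∧
    Tendsto (fun n : ℕ => Real.log (t n) / Real.log n) atTop (nhds c) := by

  classical
  have hLtop : Tendsto (fun n : ℕ => Real.log n) atTop atTop :=
    Real.tendsto_log_atTop.comp tendsto_natCast_atTop_atTop
  have hloglog : Tendsto (fun n : ℕ => Real.log (Real.log n)) atTop atTop :=
    Real.tendsto_log_atTop.comp hLtop
  have hbase : Tendsto (fun x : ℝ => Real.log x / x) atTop (nhds 0) := by
    simpa using Real.isLittleO_log_id_atTop.tendsto_div_nhds_zero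
  have hρ : Tendsto (fun n : ℕ => (n:ℝ) * |ξ n| / Real.log n) atTop (nhds 0) := by
    have h1 : Tendsto (fun n : ℕ => |ξ n / (Real.log n / n)|) atTop (nhds 0) := by
      simpa using hξ.tendsto_div_nhds_zero.abs
    refine h1.congr' ?_
    filter_upwards [eventually_ge_atTop 3] with n hn
    have hn0 : (0:ℝ) < (n:ℝ) := by
      have h3 : (3:ℝ) ≤ (n:ℝ) := by exact_mod_cast hn
      linarith
    have hL0 : (0:ℝ) < Real.log n := Real.log_pos (by exact_mod_cast (by omega : 1 < n))
    have hLn0 : (0:ℝ) < Real.log n / n := by positivity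
    rw [abs_div, abs_of_pos hLn0, div_div_eq_mul_div, mul_comm]
  have hw3 : Tendsto (fun n : ℕ => Real.log (Real.log n) / Real.log n) atTop (nhds 0) :=
    hbase.comp hLtop
  have hw : Tendsto
      (fun n : ℕ => c - (n:ℝ)*|ξ n|/Real.log n - Real.log (Real.log n)/Real.log n)
      atTop (nhds c) := by
    have h := ((tendsto_const_nhds : Tendsto (fun _ : ℕ => c) atTop (nhds c)).sub hρ).sub hw3
    simpa using h
  have hyw : (fun n : ℕ =>
      (c - (n:ℝ)*|ξ n|/Real.log n - Real.log (Real.log n)/Real.log n) * Real.log n)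
      =ᶠ[atTop] (fun n : ℕ => c * Real.log n - (n:ℝ)*|ξ n| - Real.log (Real.log n)) := by
    filter_upwards [eventually_ge_atTop 3] with n hn
    have hL0 : (0:ℝ) < Real.log n := Real.log_pos (by exact_mod_cast (by omega : 1 < n))
    field_simp
  have hytop : Tendsto (fun n : ℕ => c * Real.log n - (n:ℝ)*|ξ n| - Real.log (Real.log n))
      atTop atTop :=
    Tendsto.congr' hyw (Tendsto.pos_mul_atTop hc0 hw hLtop)
  have hF1 : Tendsto (fun n : ℕ => Real.log n / (n:ℝ)) atTop (nhds 0) :=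
    hbase.comp tendsto_natCast_atTop_atTop
  have hF3 : Tendsto (fun n : ℕ => Real.log n * Real.exp (c * Real.log n) / (n:ℝ))
      atTop (nhds 0) := by
    have base3 : Tendsto (fun x : ℝ => Real.log x / x^((1:ℝ)-c)) atTop (nhds 0) :=
      (isLittleO_log_rpow_atTop (by linarith)).tendsto_div_nhds_zero
    have heq3 : (fun x : ℝ => Real.log x / x^((1:ℝ)-c))
        =ᶠ[atTop] (fun x : ℝ => Real.log x * Real.exp (c * Real.log x) / x) := by
      filter_upwards [eventually_gt_atTop 0] with x hx
      rw [Real.rpow_sub hx, Real.rpow_one, div_div_eq_mul_div]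
      congr 1
      rw [Real.rpow_def_of_pos hx, mul_comm (Real.log x) c]
    exact (base3.congr' heq3).comp tendsto_natCast_atTop_atTop
  have hq6 : Tendsto (fun n : ℕ => Real.log n * (2 + Real.exp (c * Real.log n)) / (n:ℝ))
      atTop (nhds 0) := by
    have h := (hF1.const_mul (2:ℝ)).add hF3
    have h0 : (2:ℝ) * 0 + 0 = 0 := by norm_num
    rw [h0] at h
    refine h.congr fun n => ?_
    ring
  have hF2 : Tendsto (fun n : ℕ => (Real.log n)^2 / (n:ℝ)) atTop (nhds 0) := by
    have h := Real.tendsto_pow_log_div_mul_add_atTop 1 0 2 one_ne_zero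
    have h2 := h.comp (tendsto_natCast_atTop_atTop (R := ℝ))
    refine h2.congr fun n => ?_
    simp
  have hBtop : Tendsto (fun n : ℕ => Real.exp (-(Real.log (Real.log n))/2 + 5/2))
      atTop (nhds 0) := by
    have h1 : Tendsto (fun n : ℕ => Real.log (Real.log n) / 2) atTop atTop :=
      hloglog.atTop_div_const (by norm_num)
    have h2 : Tendsto (fun n : ℕ => -(Real.log (Real.log n) / 2)) atTop atBot :=
      tendsto_neg_atBot_iff.mpr h1
    have h3 : Tendsto (fun n : ℕ => -(Real.log (Real.log n) / 2) + 5/2) atTop atBot :=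
      tendsto_atBot_add_const_right atTop (5/2 : ℝ) h2
    have h4 := Real.tendsto_exp_atBot.comp h3
    refine h4.congr fun n => ?_
    simp only [Function.comp_apply, neg_div]
  -- the core eventual statement
  have hmain : ∀ᶠ n : ℕ in atTop,
      (1 - ENNReal.ofReal (Real.exp (-(Real.log (Real.log n))/2 + 5/2))
        ≤ μ n {ω | t n + 1 ≤ reachCount (edge n) ω (n-1)})
      ∧ (1 ≤ t n ∧ 3 ≤ n)
      ∧ ((c * Real.log n - (n:ℝ)*|ξ n| - Real.log (Real.log n) - Real.log 2) / Real.log n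
            ≤ Real.log (t n) / Real.log n
          ∧ Real.log (t n) / Real.log n
            ≤ (c * Real.log n - (n:ℝ)*|ξ n| - Real.log (Real.log n)) / Real.log n) := by
    filter_upwards [eventually_ge_atTop 3,
      hLtop.eventually_ge_atTop 1,
      hρ.eventually_lt_const (half_pos hc0),
      hq6.eventually_lt_const (by norm_num : (0:ℝ) < 1/2),
      hF2.eventually_lt_const (by norm_num : (0:ℝ) < 1/8),
      hytop.eventually_ge_atTop 1] with n hn3 hL1 hρc hq6' hF2' hy1
    have hn0R : (0:ℝ) < (n:ℝ) := by
      have h3 : (3:ℝ) ≤ (n:ℝ) := by exact_mod_cast hn3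
      linarith
    have hL0 : (0:ℝ) < Real.log n := by linarith
    have hxi : (n:ℝ)*|ξ n| ≤ (c/2)*Real.log n := by
      have h := (div_le_iff₀ hL0).mp hρc.le
      linarith
    have habs0 : (0:ℝ) ≤ (n:ℝ)*|ξ n| := by positivity
    have hll0 : (0:ℝ) ≤ Real.log (Real.log n) := Real.log_nonneg hL1
    have hpε : |ξ n| ≤ (c/2)*Real.log n/(n:ℝ) := by
      rw [le_div_iff₀ hn0R]
      linarith [hxi]
    have hp0 : 0 < p n := by
      rw [hp n]
      have h1 : -((c/2)*Real.log n/(n:ℝ)) ≤ ξ n := by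
        have h2 := neg_abs_le (ξ n)
        linarith
      have h3 : c*Real.log n/(n:ℝ) - (c/2)*Real.log n/(n:ℝ) = (c/2)*(Real.log n/(n:ℝ)) := by
        ring
      have h4 : (0:ℝ) < (c/2)*(Real.log n/(n:ℝ)) := by positivity
      linarith
    have hpn : p n ≤ 2*Real.log n/(n:ℝ) := by
      rw [hp n]
      have h1 : ξ n ≤ (c/2)*Real.log n/(n:ℝ) := le_trans (le_abs_self _) hpε
      have h2 : c*Real.log n/(n:ℝ) + (c/2)*Real.log n/(n:ℝ)
          = (c + c/2) * (Real.log n/(n:ℝ)) := by ring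
      have h3 : (c + c/2) * (Real.log n/(n:ℝ)) ≤ 2 * (Real.log n/(n:ℝ)) := by
        refine mul_le_mul_of_nonneg_right (by linarith) (by positivity)
      have h4 : 2 * (Real.log n/(n:ℝ)) = 2*Real.log n/(n:ℝ) := by ring
      linarith
    have hLn14 : 2*Real.log n/(n:ℝ) ≤ 1/2 := by
      have h1 : Real.log n ≤ (Real.log n)^2 := by nlinarith
      have h2 : Real.log n/(n:ℝ) ≤ (Real.log n)^2/(n:ℝ) := by
        gcongr
      have h3 : 2*Real.log n/(n:ℝ) = 2*(Real.log n/(n:ℝ)) := by ring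
      linarith
    have hp1 : p n < 1 := by
      have := hpn.trans hLn14
      linarith
    have hfloor : (n:ℝ)^c * Real.exp (-((n:ℝ) * |ξ n|) - Real.log (Real.log n))
        = Real.exp (c*Real.log n - (n:ℝ)*|ξ n| - Real.log (Real.log n)) := by
      rw [Real.rpow_def_of_pos hn0R, ← Real.exp_add]
      congr 1
      ring
    have htn : t n = ⌊Real.exp (c*Real.log n - (n:ℝ)*|ξ n| - Real.log (Real.log n))⌋₊ := by
      rw [ht n, hfloor]
    have hE2 : (2:ℝ) ≤ Real.exp (c*Real.log n - (n:ℝ)*|ξ n| - Real.log (Real.log n)) := by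
      have h1 := Real.add_one_le_exp (1:ℝ)
      have h2 : Real.exp 1 ≤ Real.exp (c*Real.log n - (n:ℝ)*|ξ n| - Real.log (Real.log n)) :=
        Real.exp_le_exp.mpr hy1
      linarith
    have ht1 : 1 ≤ t n := by
      rw [htn]
      refine Nat.le_floor ?_
      push_cast
      linarith
    have htR1 : (1:ℝ) ≤ (t n : ℝ) := by exact_mod_cast ht1
    have htleE : (t n : ℝ) ≤ Real.exp (c*Real.log n - (n:ℝ)*|ξ n| - Real.log (Real.log n)) := by
      rw [htn]
      exact Nat.floor_le (by positivity)
    have htgeE : Real.exp (c*Real.log n - (n:ℝ)*|ξ n| - Real.log (Real.log n)) - 1 ≤ (t n:ℝ) := by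
      rw [htn]
      have := Nat.lt_floor_add_one (Real.exp (c*Real.log n - (n:ℝ)*|ξ n| - Real.log (Real.log n)))
      linarith
    have htv : (t n : ℝ) ≤ Real.exp (c * Real.log n) :=
      htleE.trans (Real.exp_le_exp.mpr (by linarith))
    have hlogt_up : Real.log (t n) ≤ c*Real.log n - (n:ℝ)*|ξ n| - Real.log (Real.log n) := by
      have h1 := Real.log_le_log (by linarith : (0:ℝ) < (t n:ℝ)) htleE
      rwa [Real.log_exp] at h1
    have hlogt_lo : c*Real.log n - (n:ℝ)*|ξ n| - Real.log (Real.log n) - Real.log 2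
        ≤ Real.log (t n) := by
      have h1 : Real.exp (c*Real.log n - (n:ℝ)*|ξ n| - Real.log (Real.log n))/2 ≤ (t n : ℝ) := by
        linarith
      have h2 := Real.log_le_log (by positivity) h1
      rw [Real.log_div (by positivity) (by norm_num), Real.log_exp] at h2
      linarith
    have hf7 : Real.log n * p n ≤ 1/2 := by
      have h1 : Real.log n * p n ≤ Real.log n * (2*Real.log n/(n:ℝ)) :=
        mul_le_mul_of_nonneg_left hpn (by linarith)
      have h2 : Real.log n * (2*Real.log n/(n:ℝ)) = 2 * ((Real.log n)^2/(n:ℝ)) := by ring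
      linarith
    have hm1 : 1 ≤ n - 1 := by omega
    have hstep1 := reachCount_tail_bound (hG n) hp0 hp1 (t n) (n-1) ht1 hm1
    have hstep2 := prod_bound (p n) hp0 hp1 (t n) (n-1) ht1
    have hcast : ((n-1-1 : ℕ) : ℝ) = (n:ℝ) - 2 := by
      have h1 : (n-1-1 : ℕ) = n - 2 := by omega
      rw [h1, Nat.cast_sub (by omega : 2 ≤ n)]
      norm_num
    have hstep3 := exponent_bound n (t n) c (p n) (Real.log n) (ξ n) hc0 hc1 hL1 hn3
      (hp n) hxi hp0 hp1 hpn ht1 htv hlogt_up hq6'.le hf7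
    have hexpmono : Real.exp (((t n:ℝ) - ((n-1-1:ℕ):ℝ)) * Real.log (1+p n/2)
          + (1 + Real.log (t n))/2 + 1)
        ≤ Real.exp (-(Real.log (Real.log n))/2 + 5/2) := by
      apply Real.exp_le_exp.mpr
      rw [hcast]
      exact hstep3
    have hbad : μ n {ω | reachCount (edge n) ω (n-1) ≤ t n}
        ≤ ENNReal.ofReal (Real.exp (-(Real.log (Real.log n))/2 + 5/2)) :=
      le_trans hstep1 (ENNReal.ofReal_le_ofReal (le_trans hstep2 hexpmono))
    have hIP := (hG n).isProb
    refine ⟨?_, ⟨ht1, hn3⟩, ?_, ?_⟩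
    · rw [compl_tail, measure_compl (measurableSet_tail (hG n).meas (n-1) (t n))
        (measure_ne_top _ _), measure_univ]
      exact tsub_le_tsub_left hbad 1
    · gcongr
    · gcongr
  -- conclusions
  have hofReal1 : Tendsto
      (fun n : ℕ => 1 - ENNReal.ofReal (Real.exp (-(Real.log (Real.log n))/2 + 5/2)))
      atTop (nhds 1) := by
    have h1 : Tendsto (fun n : ℕ => (1:ℝ) - Real.exp (-(Real.log (Real.log n))/2 + 5/2))
        atTop (nhds 1) := by
      simpa using (tendsto_const_nhds (x := (1:ℝ))).sub hBtop
    have h2 := ENNReal.tendsto_ofReal h1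
    rw [ENNReal.ofReal_one] at h2
    refine Tendsto.congr (fun n => ?_) h2
    rw [ENNReal.ofReal_sub 1 (Real.exp_nonneg _), ENNReal.ofReal_one]
  have part1 : Tendsto (fun n : ℕ => μ n {ω | Xr (edge n) ω (t n) < n}) atTop (nhds 1) := by
    refine tendsto_of_tendsto_of_tendsto_of_le_of_le' hofReal1 tendsto_const_nhds ?_ ?_
    · filter_upwards [hmain] with n hn
      exact le_trans hn.1 (measure_mono (incl_Xr hn.2.1.1 hn.2.1.2))
    · filter_upwards [] with n
      have := (hG n).isProb
      exact prob_le_one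
  have part2 : Tendsto (fun n : ℕ => μ n {ω | t n ≤ reachCount (edge n) ω n}) atTop (nhds 1) := by
    refine tendsto_of_tendsto_of_tendsto_of_le_of_le' hofReal1 tendsto_const_nhds ?_ ?_
    · filter_upwards [hmain] with n hn
      exact le_trans hn.1 (measure_mono (incl_reachCount (by omega)))
    · filter_upwards [] with n
      have := (hG n).isProb
      exact prob_le_one
  have hyL : Tendsto (fun n : ℕ =>
      (c * Real.log n - (n:ℝ)*|ξ n| - Real.log (Real.log n)) / Real.log n) atTop (nhds c) := by
    refine Tendsto.congr' ?_ hw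
    filter_upwards [eventually_ge_atTop 3] with n hn
    have hL0 : (0:ℝ) < Real.log n := Real.log_pos (by exact_mod_cast (by omega : 1 < n))
    field_simp
  have hlow3 : Tendsto (fun n : ℕ =>
      (c * Real.log n - (n:ℝ)*|ξ n| - Real.log (Real.log n) - Real.log 2) / Real.log n)
      atTop (nhds c) := by
    have hsub : Tendsto (fun n : ℕ => Real.log 2 / Real.log n) atTop (nhds 0) :=
      tendsto_const_nhds.div_atTop hLtop
    have h := hyL.sub hsub
    rw [sub_zero] at h
    refine h.congr fun n => ?_
    rw [div_sub_div_same]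
  have part3 : Tendsto (fun n : ℕ => Real.log (t n) / Real.log n) atTop (nhds c) := by
    refine tendsto_of_tendsto_of_tendsto_of_le_of_le' hlow3 hyL ?_ ?_
    · filter_upwards [hmain] with n hn
      exact hn.2.2.1
    · filter_upwards [hmain] with n hn
      exact hn.2.2.2
  exact ⟨part1, part2, part3⟩
end
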